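/- arXiv:1809.03771 — 13 statements merged into one kernel-verified Lean document; each statement's English description precedes it below -/
import Mathlib

section
/- Let J be a nonempty closed convex subset of a Banach space G and let S : J → J be a contraction with contraction factor ξ ∈ (0,1), and let q ∈ J be a fixed point of S. Let {δₙ} be a sequence in (0,1) with δₙ ≥ δ for some δ > 0 and all n, and let {cₙ} be generated from c₁ ∈ J by aₙ = S cₙ, bₙ = (1-δₙ)aₙ + δₙ S aₙ, c_{n+1} = S bₙ. Then for all n ≥ 1, ‖c_{n+1} − q‖ ≤ ξ^{2n} (1 − (1−ξ)δ)ⁿ ‖c₁ − q‖. -/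
/-- rate estimate for the new iteration (1.2) for a contraction. -/
theorem stmt_0 {G : Type*} [NormedAddCommGroup G] [NormedSpace ℝ G] [CompleteSpace G]
    (J : Set G) (hJne : J.Nonempty) (hJcl : IsClosed J) (hJconv : Convex ℝ J)
    (S : G → G) (hSJ : ∀ x ∈ J, S x ∈ J)
    (ξ : ℝ) (hξ : ξ ∈ Set.Ioo (0 : ℝ) 1)
    (hS : ∀ u ∈ J, ∀ v ∈ J, ‖S u - S v‖ ≤ ξ * ‖u - v‖)
    (q : G) (hqJ : q ∈ J) (hq : S q = q)
    (δ : ℕ → ℝ) (hδ : ∀ n, δ n ∈ Set.Ioo (0 : ℝ) 1)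
    (δ₀ : ℝ) (hδ₀ : 0 < δ₀) (hδge : ∀ n, δ₀ ≤ δ n)
    (a b c : ℕ → G) (hc1 : c 1 ∈ J)
    (ha : ∀ n, 1 ≤ n → a n = S (c n))
    (hb : ∀ n, 1 ≤ n → b n = (1 - δ n) • a n + δ n • S (a n))
    (hc : ∀ n, 1 ≤ n → c (n + 1) = S (b n)) :
    ∀ n, 1 ≤ n →
      ‖c (n + 1) - q‖ ≤ ξ ^ (2 * n) * (1 - (1 - ξ) * δ₀) ^ n * ‖c 1 - q‖ := by
  obtain ⟨hξ0, hξ1⟩ := hξ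
  -- membership
  have hbJ : ∀ n, 1 ≤ n → c n ∈ J → b n ∈ J := by
    intro n hn hcn
    have haJ : a n ∈ J := (ha n hn) ▸ hSJ _ hcn
    have hSaJ : S (a n) ∈ J := hSJ _ haJ
    rw [hb n hn]
    have hδn := hδ n
    exact hJconv haJ hSaJ (by linarith [hδn.2]) (le_of_lt hδn.1) (by ring)
  have hcJ : ∀ n, 1 ≤ n → c n ∈ J := by
    intro n hn
    induction n with
    | zero => omega
    | succ m ih =>
      rcases Nat.eq_or_lt_of_le hn with h | h
      · exact h ▸ hc1
      · have hm : 1 ≤ m := by omega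
        rw [hc m hm]
        exact hSJ _ (hbJ m hm (ih hm))
  set K : ℝ := 1 - (1 - ξ) * δ₀ with hK
  have hK0 : 0 ≤ K := by
    have hδn := hδ 0
    have h1 : (1 - ξ) * δ₀ ≤ 1 * 1 := by
      apply mul_le_mul (by linarith) (le_trans (hδge 0) (le_of_lt hδn.2)) (le_of_lt hδ₀) one_pos.le
    simp at h1; linarith
  -- one-step estimate
  have key : ∀ n, 1 ≤ n → ‖c (n + 1) - q‖ ≤ ξ ^ 2 * K * ‖c n - q‖ := by
    intro n hn
    have hcn := hcJ n hn
    have haJ : a n ∈ J := (ha n hn) ▸ hSJ _ hcn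
    have hSaJ : S (a n) ∈ J := hSJ _ haJ
    have hbJn : b n ∈ J := hbJ n hn hcn
    have h1 : ‖a n - q‖ ≤ ξ * ‖c n - q‖ := by
      rw [ha n hn]; calc ‖S (c n) - q‖ = ‖S (c n) - S q‖ := by rw [hq]
        _ ≤ ξ * ‖c n - q‖ := hS _ hcn _ hqJ
    have h2 : ‖b n - q‖ ≤ (1 - (1 - ξ) * δ n) * ‖a n - q‖ := by
      have hδn := hδ n
      have hq' : q = (1 - δ n) • q + δ n • q := by
        rw [← add_smul]; simp
      have : b n - q = (1 - δ n) • (a n - q) + δ n • (S (a n) - q) := by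
        rw [hb n hn]
        conv_lhs => rw [hq']
        simp [smul_sub]; abel
      rw [this]
      calc ‖(1 - δ n) • (a n - q) + δ n • (S (a n) - q)‖
          ≤ ‖(1 - δ n) • (a n - q)‖ + ‖δ n • (S (a n) - q)‖ := norm_add_le _ _
        _ = (1 - δ n) * ‖a n - q‖ + δ n * ‖S (a n) - q‖ := by
            rw [norm_smul, norm_smul, Real.norm_eq_abs, Real.norm_eq_abs,
              abs_of_nonneg (by linarith [hδn.2]), abs_of_nonneg (le_of_lt hδn.1)]
        _ ≤ (1 - δ n) * ‖a n - q‖ + δ n * (ξ * ‖a n - q‖) := by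
            have : ‖S (a n) - q‖ ≤ ξ * ‖a n - q‖ := by
              calc ‖S (a n) - q‖ = ‖S (a n) - S q‖ := by rw [hq]
                _ ≤ ξ * ‖a n - q‖ := hS _ haJ _ hqJ
            nlinarith [hδn.1]
        _ = (1 - (1 - ξ) * δ n) * ‖a n - q‖ := by ring
    have h3 : ‖c (n + 1) - q‖ ≤ ξ * ‖b n - q‖ := by
      rw [hc n hn]
      calc ‖S (b n) - q‖ = ‖S (b n) - S q‖ := by rw [hq]
        _ ≤ ξ * ‖b n - q‖ := hS _ hbJn _ hqJ
    have hKn : (1 - (1 - ξ) * δ n) ≤ K := by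
      have : (1 - ξ) * δ₀ ≤ (1 - ξ) * δ n :=
        mul_le_mul_of_nonneg_left (hδge n) (by linarith)
      simp only [hK]; linarith
    have hnn : 0 ≤ ‖a n - q‖ := norm_nonneg _
    calc ‖c (n + 1) - q‖ ≤ ξ * ‖b n - q‖ := h3
      _ ≤ ξ * ((1 - (1 - ξ) * δ n) * ‖a n - q‖) :=
          mul_le_mul_of_nonneg_left h2 hξ0.le
      _ ≤ ξ * (K * ‖a n - q‖) := by
          apply mul_le_mul_of_nonneg_left (mul_le_mul_of_nonneg_right hKn hnn) hξ0.le
      _ ≤ ξ * (K * (ξ * ‖c n - q‖)) := by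
          apply mul_le_mul_of_nonneg_left (mul_le_mul_of_nonneg_left h1 hK0) hξ0.le
      _ = ξ ^ 2 * K * ‖c n - q‖ := by ring
  -- main induction
  intro n hn
  induction n with
  | zero => omega
  | succ m ih =>
    rcases Nat.eq_or_lt_of_le hn with h | h
    · have h1 : m = 0 := by omega
      subst h1
      have := key 1 le_rfl
      simpa [pow_succ, mul_comm, mul_assoc, mul_left_comm] using this
    · have hm : 1 ≤ m := by omega
      have ihm := ih hm
      calc ‖c (m + 1 + 1) - q‖ ≤ ξ ^ 2 * K * ‖c (m + 1) - q‖ := key (m + 1) (by omega)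
        _ ≤ ξ ^ 2 * K * (ξ ^ (2 * m) * K ^ m * ‖c 1 - q‖) := by
            apply mul_le_mul_of_nonneg_left ihm
            positivity
        _ = ξ ^ (2 * (m + 1)) * K ^ (m + 1) * ‖c 1 - q‖ := by ring
end

section
/- Let J be a nonempty closed convex subset of a Banach space G and let S : J → J be a contraction with contraction factor ξ ∈ (0,1), and let q ∈ J be a fixed point of S. Let {δₙ} and {ζₙ} be sequences in (0,1) with δₙ ≥ δ > 0 and ζₙ ≥ ζ > 0 for all n, and let {wₙ} be generated from w₁ ∈ J by the Thakur iteration uₙ = (1−δₙ)wₙ + δₙ S wₙ, vₙ = S((1−ζₙ)wₙ + ζₙ uₙ), w_{n+1} = S vₙ. Then for all n ≥ 1, ‖w_{n+1} − q‖ ≤ ξ^{2n} (1 − (1−ξ)δζ)ⁿ ‖w₁ − q‖. -/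
/-- rate estimate for the Thakur iteration (1.1) for a contraction. -/
theorem stmt_1 {G : Type*} [NormedAddCommGroup G] [NormedSpace ℝ G] [CompleteSpace G]
    (J : Set G) (hJne : J.Nonempty) (hJcl : IsClosed J) (hJconv : Convex ℝ J)
    (S : G → G) (hSJ : ∀ x ∈ J, S x ∈ J)
    (ξ : ℝ) (hξ : ξ ∈ Set.Ioo (0 : ℝ) 1)
    (hS : ∀ u ∈ J, ∀ v ∈ J, ‖S u - S v‖ ≤ ξ * ‖u - v‖)
    (q : G) (hqJ : q ∈ J) (hq : S q = q)
    (δ ζ : ℕ → ℝ) (hδ : ∀ n, δ n ∈ Set.Ioo (0 : ℝ) 1) (hζ : ∀ n, ζ n ∈ Set.Ioo (0 : ℝ) 1)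
    (δ₀ ζ₀ : ℝ) (hδ₀ : 0 < δ₀) (hζ₀ : 0 < ζ₀)
    (hδge : ∀ n, δ₀ ≤ δ n) (hζge : ∀ n, ζ₀ ≤ ζ n)
    (u v w : ℕ → G) (hw1 : w 1 ∈ J)
    (hu : ∀ n, 1 ≤ n → u n = (1 - δ n) • w n + δ n • S (w n))
    (hv : ∀ n, 1 ≤ n → v n = S ((1 - ζ n) • w n + ζ n • u n))
    (hw : ∀ n, 1 ≤ n → w (n + 1) = S (v n)) :
    ∀ n, 1 ≤ n →
      ‖w (n + 1) - q‖ ≤ ξ ^ (2 * n) * (1 - (1 - ξ) * δ₀ * ζ₀) ^ n * ‖w 1 - q‖ := by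
  obtain ⟨hξ0, hξ1⟩ := hξ
  set c : ℝ := 1 - (1 - ξ) * δ₀ * ζ₀ with hc_def
  have hδ01 : δ₀ < 1 := lt_of_le_of_lt (hδge 0) (hδ 0).2
  have hζ01 : ζ₀ < 1 := lt_of_le_of_lt (hζge 0) (hζ 0).2
  have hc0 : 0 ≤ c := by
    have h1 : δ₀ * ζ₀ ≤ 1 := by nlinarith
    have h2 : 0 < δ₀ * ζ₀ := mul_pos hδ₀ hζ₀
    have : (1 - ξ) * δ₀ * ζ₀ ≤ 1 := by nlinarith
    linarith
  -- membership
  have hmem : ∀ n, 1 ≤ n → w n ∈ J := by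
    intro n hn
    induction n, hn using Nat.le_induction with
    | base => exact hw1
    | succ n hn ih =>
      have huJ : u n ∈ J := by
        rw [hu n hn]
        exact hJconv ih (hSJ _ ih) (by linarith [(hδ n).2]) (le_of_lt (hδ n).1) (by ring)
      have hmidJ : (1 - ζ n) • w n + ζ n • u n ∈ J :=
        hJconv ih huJ (by linarith [(hζ n).2]) (le_of_lt (hζ n).1) (by ring)
      rw [hw n hn, hv n hn]
      exact hSJ _ (hSJ _ hmidJ)
  -- one-step estimate
  have step : ∀ n, 1 ≤ n → ‖w (n + 1) - q‖ ≤ ξ ^ 2 * c * ‖w n - q‖ := by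
    intro n hn
    have hwn := hmem n hn
    have hnn : (0 : ℝ) ≤ ‖w n - q‖ := norm_nonneg _
    have hSw : ‖S (w n) - q‖ ≤ ξ * ‖w n - q‖ := by
      have := hS (w n) hwn q hqJ
      rwa [hq] at this
    have huJ : u n ∈ J := by
      rw [hu n hn]
      exact hJconv hwn (hSJ _ hwn) (by linarith [(hδ n).2]) (le_of_lt (hδ n).1) (by ring)
    have hub : ‖u n - q‖ ≤ (1 - (1 - ξ) * δ n) * ‖w n - q‖ := by
      rw [hu n hn]
      have heq : (1 - δ n) • w n + δ n • S (w n) - q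
          = (1 - δ n) • (w n - q) + δ n • (S (w n) - q) := by module
      rw [heq]
      calc ‖(1 - δ n) • (w n - q) + δ n • (S (w n) - q)‖
          ≤ ‖(1 - δ n) • (w n - q)‖ + ‖δ n • (S (w n) - q)‖ := norm_add_le _ _
        _ = (1 - δ n) * ‖w n - q‖ + δ n * ‖S (w n) - q‖ := by
            rw [norm_smul, norm_smul, Real.norm_eq_abs, Real.norm_eq_abs,
              abs_of_nonneg (by linarith [(hδ n).2]), abs_of_nonneg (le_of_lt (hδ n).1)]
        _ ≤ (1 - (1 - ξ) * δ n) * ‖w n - q‖ := by nlinarith [(hδ n).1]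
    have hmidJ : (1 - ζ n) • w n + ζ n • u n ∈ J :=
      hJconv hwn huJ (by linarith [(hζ n).2]) (le_of_lt (hζ n).1) (by ring)
    have hmid : ‖(1 - ζ n) • w n + ζ n • u n - q‖
        ≤ (1 - (1 - ξ) * δ n * ζ n) * ‖w n - q‖ := by
      have heq : (1 - ζ n) • w n + ζ n • u n - q
          = (1 - ζ n) • (w n - q) + ζ n • (u n - q) := by module
      rw [heq]
      calc ‖(1 - ζ n) • (w n - q) + ζ n • (u n - q)‖
          ≤ ‖(1 - ζ n) • (w n - q)‖ + ‖ζ n • (u n - q)‖ := norm_add_le _ _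
        _ = (1 - ζ n) * ‖w n - q‖ + ζ n * ‖u n - q‖ := by
            rw [norm_smul, norm_smul, Real.norm_eq_abs, Real.norm_eq_abs,
              abs_of_nonneg (by linarith [(hζ n).2]), abs_of_nonneg (le_of_lt (hζ n).1)]
        _ ≤ (1 - (1 - ξ) * δ n * ζ n) * ‖w n - q‖ := by nlinarith [(hζ n).1]
    have hvb : ‖v n - q‖ ≤ ξ * ((1 - (1 - ξ) * δ n * ζ n) * ‖w n - q‖) := by
      rw [hv n hn]
      have := hS _ hmidJ q hqJ
      rw [hq] at this
      calc ‖S ((1 - ζ n) • w n + ζ n • u n) - q‖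
          ≤ ξ * ‖(1 - ζ n) • w n + ζ n • u n - q‖ := this
        _ ≤ ξ * ((1 - (1 - ξ) * δ n * ζ n) * ‖w n - q‖) := by
            exact mul_le_mul_of_nonneg_left hmid (le_of_lt hξ0)
    have hvJ : v n ∈ J := by rw [hv n hn]; exact hSJ _ hmidJ
    have hwb : ‖w (n + 1) - q‖ ≤ ξ * ‖v n - q‖ := by
      rw [hw n hn]
      have := hS (v n) hvJ q hqJ
      rwa [hq] at this
    have hcn : 1 - (1 - ξ) * δ n * ζ n ≤ c := by
      have hdz : δ₀ * ζ₀ ≤ δ n * ζ n :=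
        mul_le_mul (hδge n) (hζge n) (le_of_lt hζ₀) (le_of_lt (hδ n).1)
      have h2 := mul_le_mul_of_nonneg_left hdz (by linarith : (0:ℝ) ≤ 1 - ξ)
      simp only [hc_def]
      rw [mul_assoc, mul_assoc]
      linarith
    calc ‖w (n + 1) - q‖ ≤ ξ * ‖v n - q‖ := hwb
      _ ≤ ξ * (ξ * ((1 - (1 - ξ) * δ n * ζ n) * ‖w n - q‖)) :=
          mul_le_mul_of_nonneg_left hvb (le_of_lt hξ0)
      _ = ξ ^ 2 * (1 - (1 - ξ) * δ n * ζ n) * ‖w n - q‖ := by ring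
      _ ≤ ξ ^ 2 * c * ‖w n - q‖ :=
          mul_le_mul_of_nonneg_right
            (mul_le_mul_of_nonneg_left hcn (sq_nonneg ξ)) hnn
  -- induction
  intro n hn
  induction n, hn using Nat.le_induction with
  | base => simpa [pow_succ, pow_zero] using step 1 le_rfl
  | succ n hn ih =>
    have h1 := step (n + 1) (by omega)
    calc ‖w (n + 2) - q‖ ≤ ξ ^ 2 * c * ‖w (n + 1) - q‖ := h1
      _ ≤ ξ ^ 2 * c * (ξ ^ (2 * n) * c ^ n * ‖w 1 - q‖) := by
          apply mul_le_mul_of_nonneg_left ih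
          positivity
      _ = ξ ^ (2 * (n + 1)) * c ^ (n + 1) * ‖w 1 - q‖ := by ring
end

section
/- Let ξ ∈ (0,1), δ ∈ (0,1), ζ ∈ (0,1) and A, B > 0 be real numbers. Define pₙ = ξ^{2n}(1 − (1−ξ)δ)ⁿ · A and rₙ = ξ^{2n}(1 − (1−ξ)δζ)ⁿ · B. Then pₙ/rₙ → 0 as n → ∞; that is, in the sense of Berinde, the bound for the new iteration (1.2) converges to zero faster than the bound for the Thakur iteration (1.1). -/
open Filter

/-- the rate bound of the new iteration tends to zero faster
(in Berinde's sense) than the rate bound of the Thakur iteration. -/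
theorem stmt_2 (ξ δ ζ A B : ℝ)
    (hξ : ξ ∈ Set.Ioo (0 : ℝ) 1) (hδ : δ ∈ Set.Ioo (0 : ℝ) 1) (hζ : ζ ∈ Set.Ioo (0 : ℝ) 1)
    (hA : 0 < A) (hB : 0 < B) :
    Tendsto
      (fun n : ℕ =>
        (ξ ^ (2 * n) * (1 - (1 - ξ) * δ) ^ n * A) /
          (ξ ^ (2 * n) * (1 - (1 - ξ) * δ * ζ) ^ n * B))
      atTop (nhds 0) := by
  obtain ⟨hξ0, hξ1⟩ := hξ
  obtain ⟨hδ0, hδ1⟩ := hδ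
  obtain ⟨hζ0, hζ1⟩ := hζ
  have h1 : (0:ℝ) < 1 - (1 - ξ) * δ := by nlinarith
  have h2 : (0:ℝ) < 1 - (1 - ξ) * δ * ζ := by nlinarith
  have ha : (0:ℝ) < (1 - ξ) * δ := mul_pos (by linarith) hδ0
  have hlt : 1 - (1 - ξ) * δ < 1 - (1 - ξ) * δ * ζ := by
    have := mul_lt_of_lt_one_right ha hζ1
    linarith
  set c : ℝ := (1 - (1 - ξ) * δ) / (1 - (1 - ξ) * δ * ζ) with hc
  have hc0 : 0 ≤ c := le_of_lt (div_pos h1 h2)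
  have hc1 : c < 1 := (div_lt_one h2).2 hlt
  have key : (fun n : ℕ =>
        (ξ ^ (2 * n) * (1 - (1 - ξ) * δ) ^ n * A) /
          (ξ ^ (2 * n) * (1 - (1 - ξ) * δ * ζ) ^ n * B)) =
      fun n : ℕ => c ^ n * (A / B) := by
    funext n
    have hξn : (ξ:ℝ) ^ (2 * n) ≠ 0 := pow_ne_zero _ (ne_of_gt hξ0)
    have h2n : (1 - (1 - ξ) * δ * ζ) ^ n ≠ 0 := pow_ne_zero _ (ne_of_gt h2)
    field_simp [hc, div_pow]
    rw [hc, ← mul_pow]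
    congr 1
    rw [mul_div_cancel₀ _ h2.ne']
  rw [key]
  have := (tendsto_pow_atTop_nhds_zero_of_lt_one hc0 hc1).mul_const (A / B)
  simpa using this
end

section
/- Let J be a nonempty closed convex subset of a uniformly convex Banach space G and S : J → J a nonexpansive mapping whose fixed point set F(S) is nonempty. Let {δₙ} satisfy 0 < w ≤ δₙ ≤ v < 1 for some constants w, v, and let {cₙ} be generated by the iteration (1.2). Then lim_{n→∞} ‖S cₙ − cₙ‖ = 0. -/
open Filter

/-- Convex-combination estimate from a midpoint estimate. -/
lemma comb_bound {E : Type*} [NormedAddCommGroup E] [NormedSpace ℝ E]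
    (x y : E) (t h : ℝ) (hx : ‖x‖ ≤ 1) (hy : ‖y‖ ≤ 1) (ht0 : 0 ≤ t) (ht1 : t ≤ 1)
    (hh0 : 0 ≤ h) (hh : ‖x + y‖ ≤ 2 - 2 * h) :
    ‖(1 - t) • x + t • y‖ ≤ 1 - 2 * min t (1 - t) * h := by
  rcases le_total t (1/2) with hthalf | hthalf
  · have hmin : min t (1 - t) = t := min_eq_left (by linarith)
    have heq : (1 - t) • x + t • y = (1 - 2*t) • x + t • (x + y) := by module
    rw [hmin, heq]
    calc ‖(1 - 2*t) • x + t • (x + y)‖ ≤ ‖(1 - 2*t) • x‖ + ‖t • (x + y)‖ := norm_add_le _ _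
      _ = |1 - 2*t| * ‖x‖ + |t| * ‖x + y‖ := by rw [norm_smul, norm_smul]; rfl
      _ = (1 - 2*t) * ‖x‖ + t * ‖x + y‖ := by
          rw [abs_of_nonneg (by linarith), abs_of_nonneg ht0]
      _ ≤ (1 - 2*t) * 1 + t * (2 - 2*h) :=
          add_le_add (mul_le_mul_of_nonneg_left hx (by linarith))
            (mul_le_mul_of_nonneg_left hh ht0)
      _ ≤ 1 - 2 * t * h := by nlinarith
  · have hmin : min t (1 - t) = 1 - t := min_eq_right (by linarith)
    have heq : (1 - t) • x + t • y = (2*t - 1) • y + (1 - t) • (x + y) := by module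
    rw [hmin, heq]
    calc ‖(2*t - 1) • y + (1 - t) • (x + y)‖ ≤ ‖(2*t - 1) • y‖ + ‖(1 - t) • (x + y)‖ :=
        norm_add_le _ _
      _ = |2*t - 1| * ‖y‖ + |1 - t| * ‖x + y‖ := by rw [norm_smul, norm_smul]; rfl
      _ = (2*t - 1) * ‖y‖ + (1 - t) * ‖x + y‖ := by
          rw [abs_of_nonneg (by linarith), abs_of_nonneg (by linarith)]
      _ ≤ (2*t - 1) * 1 + (1 - t) * (2 - 2*h) :=
          add_le_add (mul_le_mul_of_nonneg_left hy (by linarith))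
            (mul_le_mul_of_nonneg_left hh (by linarith))
      _ ≤ 1 - 2 * (1 - t) * h := by nlinarith

/-- for the iteration (1.2), ‖S cₙ - cₙ‖ → 0. -/
theorem stmt_4 {G : Type*} [NormedAddCommGroup G] [NormedSpace ℝ G] [CompleteSpace G]
    [UniformConvexSpace G]
    (J : Set G) (hJne : J.Nonempty) (hJcl : IsClosed J) (hJconv : Convex ℝ J)
    (S : G → G) (hSJ : ∀ x ∈ J, S x ∈ J)
    (hS : ∀ u ∈ J, ∀ v ∈ J, ‖S u - S v‖ ≤ ‖u - v‖)
    (hFne : ∃ q ∈ J, S q = q)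
    (δ : ℕ → ℝ) (w v : ℝ) (hw : 0 < w) (hv : v < 1)
    (hδ : ∀ n, w ≤ δ n ∧ δ n ≤ v)
    (a b c : ℕ → G) (hc1 : c 1 ∈ J)
    (ha : ∀ n, 1 ≤ n → a n = S (c n))
    (hb : ∀ n, 1 ≤ n → b n = (1 - δ n) • a n + δ n • S (a n))
    (hc : ∀ n, 1 ≤ n → c (n + 1) = S (b n)) :
    Tendsto (fun n => ‖S (c n) - c n‖) atTop (nhds 0) := by
  obtain ⟨q, hqJ, hq⟩ := hFne
  have hwv : w ≤ v := (hδ 0).1.trans (hδ 0).2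
  have hδ0 : ∀ n, (0:ℝ) ≤ δ n := fun n => hw.le.trans (hδ n).1
  have hδ1 : ∀ n, δ n ≤ 1 := fun n => (hδ n).2.trans hv.le
  -- memberships
  have hcJ : ∀ n : ℕ, c (n+1) ∈ J := by
    intro n
    induction n with
    | zero => exact hc1
    | succ k ih =>
      have haJ : a (k+1) ∈ J := by rw [ha (k+1) (by omega)]; exact hSJ _ ih
      have hbJ : b (k+1) ∈ J := by
        rw [hb (k+1) (by omega)]
        exact hJconv haJ (hSJ _ haJ) (by linarith [hδ1 (k+1)]) (hδ0 (k+1)) (by ring)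
      rw [hc (k+1) (by omega)]
      exact hSJ _ hbJ
  have haJ : ∀ n : ℕ, a (n+1) ∈ J := fun n => by
    rw [ha (n+1) (by omega)]; exact hSJ _ (hcJ n)
  have hbJ : ∀ n : ℕ, b (n+1) ∈ J := fun n => by
    rw [hb (n+1) (by omega)]
    exact hJconv (haJ n) (hSJ _ (haJ n)) (by linarith [hδ1 (n+1)]) (hδ0 (n+1)) (by ring)
  -- basic inequalities
  have hSq : ∀ x ∈ J, ‖S x - q‖ ≤ ‖x - q‖ := by
    intro x hx
    have := hS x hx q hqJ
    rwa [hq] at this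
  have h1 : ∀ n : ℕ, ‖a (n+1) - q‖ ≤ ‖c (n+1) - q‖ := by
    intro n; rw [ha (n+1) (by omega)]; exact hSq _ (hcJ n)
  have h2 : ∀ n : ℕ, ‖S (a (n+1)) - q‖ ≤ ‖a (n+1) - q‖ := fun n => hSq _ (haJ n)
  have hbq : ∀ n : ℕ, b (n+1) - q = (1 - δ (n+1)) • (a (n+1) - q) + δ (n+1) • (S (a (n+1)) - q) := by
    intro n; rw [hb (n+1) (by omega)]; module
  have h3 : ∀ n : ℕ, ‖b (n+1) - q‖ ≤ ‖a (n+1) - q‖ := by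
    intro n
    rw [hbq n]
    calc ‖(1 - δ (n+1)) • (a (n+1) - q) + δ (n+1) • (S (a (n+1)) - q)‖
        ≤ ‖(1 - δ (n+1)) • (a (n+1) - q)‖ + ‖δ (n+1) • (S (a (n+1)) - q)‖ := norm_add_le _ _
      _ = |1 - δ (n+1)| * ‖a (n+1) - q‖ + |δ (n+1)| * ‖S (a (n+1)) - q‖ := by
          rw [norm_smul, norm_smul]; rfl
      _ = (1 - δ (n+1)) * ‖a (n+1) - q‖ + δ (n+1) * ‖S (a (n+1)) - q‖ := by
          rw [abs_of_nonneg (by linarith [hδ1 (n+1)]), abs_of_nonneg (hδ0 (n+1))]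
      _ ≤ (1 - δ (n+1)) * ‖a (n+1) - q‖ + δ (n+1) * ‖a (n+1) - q‖ := by
          gcongr
          · exact hδ0 (n+1)
          · exact h2 n
      _ = ‖a (n+1) - q‖ := by ring
  have h4 : ∀ n : ℕ, ‖c (n+2) - q‖ ≤ ‖b (n+1) - q‖ := by
    intro n; rw [hc (n+1) (by omega)]; exact hSq _ (hbJ n)
  -- the monotone sequence D
  set D : ℕ → ℝ := fun n => ‖c (n+1) - q‖ with hD
  have hDsucc : ∀ n, D (n+1) ≤ D n := fun n => (h4 n).trans ((h3 n).trans (h1 n))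
  have hDanti : Antitone D := antitone_nat_of_succ_le hDsucc
  have hDnn : ∀ n, (0:ℝ) ≤ D n := fun n => norm_nonneg _
  have hbdd : BddBelow (Set.range D) := ⟨0, by rintro x ⟨n, rfl⟩; exact hDnn n⟩
  set d : ℝ := ⨅ n, D n with hdd
  have hDtends : Tendsto D atTop (nhds d) := tendsto_atTop_ciInf hDanti hbdd
  have hdn : ∀ n, d ≤ D n := fun n => ciInf_le hbdd n
  have hd0 : 0 ≤ d := le_ciInf hDnn
  have hDshift : Tendsto (fun n => D (n+1)) atTop (nhds d) :=
    (tendsto_add_atTop_iff_nat 1).2 hDtends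
  have hatends : Tendsto (fun n => ‖a (n+1) - q‖) atTop (nhds d) := by
    refine tendsto_of_tendsto_of_tendsto_of_le_of_le hDshift hDtends ?_ ?_
    · exact fun n => (h4 n).trans (h3 n)
    · exact fun n => h1 n
  -- main claim: ‖S a_{n+1} - a_{n+1}‖ → 0
  have hkey : Tendsto (fun n => ‖S (a (n+1)) - a (n+1)‖) atTop (nhds 0) := by
    rcases eq_or_lt_of_le hd0 with hdz | hdpos
    · -- d = 0
      have h2a : ∀ n, ‖S (a (n+1)) - a (n+1)‖ ≤ 2 * ‖a (n+1) - q‖ := by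
        intro n
        calc ‖S (a (n+1)) - a (n+1)‖ ≤ ‖S (a (n+1)) - q‖ + ‖q - a (n+1)‖ := by
              have : S (a (n+1)) - a (n+1) = (S (a (n+1)) - q) + (q - a (n+1)) := by abel
              rw [this]; exact norm_add_le _ _
          _ ≤ ‖a (n+1) - q‖ + ‖a (n+1) - q‖ := by
              rw [norm_sub_rev q]; exact add_le_add (h2 n) le_rfl
          _ = 2 * ‖a (n+1) - q‖ := by ring
      have hlim2 : Tendsto (fun n => 2 * ‖a (n+1) - q‖) atTop (nhds 0) := by
        have := hatends.const_mul 2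
        rw [← hdz] at this; simpa using this
      exact tendsto_of_tendsto_of_tendsto_of_le_of_le tendsto_const_nhds hlim2
        (fun n => norm_nonneg _) h2a
    · -- d > 0
      rw [NormedAddCommGroup.tendsto_nhds_zero]
      intro ε hε
      have hD0pos : 0 < D 0 := hdpos.trans_le (hdn 0)
      obtain ⟨δ₀, hδ₀pos, hball⟩ :=
        exists_forall_closed_ball_dist_add_le_two_sub G (div_pos hε hD0pos)
      set h : ℝ := min (δ₀/2) (4⁻¹) with hh_def
      have hhpos : 0 < h := lt_min (by linarith) (by norm_num)
      have hh4 : h ≤ 4⁻¹ := min_le_right _ _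
      set m : ℝ := min w (1 - v) with hm_def
      have hmpos : 0 < m := lt_min hw (by linarith)
      have hm2 : m ≤ 1/2 := by
        rcases min_le_iff.mpr (Or.inl (le_refl w)) with _
        rcases le_total w (1 - v) with hcase | hcase
        · have : m = w := min_eq_left hcase
          linarith
        · have : m = 1 - v := min_eq_right hcase
          linarith
      set ρ : ℝ := 2 * m * h with hρ_def
      have hρpos : 0 < ρ := by positivity
      have hρlt : ρ < 1 := by
        have : ρ ≤ 2 * (1/2) * 4⁻¹ := by
          apply mul_le_mul (by nlinarith) hh4 hhpos.le (by norm_num)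
        linarith
      -- per-n estimate
      have hper : ∀ n : ℕ, ε ≤ ‖S (a (n+1)) - a (n+1)‖ → d ≤ (1 - ρ) * D n := by
        intro n hn
        set R := D n with hR_def
        have hRpos : 0 < R := hdpos.trans_le (hdn n)
        have hRD0 : R ≤ D 0 := hDanti (Nat.zero_le n)
        set A := a (n+1) - q with hA_def
        set Y := S (a (n+1)) - q with hY_def
        have hA : ‖A‖ ≤ R := h1 n
        have hY : ‖Y‖ ≤ R := (h2 n).trans (h1 n)
        set x' := R⁻¹ • A with hx'_def
        set y' := R⁻¹ • Y with hy'_def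
        have hnx' : ‖x'‖ ≤ 1 := by
          rw [hx'_def, norm_smul, norm_inv, Real.norm_of_nonneg hRpos.le]
          rw [inv_mul_le_one₀ hRpos]
          exact hA
        have hny' : ‖y'‖ ≤ 1 := by
          rw [hy'_def, norm_smul, norm_inv, Real.norm_of_nonneg hRpos.le]
          rw [inv_mul_le_one₀ hRpos]
          exact hY
        have hAY : ‖A - Y‖ = ‖S (a (n+1)) - a (n+1)‖ := by
          rw [hA_def, hY_def, ← norm_neg]; congr 1; abel
        have hsep : ε / D 0 ≤ ‖x' - y'‖ := by
          rw [hx'_def, hy'_def, ← smul_sub, norm_smul, norm_inv,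
            Real.norm_of_nonneg hRpos.le, hAY]
          calc ε / D 0 ≤ ε / R := by
                apply div_le_div_of_nonneg_left hε.le hRpos hRD0
            _ ≤ R⁻¹ * ‖S (a (n+1)) - a (n+1)‖ := by
                rw [div_eq_inv_mul]
                exact mul_le_mul_of_nonneg_left hn (inv_nonneg.2 hRpos.le)
        have hmid : ‖x' + y'‖ ≤ 2 - 2 * h := by
          have := hball hnx' hny' hsep
          have h2h : 2 * h ≤ δ₀ := by
            have := min_le_left (δ₀/2) (4⁻¹)
            linarith [hh_def ▸ this]
          linarith
        set t := δ (n+1) with ht_def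
        have hcomb := comb_bound x' y' t h hnx' hny' (hδ0 (n+1)) (hδ1 (n+1)) hhpos.le hmid
        have hmint : m ≤ min t (1 - t) := by
          apply le_min
          · exact (min_le_left w (1-v)).trans (hδ (n+1)).1
          · exact (min_le_right w (1-v)).trans (by linarith [(hδ (n+1)).2])
        have hcomb' : ‖(1 - t) • x' + t • y'‖ ≤ 1 - ρ := by
          refine hcomb.trans ?_
          rw [hρ_def]
          nlinarith [hhpos.le]
        have hbval : b (n+1) - q = R • ((1 - t) • x' + t • y') := by
          rw [hbq n, hx'_def, hy'_def]
          match_scalars <;> field_simp <;> rfl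
        have hbnorm : ‖b (n+1) - q‖ ≤ (1 - ρ) * R := by
          rw [hbval, norm_smul, Real.norm_of_nonneg hRpos.le]
          calc R * ‖(1 - t) • x' + t • y'‖ ≤ R * (1 - ρ) :=
              mul_le_mul_of_nonneg_left hcomb' hRpos.le
            _ = (1 - ρ) * R := mul_comm _ _
        calc d ≤ D (n+1) := hdn (n+1)
          _ ≤ ‖b (n+1) - q‖ := h4 n
          _ ≤ (1 - ρ) * R := hbnorm
      have hev : ∀ᶠ n in atTop, (1 - ρ) * D n < d :=
        (hDtends.const_mul (1 - ρ)).eventually_lt_const (by nlinarith)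
      filter_upwards [hev] with n hn
      rw [norm_norm]
      by_contra hcon
      push_neg at hcon
      linarith [hper n hcon]
  -- conclude
  have hba : ∀ n : ℕ, ‖b (n+1) - a (n+1)‖ ≤ ‖S (a (n+1)) - a (n+1)‖ := by
    intro n
    have heq : b (n+1) - a (n+1) = δ (n+1) • (S (a (n+1)) - a (n+1)) := by
      rw [hb (n+1) (by omega)]; module
    rw [heq, norm_smul, Real.norm_of_nonneg (hδ0 (n+1))]
    exact mul_le_of_le_one_left (norm_nonneg _) (hδ1 (n+1))
  have hbound : ∀ n : ℕ, ‖S (c (n+2)) - c (n+2)‖ ≤ 3 * ‖S (a (n+1)) - a (n+1)‖ := by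
    intro n
    have hC : c (n+2) = S (b (n+1)) := hc (n+1) (by omega)
    have e2 : ‖c (n+2) - a (n+1)‖ ≤ 2 * ‖S (a (n+1)) - a (n+1)‖ := by
      calc ‖c (n+2) - a (n+1)‖
          ≤ ‖c (n+2) - S (a (n+1))‖ + ‖S (a (n+1)) - a (n+1)‖ := by
            have : c (n+2) - a (n+1) = (c (n+2) - S (a (n+1))) + (S (a (n+1)) - a (n+1)) := by
              abel
            rw [this]; exact norm_add_le _ _
        _ ≤ ‖b (n+1) - a (n+1)‖ + ‖S (a (n+1)) - a (n+1)‖ := by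
            have : ‖c (n+2) - S (a (n+1))‖ ≤ ‖b (n+1) - a (n+1)‖ := by
              rw [hC]; exact hS _ (hbJ n) _ (haJ n)
            linarith
        _ ≤ 2 * ‖S (a (n+1)) - a (n+1)‖ := by linarith [hba n]
    calc ‖S (c (n+2)) - c (n+2)‖
        ≤ ‖S (c (n+2)) - S (a (n+1))‖ + ‖S (a (n+1)) - c (n+2)‖ := by
          have : S (c (n+2)) - c (n+2) =
              (S (c (n+2)) - S (a (n+1))) + (S (a (n+1)) - c (n+2)) := by abel
          rw [this]; exact norm_add_le _ _
      _ ≤ ‖c (n+2) - a (n+1)‖ + ‖S (a (n+1)) - c (n+2)‖ := by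
          have h' := hS (c (n+2)) (hcJ (n+1)) (a (n+1)) (haJ n)
          linarith
      _ ≤ 2 * ‖S (a (n+1)) - a (n+1)‖ + ‖a (n+1) - b (n+1)‖ := by
          have : ‖S (a (n+1)) - c (n+2)‖ ≤ ‖a (n+1) - b (n+1)‖ := by
            rw [hC]; exact hS _ (haJ n) _ (hbJ n)
          linarith [e2]
      _ ≤ 3 * ‖S (a (n+1)) - a (n+1)‖ := by
          have h'' : ‖a (n+1) - b (n+1)‖ = ‖b (n+1) - a (n+1)‖ := norm_sub_rev _ _
          linarith [hba n, h'']
  rw [← tendsto_add_atTop_iff_nat 2]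
  have hlim3 : Tendsto (fun n => 3 * ‖S (a (n+1)) - a (n+1)‖) atTop (nhds 0) := by
    have := hkey.const_mul 3
    simpa using this
  exact tendsto_of_tendsto_of_tendsto_of_le_of_le tendsto_const_nhds hlim3
    (fun n => norm_nonneg _) hbound
end

section
/- Let J be a nonempty closed convex subset of a uniformly convex Banach space G and S : J → J a nonexpansive mapping whose fixed point set F(S) is nonempty. Let {δₙ} satisfy 0 < w ≤ δₙ ≤ v < 1 for some constants w, v, and let {cₙ} be generated by the iteration (1.2) with aₙ = S cₙ. Then lim_{n→∞} ‖aₙ − S aₙ‖ = 0, i.e. lim_{n→∞} ‖S cₙ − S(S cₙ)‖ = 0. -/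
open Filter

/-- Groetsch-type bound for convex combinations in a uniformly convex space. -/
lemma comb_bound_s5 {G : Type*} [NormedAddCommGroup G] [NormedSpace ℝ G]
    {u v : G} {t d' : ℝ} (hu : ‖u‖ ≤ 1) (hv : ‖v‖ ≤ 1) (huv : ‖u + v‖ ≤ 2 - d')
    (ht0 : 0 ≤ t) (ht1 : t ≤ 1) :
    ‖(1 - t) • u + t • v‖ ≤ 1 - min t (1 - t) * d' := by
  rcases le_or_gt t (1/2) with h | h
  · have hid : (1 - t) • u + t • v = (1 - 2*t) • u + t • (u + v) := by module
    have hmin : min t (1 - t) = t := min_eq_left (by linarith)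
    rw [hid, hmin]
    calc ‖(1 - 2*t) • u + t • (u + v)‖ ≤ ‖(1 - 2*t) • u‖ + ‖t • (u + v)‖ := norm_add_le _ _
      _ = |1 - 2*t| * ‖u‖ + |t| * ‖u + v‖ := by rw [norm_smul, norm_smul, Real.norm_eq_abs, Real.norm_eq_abs]
      _ = (1 - 2*t) * ‖u‖ + t * ‖u + v‖ := by rw [abs_of_nonneg (by linarith), abs_of_nonneg ht0]
      _ ≤ (1 - 2*t) * 1 + t * (2 - d') := by
          gcongr <;> linarith
      _ = 1 - t * d' := by ring
  · have hid : (1 - t) • u + t • v = (2*t - 1) • v + (1 - t) • (u + v) := by module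
    have hmin : min t (1 - t) = 1 - t := min_eq_right (by linarith)
    rw [hid, hmin]
    calc ‖(2*t - 1) • v + (1 - t) • (u + v)‖ ≤ ‖(2*t - 1) • v‖ + ‖(1 - t) • (u + v)‖ := norm_add_le _ _
      _ = |2*t - 1| * ‖v‖ + |1 - t| * ‖u + v‖ := by rw [norm_smul, norm_smul, Real.norm_eq_abs, Real.norm_eq_abs]
      _ = (2*t - 1) * ‖v‖ + (1 - t) * ‖u + v‖ := by rw [abs_of_nonneg (by linarith), abs_of_nonneg (by linarith)]
      _ ≤ (2*t - 1) * 1 + (1 - t) * (2 - d') := by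
          gcongr <;> linarith
      _ = 1 - (1 - t) * d' := by ring

/-- Schu's lemma in a uniformly convex space. -/
lemma schu {G : Type*} [NormedAddCommGroup G] [NormedSpace ℝ G] [UniformConvexSpace G]
    (t : ℕ → ℝ) (w v : ℝ) (hw : 0 < w) (hv : v < 1) (ht : ∀ n, w ≤ t n ∧ t n ≤ v)
    (x y : ℕ → G) (r : ℕ → ℝ) (d : ℝ)
    (hrd : Tendsto r atTop (nhds d))
    (hx : ∀ᶠ n in atTop, ‖x n‖ ≤ r n) (hy : ∀ᶠ n in atTop, ‖y n‖ ≤ r n)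
    (hz : Tendsto (fun n => ‖(1 - t n) • x n + t n • y n‖) atTop (nhds d)) :
    Tendsto (fun n => ‖x n - y n‖) atTop (nhds 0) := by
  have hwv : w ≤ v := (ht 0).1.trans (ht 0).2
  have hd0 : 0 ≤ d := by
    have : ∀ᶠ n in atTop, (0:ℝ) ≤ r n := hx.mono fun n hn => (norm_nonneg _).trans hn
    exact le_of_tendsto_of_tendsto tendsto_const_nhds hrd this
  rcases eq_or_lt_of_le hd0 with hd | hd
  · -- d = 0 : squeeze
    have h2r : Tendsto (fun n => 2 * r n) atTop (nhds 0) := by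
      have := hrd.const_mul 2
      simpa [← hd] using this
    refine squeeze_zero' (hx.mono fun n _ => norm_nonneg _) ?_ h2r
    filter_upwards [hx, hy] with n hxn hyn
    calc ‖x n - y n‖ ≤ ‖x n‖ + ‖y n‖ := norm_sub_le _ _
      _ ≤ 2 * r n := by linarith
  · -- d > 0
    rw [NormedAddCommGroup.tendsto_nhds_zero]
    intro ε hε
    have hε' : 0 < ε / (d + 1) := div_pos hε (by linarith)
    obtain ⟨δ₀, hδ₀, H⟩ := exists_forall_closed_ball_dist_add_le_two_sub G hε'
    set d' : ℝ := min δ₀ 1 with hd'def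
    have hd'0 : 0 < d' := lt_min hδ₀ one_pos
    have hd'1 : d' ≤ 1 := min_le_right _ _
    set m : ℝ := min w (1 - v) with hmdef
    have hm0 : 0 < m := lt_min hw (by linarith)
    set η : ℝ := min 1 (d * m * d' / 4) with hηdef
    have hη0 : 0 < η := lt_min one_pos (by positivity)
    have hη1 : η ≤ 1 := min_le_left _ _
    have hη2 : η ≤ d * m * d' / 4 := min_le_right _ _
    have hkey : (d + η) * (1 - m * d') < d - η := by
      have hmd1 : m * d' ≤ 1 := by
        have : m ≤ 1 := le_trans (min_le_right _ _) (by linarith [hw, (ht 0).1, (ht 0).2])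
        nlinarith
      nlinarith
    have hrη : ∀ᶠ n in atTop, r n ≤ d + η := by
      filter_upwards [hrd.eventually_lt_const (by linarith : d < d + η)] with n hn
      exact hn.le
    have hzη : ∀ᶠ n in atTop, d - η < ‖(1 - t n) • x n + t n • y n‖ :=
      hz.eventually_const_lt (by linarith)
    filter_upwards [hx, hy, hrη, hzη] with n hxn hyn hrn hzn
    rw [Real.norm_eq_abs, abs_of_nonneg (norm_nonneg _)]
    by_contra hcon
    push_neg at hcon
    have hc0 : (0:ℝ) < d + η := by linarith
    set u : G := (d + η)⁻¹ • x n with hudef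
    set uv : G := (d + η)⁻¹ • y n with huvdef
    have hnu : ‖u‖ ≤ 1 := by
      rw [hudef, norm_smul, Real.norm_eq_abs, abs_of_nonneg (by positivity)]
      rw [inv_mul_le_iff₀ hc0]
      linarith
    have hnv : ‖uv‖ ≤ 1 := by
      rw [huvdef, norm_smul, Real.norm_eq_abs, abs_of_nonneg (by positivity)]
      rw [inv_mul_le_iff₀ hc0]
      linarith
    have hsub : ε / (d + 1) ≤ ‖u - uv‖ := by
      rw [hudef, huvdef, ← smul_sub, norm_smul, Real.norm_eq_abs,
        abs_of_nonneg (by positivity)]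
      rw [inv_mul_eq_div]
      exact div_le_div₀ (norm_nonneg _) hcon hc0 (by linarith)
    have huv2 : ‖u + uv‖ ≤ 2 - δ₀ := H hnu hnv hsub
    have hd'le : d' ≤ δ₀ := min_le_left _ _
    have huv2' : ‖u + uv‖ ≤ 2 - d' := huv2.trans (by linarith)
    have ht0 : 0 ≤ t n := le_trans hw.le (ht n).1
    have ht1 : t n ≤ 1 := le_trans (ht n).2 hv.le
    have hcb := comb_bound_s5 hnu hnv huv2' ht0 ht1
    have hmmin : m ≤ min (t n) (1 - t n) :=
      le_min (le_trans (min_le_left _ _) (ht n).1)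
        (le_trans (min_le_right _ _) (by linarith [(ht n).2]))
    have hcb2 : ‖(1 - t n) • u + t n • uv‖ ≤ 1 - m * d' := by
      refine hcb.trans ?_
      have : m * d' ≤ min (t n) (1 - t n) * d' := by
        apply mul_le_mul_of_nonneg_right hmmin hd'0.le
      linarith
    have hid : (1 - t n) • u + t n • uv = (d + η)⁻¹ • ((1 - t n) • x n + t n • y n) := by
      rw [hudef, huvdef]; module
    rw [hid, norm_smul, Real.norm_eq_abs, abs_of_nonneg (by positivity),
      inv_mul_eq_div, div_le_iff₀ hc0] at hcb2
    nlinarith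

/-- for the iteration (1.2), ‖aₙ - S aₙ‖ → 0 where aₙ = S cₙ. -/
theorem stmt_5 {G : Type*} [NormedAddCommGroup G] [NormedSpace ℝ G] [CompleteSpace G]
    [UniformConvexSpace G]
    (J : Set G) (hJne : J.Nonempty) (hJcl : IsClosed J) (hJconv : Convex ℝ J)
    (S : G → G) (hSJ : ∀ x ∈ J, S x ∈ J)
    (hS : ∀ u ∈ J, ∀ v ∈ J, ‖S u - S v‖ ≤ ‖u - v‖)
    (hFne : ∃ q ∈ J, S q = q)
    (δ : ℕ → ℝ) (w v : ℝ) (hw : 0 < w) (hv : v < 1)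
    (hδ : ∀ n, w ≤ δ n ∧ δ n ≤ v)
    (a b c : ℕ → G) (hc1 : c 1 ∈ J)
    (ha : ∀ n, 1 ≤ n → a n = S (c n))
    (hb : ∀ n, 1 ≤ n → b n = (1 - δ n) • a n + δ n • S (a n))
    (hc : ∀ n, 1 ≤ n → c (n + 1) = S (b n)) :
    Tendsto (fun n => ‖a n - S (a n)‖) atTop (nhds 0) := by
  obtain ⟨q, hqJ, hq⟩ := hFne
  have hδ0 : ∀ n, 0 ≤ δ n := fun n => hw.le.trans (hδ n).1
  have hδ1 : ∀ n, δ n ≤ 1 := fun n => (hδ n).2.trans hv.le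
  have hcJ : ∀ n, 1 ≤ n → c n ∈ J := by
    intro n hn
    induction n with
    | zero => omega
    | succ k ih =>
      rcases Nat.eq_zero_or_pos k with hk | hk
      · subst hk; exact hc1
      · have hck := ih hk
        have haJ : a k ∈ J := by rw [ha k hk]; exact hSJ _ hck
        have hbJ : b k ∈ J := by
          rw [hb k hk]
          exact hJconv haJ (hSJ _ haJ) (by linarith [(hδ k).2]) (hδ0 k) (by ring)
        rw [hc k hk]; exact hSJ _ hbJ
  have haJ : ∀ n, 1 ≤ n → a n ∈ J := fun n hn => (ha n hn) ▸ hSJ _ (hcJ n hn)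
  have hbJ : ∀ n, 1 ≤ n → b n ∈ J := by
    intro n hn
    rw [hb n hn]
    exact hJconv (haJ n hn) (hSJ _ (haJ n hn)) (by linarith [(hδ n).2]) (hδ0 n) (by ring)
  have haq : ∀ n, 1 ≤ n → ‖a n - q‖ ≤ ‖c n - q‖ := by
    intro n hn
    rw [ha n hn]
    calc ‖S (c n) - q‖ = ‖S (c n) - S q‖ := by rw [hq]
      _ ≤ ‖c n - q‖ := hS _ (hcJ n hn) _ hqJ
  have hSaq : ∀ n, 1 ≤ n → ‖S (a n) - q‖ ≤ ‖a n - q‖ := by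
    intro n hn
    calc ‖S (a n) - q‖ = ‖S (a n) - S q‖ := by rw [hq]
      _ ≤ ‖a n - q‖ := hS _ (haJ n hn) _ hqJ
  have hbid : ∀ n, 1 ≤ n → b n - q = (1 - δ n) • (a n - q) + δ n • (S (a n) - q) := by
    intro n hn; rw [hb n hn]; module
  have hbq : ∀ n, 1 ≤ n → ‖b n - q‖ ≤ ‖c n - q‖ := by
    intro n hn
    rw [hbid n hn]
    calc ‖(1 - δ n) • (a n - q) + δ n • (S (a n) - q)‖
        ≤ ‖(1 - δ n) • (a n - q)‖ + ‖δ n • (S (a n) - q)‖ := norm_add_le _ _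
      _ = (1 - δ n) * ‖a n - q‖ + δ n * ‖S (a n) - q‖ := by
          rw [norm_smul, norm_smul, Real.norm_eq_abs, Real.norm_eq_abs,
            abs_of_nonneg (by linarith [hδ1 n]), abs_of_nonneg (hδ0 n)]
      _ ≤ (1 - δ n) * ‖c n - q‖ + δ n * ‖c n - q‖ := by
          have h1 := haq n hn
          have h2 := (hSaq n hn).trans (haq n hn)
          have h3 : (0:ℝ) ≤ 1 - δ n := by linarith [hδ1 n]
          have h4 := hδ0 n
          gcongr
      _ = ‖c n - q‖ := by ring
  have hcq : ∀ n, 1 ≤ n → ‖c (n+1) - q‖ ≤ ‖b n - q‖ := by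
    intro n hn
    rw [hc n hn]
    calc ‖S (b n) - q‖ = ‖S (b n) - S q‖ := by rw [hq]
      _ ≤ ‖b n - q‖ := hS _ (hbJ n hn) _ hqJ
  set r : ℕ → ℝ := fun n => ‖c n - q‖ with hrdef
  have hanti : Antitone (fun n => r (n+1)) := by
    apply antitone_nat_of_succ_le
    intro n
    exact (hcq (n+1) (by omega)).trans (hbq (n+1) (by omega))
  have hbdd : BddBelow (Set.range fun n => r (n+1)) :=
    ⟨0, by rintro _ ⟨n, rfl⟩; exact norm_nonneg _⟩
  set d := ⨅ n, r (n+1) with hddef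
  have hrd' : Tendsto (fun n => r (n+1)) atTop (nhds d) := tendsto_atTop_ciInf hanti hbdd
  have hrd : Tendsto r atTop (nhds d) := (tendsto_add_atTop_iff_nat 1).mp hrd'
  have hbm : Tendsto (fun n => ‖b n - q‖) atTop (nhds d) := by
    apply tendsto_of_tendsto_of_tendsto_of_le_of_le' hrd' hrd
    · filter_upwards [eventually_ge_atTop 1] with n hn
      exact hcq n hn
    · filter_upwards [eventually_ge_atTop 1] with n hn
      exact hbq n hn
  have hzz : Tendsto (fun n => ‖(1 - δ n) • (a n - q) + δ n • (S (a n) - q)‖) atTop (nhds d) := by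
    refine hbm.congr' ?_
    filter_upwards [eventually_ge_atTop 1] with n hn
    rw [hbid n hn]
  have hmain := schu δ w v hw hv hδ (fun n => a n - q) (fun n => S (a n) - q) r d hrd
    (by filter_upwards [eventually_ge_atTop 1] with n hn; exact haq n hn)
    (by filter_upwards [eventually_ge_atTop 1] with n hn; exact (hSaq n hn).trans (haq n hn))
    hzz
  apply hmain.congr
  intro n
  rw [sub_sub_sub_cancel_right]
end

section
/- Let J be a nonempty closed convex subset of a uniformly convex Banach space G and S : J → J a nonexpansive mapping whose fixed point set F(S) is nonempty. Let {δₙ} satisfy 0 < w ≤ δₙ ≤ v < 1 for some constants w, v, and let {cₙ} be generated by the iteration (1.2) with aₙ = S cₙ and bₙ = (1−δₙ)aₙ + δₙ S aₙ. Then lim_{n→∞} ‖aₙ − bₙ‖ = 0. -/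
open Filter

set_option maxHeartbeats 1000000 in
/-- for the iteration (1.2), ‖aₙ - bₙ‖ → 0. -/
theorem stmt_6 {G : Type*} [NormedAddCommGroup G] [NormedSpace ℝ G] [CompleteSpace G]
    [UniformConvexSpace G]
    (J : Set G) (hJne : J.Nonempty) (hJcl : IsClosed J) (hJconv : Convex ℝ J)
    (S : G → G) (hSJ : ∀ x ∈ J, S x ∈ J)
    (hS : ∀ u ∈ J, ∀ v ∈ J, ‖S u - S v‖ ≤ ‖u - v‖)
    (hFne : ∃ q ∈ J, S q = q)
    (δ : ℕ → ℝ) (w v : ℝ) (hw : 0 < w) (hv : v < 1)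
    (hδ : ∀ n, w ≤ δ n ∧ δ n ≤ v)
    (a b c : ℕ → G) (hc1 : c 1 ∈ J)
    (ha : ∀ n, 1 ≤ n → a n = S (c n))
    (hb : ∀ n, 1 ≤ n → b n = (1 - δ n) • a n + δ n • S (a n))
    (hc : ∀ n, 1 ≤ n → c (n + 1) = S (b n)) :
    Tendsto (fun n => ‖a n - b n‖) atTop (nhds 0) := by
  obtain ⟨q, hqJ, hq⟩ := hFne
  have hδw : ∀ n, 0 < δ n := fun n => lt_of_lt_of_le hw (hδ n).1
  have hδv : ∀ n, δ n < 1 := fun n => lt_of_le_of_lt (hδ n).2 hv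
  -- memberships
  have hcJ : ∀ n, 1 ≤ n → c n ∈ J := by
    intro n hn
    induction n with
    | zero => omega
    | succ m ih =>
      rcases Nat.eq_or_lt_of_le hn with h1 | h1
      · exact h1 ▸ hc1
      · have hm : 1 ≤ m := by omega
        have hcm := ih hm
        have haJ : a m ∈ J := by rw [ha m hm]; exact hSJ _ hcm
        have hbJ : b m ∈ J := by
          rw [hb m hm]
          exact hJconv haJ (hSJ _ haJ) (by linarith [hδv m]) (hδw m).le (by ring)
        rw [hc m hm]; exact hSJ _ hbJ
  have haJ : ∀ n, 1 ≤ n → a n ∈ J := fun n hn => by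
    rw [ha n hn]; exact hSJ _ (hcJ n hn)
  have hbJ : ∀ n, 1 ≤ n → b n ∈ J := fun n hn => by
    rw [hb n hn]
    exact hJconv (haJ n hn) (hSJ _ (haJ n hn)) (by linarith [hδv n]) (hδw n).le (by ring)
  -- basic inequalities
  have key1 : ∀ n, 1 ≤ n → ‖a n - q‖ ≤ ‖c n - q‖ := by
    intro n hn
    rw [ha n hn]
    calc ‖S (c n) - q‖ = ‖S (c n) - S q‖ := by rw [hq]
    _ ≤ ‖c n - q‖ := hS _ (hcJ n hn) _ hqJ
  have key2 : ∀ n, 1 ≤ n → ‖S (a n) - q‖ ≤ ‖a n - q‖ := by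
    intro n hn
    calc ‖S (a n) - q‖ = ‖S (a n) - S q‖ := by rw [hq]
    _ ≤ ‖a n - q‖ := hS _ (haJ n hn) _ hqJ
  have hbq : ∀ n, 1 ≤ n → b n - q = (1 - δ n) • (a n - q) + δ n • (S (a n) - q) := by
    intro n hn; rw [hb n hn]; module
  have key3 : ∀ n, 1 ≤ n → ‖b n - q‖ ≤ ‖a n - q‖ := by
    intro n hn
    rw [hbq n hn]
    have h1 := norm_add_le ((1 - δ n) • (a n - q)) (δ n • (S (a n) - q))
    rw [norm_smul, norm_smul, Real.norm_eq_abs, Real.norm_eq_abs,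
      abs_of_nonneg (by linarith [hδv n] : (0:ℝ) ≤ 1 - δ n),
      abs_of_nonneg (hδw n).le] at h1
    nlinarith [key2 n hn, hδw n, hδv n, norm_nonneg (a n - q)]
  have key4 : ∀ n, 1 ≤ n → ‖c (n + 1) - q‖ ≤ ‖b n - q‖ := by
    intro n hn
    rw [hc n hn]
    calc ‖S (b n) - q‖ = ‖S (b n) - S q‖ := by rw [hq]
    _ ≤ ‖b n - q‖ := hS _ (hbJ n hn) _ hqJ
  have chain : ∀ n, 1 ≤ n → ‖c (n + 1) - q‖ ≤ ‖c n - q‖ := fun n hn =>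
    le_trans (key4 n hn) (le_trans (key3 n hn) (key1 n hn))
  -- the decreasing sequence r' n = ‖c (n+1) - q‖
  set r : ℕ → ℝ := fun n => ‖c (n + 1) - q‖ with hr
  have hanti : Antitone r := antitone_nat_of_succ_le fun n => chain (n + 1) (by omega)
  have hbdd : BddBelow (Set.range r) := ⟨0, by rintro x ⟨n, rfl⟩; exact norm_nonneg _⟩
  set d := ⨅ n, r n with hd
  have hlim : Tendsto r atTop (nhds d) := tendsto_atTop_ciInf hanti hbdd
  have hd0 : 0 ≤ d := le_ciInf fun n => norm_nonneg _
  have hdle : ∀ n, d ≤ r n := fun n => ciInf_le hbdd n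
  -- main estimate: ‖a n - S (a n)‖ small eventually
  have htend : ∀ ε : ℝ, 0 < ε → ∃ N, ∀ n ≥ N, 1 ≤ n → ‖a n - S (a n)‖ < ε := by
    intro ε hε
    by_cases hdz : d = 0
    · -- r → 0
      have := Metric.tendsto_atTop.1 hlim (ε / 3) (by linarith)
      obtain ⟨N, hN⟩ := this
      refine ⟨N + 1, fun n hn hn1 => ?_⟩
      obtain ⟨m, rfl⟩ := Nat.exists_eq_succ_of_ne_zero (by omega : n ≠ 0)
      have hm : N ≤ m := by omega
      have hrm : r m < ε / 3 := by
        have := hN m hm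
        rw [Real.dist_eq, hdz, sub_zero, abs_of_nonneg (norm_nonneg _)] at this
        exact this
      have h1 : ‖a (m + 1) - q‖ ≤ r m := key1 (m + 1) hn1
      have h2 : ‖S (a (m + 1)) - q‖ ≤ r m := le_trans (key2 _ hn1) h1
      calc ‖a (m + 1) - S (a (m + 1))‖
          ≤ ‖a (m + 1) - q‖ + ‖q - S (a (m + 1))‖ := norm_sub_le_norm_sub_add_norm_sub _ _ _
        _ = ‖a (m + 1) - q‖ + ‖S (a (m + 1)) - q‖ := by rw [norm_sub_rev q]
        _ < ε := by linarith
    · have hdpos : 0 < d := lt_of_le_of_ne hd0 (Ne.symm hdz)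
      have hR : 0 < r 0 := lt_of_lt_of_le hdpos (hdle 0)
      obtain ⟨δ', hδ'pos, hδ'⟩ :=
        exists_forall_closed_ball_dist_add_le_two_sub G (div_pos hε hR)
      set η := min δ' 1 with hη
      have hηpos : 0 < η := lt_min hδ'pos one_pos
      have hη1 : η ≤ 1 := min_le_right _ _
      set μ := min w (1 - v) with hμ
      have hμpos : 0 < μ := lt_min hw (by linarith)
      have hv0 : 0 < v := lt_of_lt_of_le hw ((hδ 0).1.trans (hδ 0).2)
      have hμ1 : μ < 1 := lt_of_le_of_lt (min_le_right _ _) (by linarith)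
      have hμη : 0 < 1 - μ * η := by nlinarith
      have hdd : d < d / (1 - μ * η) := by
        rw [lt_div_iff₀ hμη]
        nlinarith [mul_pos hdpos (mul_pos hμpos hηpos)]
      obtain ⟨N, hN⟩ := Metric.tendsto_atTop.1 hlim (d / (1 - μ * η) - d) (by linarith)
      refine ⟨N + 1, fun n hn hn1 => ?_⟩
      by_contra hcon
      push_neg at hcon
      obtain ⟨m, rfl⟩ := Nat.exists_eq_succ_of_ne_zero (by omega : n ≠ 0)
      have hm : N ≤ m := by omega
      have hrm : r m < d / (1 - μ * η) := by
        have := hN m hm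
        rw [Real.dist_eq, abs_lt] at this
        linarith [this.1]
      have hrnd : d ≤ r m := hdle m
      have hrnpos : 0 < r m := lt_of_lt_of_le hdpos hrnd
      set n := m + 1
      set u := a n - q with hu
      set s := S (a n) - q with hs
      have hu1 : ‖u‖ ≤ r m := key1 n hn1
      have hs1 : ‖s‖ ≤ r m := le_trans (key2 n hn1) hu1
      -- scaled vectors
      have hx : ‖(r m)⁻¹ • u‖ ≤ 1 := by
        rw [norm_smul, Real.norm_eq_abs, abs_of_nonneg (inv_nonneg.2 hrnpos.le)]
        rw [inv_mul_le_iff₀ hrnpos]; simpa using hu1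
      have hy : ‖(r m)⁻¹ • s‖ ≤ 1 := by
        rw [norm_smul, Real.norm_eq_abs, abs_of_nonneg (inv_nonneg.2 hrnpos.le)]
        rw [inv_mul_le_iff₀ hrnpos]; simpa using hs1
      have hrm0 : r m ≤ r 0 := hanti (Nat.zero_le m)
      have hxy : ε / r 0 ≤ ‖(r m)⁻¹ • u - (r m)⁻¹ • s‖ := by
        rw [← smul_sub, norm_smul, Real.norm_eq_abs,
          abs_of_nonneg (inv_nonneg.2 hrnpos.le)]
        have : u - s = a n - S (a n) := by rw [hu, hs]; abel
        rw [this]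
        rw [div_le_iff₀ hR]
        calc ε ≤ ‖a n - S (a n)‖ := hcon
        _ = (r m)⁻¹ * ‖a n - S (a n)‖ * r m := by
            field_simp
        _ ≤ (r m)⁻¹ * ‖a n - S (a n)‖ * r 0 := by
            have h0 : 0 ≤ (r m)⁻¹ * ‖a n - S (a n)‖ :=
              mul_nonneg (inv_nonneg.2 hrnpos.le) (norm_nonneg _)
            exact mul_le_mul_of_nonneg_left hrm0 h0
      have hsum : ‖u + s‖ ≤ (2 - η) * r m := by
        have h2 := hδ' hx hy hxy
        rw [← smul_add, norm_smul, Real.norm_eq_abs,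
          abs_of_nonneg (inv_nonneg.2 hrnpos.le), inv_mul_le_iff₀ hrnpos] at h2
        have hηδ' : η ≤ δ' := min_le_left _ _
        calc ‖u + s‖ ≤ r m * (2 - δ') := h2
        _ ≤ (2 - η) * r m := by nlinarith
      -- bound on ‖b n - q‖
      have hbnq : ‖b n - q‖ ≤ (1 - μ * η) * r m := by
        have hbe : b n - q = (1 - δ n) • u + δ n • s := hbq n hn1
        rcases le_or_gt (δ n) (1 / 2) with ht | ht
        · have hsplit : b n - q = (1 - 2 * δ n) • u + δ n • (u + s) := by
            rw [hbe]; module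
          have hμw : μ ≤ δ n := le_trans (min_le_left _ _) (hδ n).1
          calc ‖b n - q‖ = ‖(1 - 2 * δ n) • u + δ n • (u + s)‖ := by rw [hsplit]
          _ ≤ ‖(1 - 2 * δ n) • u‖ + ‖δ n • (u + s)‖ := norm_add_le _ _
          _ = (1 - 2 * δ n) * ‖u‖ + δ n * ‖u + s‖ := by
              rw [norm_smul, norm_smul, Real.norm_eq_abs, Real.norm_eq_abs,
                abs_of_nonneg (by linarith : (0:ℝ) ≤ 1 - 2 * δ n),
                abs_of_nonneg (hδw n).le]
          _ ≤ (1 - 2 * δ n) * r m + δ n * ((2 - η) * r m) := by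
              gcongr
              · linarith
              · exact (hδw n).le
          _ = (1 - δ n * η) * r m := by ring
          _ ≤ (1 - μ * η) * r m := by
              nlinarith [mul_nonneg (mul_nonneg (sub_nonneg.2 hμw) hηpos.le) hrnpos.le]
        · have hsplit : b n - q = (2 * δ n - 1) • s + (1 - δ n) • (u + s) := by
            rw [hbe]; module
          have hμv : μ ≤ 1 - δ n := le_trans (min_le_right _ _) (by linarith [(hδ n).2])
          calc ‖b n - q‖ = ‖(2 * δ n - 1) • s + (1 - δ n) • (u + s)‖ := by rw [hsplit]
          _ ≤ ‖(2 * δ n - 1) • s‖ + ‖(1 - δ n) • (u + s)‖ := norm_add_le _ _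
          _ = (2 * δ n - 1) * ‖s‖ + (1 - δ n) * ‖u + s‖ := by
              rw [norm_smul, norm_smul, Real.norm_eq_abs, Real.norm_eq_abs,
                abs_of_nonneg (by linarith : (0:ℝ) ≤ 2 * δ n - 1),
                abs_of_nonneg (by linarith [hδv n] : (0:ℝ) ≤ 1 - δ n)]
          _ ≤ (2 * δ n - 1) * r m + (1 - δ n) * ((2 - η) * r m) := by
              gcongr
              · linarith
              · linarith [hδv n]
          _ = (1 - (1 - δ n) * η) * r m := by ring
          _ ≤ (1 - μ * η) * r m := by
              nlinarith [mul_nonneg (mul_nonneg (sub_nonneg.2 hμv) hηpos.le) hrnpos.le]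
      have hfinal : d ≤ (1 - μ * η) * r m :=
        le_trans (le_trans (hdle n) (key4 n hn1)) hbnq
      nlinarith [(lt_div_iff₀ hμη).mp hrm]
  -- conclude
  rw [Metric.tendsto_atTop]
  intro ε hε
  obtain ⟨N, hN⟩ := htend ε hε
  refine ⟨max N 1, fun n hn => ?_⟩
  have hn1 : 1 ≤ n := le_trans (le_max_right N 1) hn
  have hnN : N ≤ n := le_trans (le_max_left N 1) hn
  have hab : a n - b n = δ n • (a n - S (a n)) := by
    rw [hb n hn1]; module
  rw [Real.dist_eq, sub_zero, abs_of_nonneg (norm_nonneg _), hab, norm_smul,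
    Real.norm_eq_abs, abs_of_nonneg (hδw n).le]
  calc δ n * ‖a n - S (a n)‖ ≤ 1 * ‖a n - S (a n)‖ :=
        mul_le_mul_of_nonneg_right (hδv n).le (norm_nonneg _)
  _ = ‖a n - S (a n)‖ := one_mul _
  _ < ε := hN n hnN hn1
end

section
/- Let G be a uniformly convex Banach space satisfying Opial's condition, J a nonempty closed convex subset of G, and S : J → J a nonexpansive mapping whose fixed point set F(S) is nonempty. Let {δₙ} satisfy 0 < w ≤ δₙ ≤ v < 1 for some constants w, v, and let {cₙ} be generated by the iteration (1.2). Then {cₙ} converges weakly to a fixed point of S. -/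
set_option maxHeartbeats 1000000


open Filter

open Filter Set Metric TopologicalSpace

section Aux
variable {G : Type*} [NormedAddCommGroup G] [NormedSpace ℝ G]

/-- Uniform convexity: points of a slice of a ball of radius `r + ε` determined by a
norm-one functional have small diameter. -/
lemma stmt7_ucDiam [UniformConvexSpace G] {r : ℝ} (hr : 0 ≤ r) {ε' : ℝ} (hε' : 0 < ε') :
    ∃ η > 0, ∃ ε > 0, ∀ (f₀ : G →L[ℝ] ℝ), ‖f₀‖ ≤ 1 →
      ∀ x y : G, ‖x‖ ≤ r + ε → ‖y‖ ≤ r + ε →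
        r - η ≤ f₀ x → r - η ≤ f₀ y → ‖x - y‖ ≤ ε' := by
  rcases eq_or_lt_of_le hr with hr0 | hrpos
  · refine ⟨1, one_pos, min 1 (ε' / 2), lt_min one_pos (by linarith), fun f₀ hf₀ x y hx hy _ _ => ?_⟩
    have h2 : min 1 (ε' / 2) ≤ ε' / 2 := min_le_right _ _
    calc ‖x - y‖ ≤ ‖x‖ + ‖y‖ := norm_sub_le _ _
    _ ≤ (r + min 1 (ε' / 2)) + (r + min 1 (ε' / 2)) := add_le_add hx hy
    _ ≤ ε' := by rw [← hr0]; linarith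
  · have hε₀ : (0:ℝ) < ε' / (r + 1) := div_pos hε' (by linarith)
    obtain ⟨δ₀, hδ₀, H⟩ := exists_forall_closed_ball_dist_add_le_two_sub G hε₀
    set δ := min δ₀ 1 with hδdef
    have hδpos : 0 < δ := lt_min hδ₀ one_pos
    have hδ1 : δ ≤ 1 := min_le_right _ _
    refine ⟨δ * r / 4, by positivity, min 1 (δ * r / 4), lt_min one_pos (by positivity),
      fun f₀ hf₀ x y hx hy hfx hfy => ?_⟩
    set ε := min 1 (δ * r / 4) with hεdef
    have hεpos : 0 < ε := lt_min one_pos (by positivity)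
    have hε1 : ε ≤ 1 := min_le_left _ _
    have hε4 : ε ≤ δ * r / 4 := min_le_right _ _
    by_contra hcon
    push_neg at hcon
    set s := r + ε with hsdef
    have hspos : 0 < s := by positivity
    have hs1 : s ≤ r + 1 := by simp only [hsdef]; linarith
    have hnorm : ∀ z : G, ‖s⁻¹ • z‖ = ‖z‖ / s := fun z => by
      rw [norm_smul, Real.norm_eq_abs, abs_of_pos (inv_pos.2 hspos), inv_mul_eq_div]
    have hxh : ‖s⁻¹ • x‖ ≤ 1 := by rw [hnorm]; exact (div_le_one hspos).2 hx
    have hyh : ‖s⁻¹ • y‖ ≤ 1 := by rw [hnorm]; exact (div_le_one hspos).2 hy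
    have hdist : ε' / (r + 1) ≤ ‖s⁻¹ • x - s⁻¹ • y‖ := by
      rw [← smul_sub, hnorm]
      calc ε' / (r + 1) ≤ ε' / s := by gcongr
      _ ≤ ‖x - y‖ / s := by have := hcon.le; gcongr

    have hsum2 : ‖s⁻¹ • x + s⁻¹ • y‖ ≤ 2 - δ := by
      refine (H hxh hyh hdist).trans ?_
      have : δ ≤ δ₀ := min_le_left _ _
      linarith
    have hlow : 2 * (r - δ * r / 4) ≤ ‖x + y‖ := by
      have h1 : f₀ (x + y) ≤ ‖f₀‖ * ‖x + y‖ := le_trans (le_abs_self _) (f₀.le_opNorm _)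
      have h2 : ‖f₀‖ * ‖x + y‖ ≤ 1 * ‖x + y‖ :=
        mul_le_mul_of_nonneg_right hf₀ (norm_nonneg _)
      have h3 : f₀ (x + y) = f₀ x + f₀ y := map_add _ _ _
      nlinarith [hfx, hfy]
    have hlow2 : 2 * (r - δ * r / 4) / s ≤ ‖s⁻¹ • x + s⁻¹ • y‖ := by
      rw [← smul_add, hnorm]; gcongr
    have hle : 2 * (r - δ * r / 4) ≤ (2 - δ) * s :=
      (div_le_iff₀ hspos).1 (hlow2.trans hsum2)
    have hfinal : (2 - δ) * s < 2 * (r - δ * r / 4) := by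
      have hsval : s = r + ε := hsdef
      nlinarith [hεpos, hδ1, hrpos, hε4, hδpos]
    linarith



lemma stmt7_isLinear (f : G →L[ℝ] ℝ) : IsLinearMap ℝ (⇑f) :=
  ⟨fun a b => map_add f a b, fun c a => map_smul f c a⟩

lemma stmt7_hullGE {s : Set G} (f : G →L[ℝ] ℝ) {lo : ℝ} (h : ∀ y ∈ s, lo ≤ f y) :
    ∀ y ∈ convexHull ℝ s, lo ≤ f y := fun _y hy =>
  convexHull_min h (convex_halfSpace_ge (stmt7_isLinear f) lo) hy

lemma stmt7_hullIcc {s : Set G} (f : G →L[ℝ] ℝ) {lo hi : ℝ} (h : ∀ y ∈ s, f y ∈ Icc lo hi) :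
    ∀ y ∈ convexHull ℝ s, f y ∈ Icc lo hi := by
  intro y hy
  constructor
  · exact stmt7_hullGE f (fun z hz => (h z hz).1) y hy
  · have := stmt7_hullGE (-f) (lo := -hi) (fun z hz => by
      simpa using neg_le_neg (h z hz).2) y hy
    simpa using this

lemma stmt7_hullLB {s : Set G} (hs : s.Nonempty) {ρ : ℝ} (hρ : 0 < ρ)
    (h : ∀ y ∈ convexHull ℝ s, ρ ≤ ‖y‖) :
    ∃ f : G →L[ℝ] ℝ, ‖f‖ ≤ 1 ∧ ∀ y ∈ s, ρ ≤ f y := by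
  have hdisj : Disjoint (ball (0:G) ρ) (convexHull ℝ s) := by
    rw [Set.disjoint_left]
    intro z hz hz'
    exact absurd (h z hz') (not_le.2 (by simpa using hz))
  obtain ⟨f, u, hfu1, hfu2⟩ :=
    geometric_hahn_banach_open (convex_ball (0:G) ρ) isOpen_ball (convex_convexHull ℝ s) hdisj
  have hu0 : 0 < u := by
    have := hfu1 0 (mem_ball_self hρ)
    simpa using this
  obtain ⟨y₀, hy₀⟩ := hs
  have hfne : f ≠ 0 := by
    intro h0
    have := hfu2 y₀ (subset_convexHull ℝ s hy₀)
    rw [h0] at this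
    simp at this
    linarith
  have hfpos : 0 < ‖f‖ := norm_pos_iff.2 hfne
  have key : ∀ z : G, ρ * |f z| ≤ u * ‖z‖ := by
    intro z
    by_contra hcon
    push_neg at hcon
    have hfz : 0 < |f z| := by
      rcases lt_or_ge 0 (|f z|) with h' | h'
      · exact h'
      · have : |f z| = 0 := le_antisymm h' (abs_nonneg _)
        rw [this] at hcon
        nlinarith [norm_nonneg z, hu0]
    have hz0 : z ≠ 0 := by
      intro h0
      rw [h0] at hcon
      simp at hcon
    have hznorm : 0 < ‖z‖ := norm_pos_iff.2 hz0
    set ρ' := (u * ‖z‖ / |f z| + ρ) / 2 with hρ'def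
    have h1 : u * ‖z‖ / |f z| < ρ := by
      rw [div_lt_iff₀ hfz]
      nlinarith
    have hρ'ρ : ρ' < ρ := by rw [hρ'def]; linarith
    have hρ'pos : 0 < ρ' := by
      have : 0 ≤ u * ‖z‖ / |f z| := by positivity
      rw [hρ'def]; linarith
    have hρ'gt : u * ‖z‖ < ρ' * |f z| := by
      have : u * ‖z‖ / |f z| < ρ' := by rw [hρ'def]; linarith
      calc u * ‖z‖ = u * ‖z‖ / |f z| * |f z| := by field_simp
      _ < ρ' * |f z| := by gcongr
    set w := (ρ' / ‖z‖) • z with hwdef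
    have hw : ‖w‖ = ρ' := by
      rw [hwdef, norm_smul, Real.norm_eq_abs, abs_of_pos (div_pos hρ'pos hznorm),
        div_mul_cancel₀ _ hznorm.ne']
    have hwball : w ∈ ball (0:G) ρ := by
      rw [mem_ball_zero_iff, hw]; exact hρ'ρ
    have hwball' : -w ∈ ball (0:G) ρ := by
      rw [mem_ball_zero_iff, norm_neg, hw]; exact hρ'ρ
    have h2 : |f w| < u := by
      have ha := hfu1 w hwball
      have hb := hfu1 (-w) hwball'
      rw [map_neg] at hb
      rw [abs_lt]
      constructor <;> linarith
    have h3 : |f w| = ρ' / ‖z‖ * |f z| := by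
      rw [hwdef, map_smul, smul_eq_mul, abs_mul, abs_of_pos (div_pos hρ'pos hznorm)]
    rw [h3, div_mul_eq_mul_div, div_lt_iff₀ hznorm] at h2
    nlinarith
  have hfnorm : ‖f‖ ≤ u / ρ := by
    apply f.opNorm_le_bound (by positivity)
    intro z
    rw [Real.norm_eq_abs, div_mul_eq_mul_div, le_div_iff₀ hρ]
    calc |f z| * ρ = ρ * |f z| := mul_comm _ _
    _ ≤ u * ‖z‖ := key z
  have h2 : ‖f‖ * ρ ≤ u := (le_div_iff₀ hρ).1 hfnorm
  refine ⟨‖f‖⁻¹ • f, ?_, ?_⟩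
  · apply ContinuousLinearMap.opNorm_le_bound _ zero_le_one
    intro z
    simp only [ContinuousLinearMap.smul_apply, smul_eq_mul, Real.norm_eq_abs, abs_mul,
      abs_of_pos (inv_pos.2 hfpos), one_mul]
    calc ‖f‖⁻¹ * |f z| ≤ ‖f‖⁻¹ * (‖f‖ * ‖z‖) := by
          gcongr
          exact f.le_opNorm z
    _ = ‖z‖ := by field_simp
  · intro y hy
    have h1 : u ≤ f y := hfu2 y (subset_convexHull ℝ s hy)
    have h3 : ‖f‖ * ρ ≤ f y := le_trans h2 h1
    simp only [ContinuousLinearMap.smul_apply, smul_eq_mul]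
    calc ρ = ‖f‖⁻¹ * (‖f‖ * ρ) := by field_simp
    _ ≤ ‖f‖⁻¹ * f y := by gcongr

lemma stmt7_ultralim (U : Ultrafilter ℕ) {x : ℕ → G} {M : ℝ} (hM : ∀ n, ‖x n‖ ≤ M)
    (f : G →L[ℝ] ℝ) : ∃ t : ℝ, Tendsto (fun n => f (x n)) U (nhds t) := by
  have hmem : ∀ n, f (x n) ∈ Icc (-(‖f‖ * M)) (‖f‖ * M) := by
    intro n
    have h1 : |f (x n)| ≤ ‖f‖ * ‖x n‖ := f.le_opNorm (x n)
    have h2 : ‖f‖ * ‖x n‖ ≤ ‖f‖ * M := mul_le_mul_of_nonneg_left (hM n) (norm_nonneg _)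
    rw [abs_le] at h1
    exact ⟨by linarith [h1.1], by linarith [h1.2]⟩
  have hle : (Ultrafilter.map (fun n => f (x n)) U : Filter ℝ) ≤
      𝓟 (Icc (-(‖f‖ * M)) (‖f‖ * M)) := by
    rw [le_principal_iff]
    exact Filter.mem_map.2 (by exact Filter.univ_mem' hmem)
  obtain ⟨t, _, ht⟩ := (isCompact_Icc (a := -(‖f‖ * M)) (b := ‖f‖ * M)).ultrafilter_le_nhds
    (Ultrafilter.map (fun n => f (x n)) U) hle
  exact ⟨t, ht⟩



lemma stmt7_weakUltraLimit [UniformConvexSpace G] [CompleteSpace G]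
    (U : Ultrafilter ℕ) (x : ℕ → G) {M : ℝ} (hM : ∀ n, ‖x n‖ ≤ M) :
    ∃ g ∈ closure (convexHull ℝ (Set.range x)),
      ∀ f : G →L[ℝ] ℝ, Tendsto (fun n => f (x n)) (U : Filter ℕ) (nhds (f g)) := by
  choose Λ hΛ using stmt7_ultralim U hM
  set T : Set ℝ := {t | ∃ f : G →L[ℝ] ℝ, ‖f‖ ≤ 1 ∧ Λ f = t} with hTdef
  have hΛ0 : Λ 0 = 0 := by
    have h1 : Tendsto (fun n => (0 : G →L[ℝ] ℝ) (x n)) (U : Filter ℕ) (nhds (0:ℝ)) := by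
      simpa using (tendsto_const_nhds : Tendsto (fun _ : ℕ => (0:ℝ)) (U : Filter ℕ) _)
    exact tendsto_nhds_unique (hΛ 0) h1
  have hT0 : (0:ℝ) ∈ T := ⟨0, by simp, hΛ0⟩
  have hTne : T.Nonempty := ⟨0, hT0⟩
  have hM0 : 0 ≤ M := le_trans (norm_nonneg (x 0)) (hM 0)
  have hTbdd : BddAbove T := by
    refine ⟨M, fun t ht => ?_⟩
    obtain ⟨f, hf1, hf2⟩ := ht
    rw [← hf2]
    refine le_of_tendsto (hΛ f) (Filter.Eventually.of_forall fun n => ?_)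
    calc f (x n) ≤ |f (x n)| := le_abs_self _
    _ ≤ ‖f‖ * ‖x n‖ := f.le_opNorm _
    _ ≤ 1 * M := mul_le_mul hf1 (hM n) (norm_nonneg _) zero_le_one
    _ = M := one_mul M
  set r := sSup T with hrdef
  have hr0 : 0 ≤ r := le_csSup hTbdd hT0
  have hrT : ∀ t ∈ T, t ≤ r := fun t ht => le_csSup hTbdd ht
  -- key nonemptiness of small-norm points in convex hulls along U
  have hne : ∀ A ∈ U, ∀ ε : ℝ, 0 < ε → ∃ p ∈ convexHull ℝ (x '' A), ‖p‖ < r + ε := by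
    intro A hA ε hε
    by_contra hcon
    push_neg at hcon
    have hAne : (x '' A).Nonempty := (U.nonempty_of_mem hA).image x
    obtain ⟨f, hf1, hf2⟩ := stmt7_hullLB hAne (by positivity : (0:ℝ) < r + ε)
      (fun y hy => hcon y hy)
    have hΛf : r + ε ≤ Λ f := by
      refine ge_of_tendsto (hΛ f) ?_
      exact Filter.mem_of_superset hA (fun n hn => hf2 (x n) (Set.mem_image_of_mem x hn))
    have : Λ f ≤ r := hrT _ ⟨f, hf1, rfl⟩
    linarith
  -- uniform convexity data at each level k
  have huc : ∀ k : ℕ, ∃ η > 0, ∃ ε > 0, ∀ (f₀ : G →L[ℝ] ℝ), ‖f₀‖ ≤ 1 →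
      ∀ z w : G, ‖z‖ ≤ r + ε → ‖w‖ ≤ r + ε →
        r - η ≤ f₀ z → r - η ≤ f₀ w → ‖z - w‖ ≤ 1/(k+1) :=
    fun k => stmt7_ucDiam hr0 (by positivity)
  choose η hη ε hε H using huc
  -- norming functionals
  have hf₀ex : ∀ k : ℕ, ∃ f₀ : G →L[ℝ] ℝ, ‖f₀‖ ≤ 1 ∧ r - η k < Λ f₀ := by
    intro k
    obtain ⟨t, htT, htlt⟩ := exists_lt_of_lt_csSup hTne
      (show r - η k < r by linarith [hη k])
    obtain ⟨f, hf1, hf2⟩ := htT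
    exact ⟨f, hf1, by rw [hf2]; exact htlt⟩
  choose f₀ hf₀1 hf₀2 using hf₀ex
  -- slab sets
  set A : ℕ → Set ℕ := fun k => {n | ∀ j ≤ k, r - η j ≤ f₀ j (x n)} with hAdef
  have hAU : ∀ k, A k ∈ U := by
    intro k
    have h1 : ∀ j, {n | r - η j ≤ f₀ j (x n)} ∈ U := by
      intro j
      exact (hΛ (f₀ j)).eventually (eventually_ge_nhds (hf₀2 j))
    have h2 : ∀ᶠ n in (U : Filter ℕ), ∀ j ∈ Finset.range (k+1), r - η j ≤ f₀ j (x n) :=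
      (Filter.eventually_all_finset _).2 (fun j _ => h1 j)
    refine Filter.mem_of_superset h2 (fun n hn j hj => hn j ?_)
    exact Finset.mem_range.2 (Nat.lt_succ_of_le hj)
  -- minimum of ε over levels ≤ k
  set εm : ℕ → ℝ := fun k => (Finset.range (k+1)).inf' (by simp) ε with hεmdef
  have hεmpos : ∀ k, 0 < εm k := by
    intro k
    rw [hεmdef]
    simp only [Finset.lt_inf'_iff]
    exact fun j _ => hε j
  have hεmle : ∀ j k, j ≤ k → εm k ≤ ε j := by
    intro j k hjk
    exact Finset.inf'_le _ (Finset.mem_range.2 (Nat.lt_succ_of_le hjk))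
  -- the approximating points
  have hp : ∀ k : ℕ, ∃ p ∈ convexHull ℝ (x '' A k), ‖p‖ < r + εm k :=
    fun k => hne (A k) (hAU k) (εm k) (hεmpos k)
  choose p hp1 hp2 using hp
  -- slab control on hulls
  have hslab : ∀ k j, j ≤ k → ∀ q ∈ convexHull ℝ (x '' A k), r - η j ≤ f₀ j q := by
    intro k j hjk q hq
    refine stmt7_hullGE (f₀ j) ?_ q hq
    rintro y ⟨n, hn, rfl⟩
    exact hn j hjk
  -- pairwise closeness
  have hclose : ∀ j k l, j ≤ k → j ≤ l →
      ∀ qk ∈ convexHull ℝ (x '' A k), ∀ ql ∈ convexHull ℝ (x '' A l),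
      ‖qk‖ < r + εm k → ‖ql‖ < r + εm l → ‖qk - ql‖ ≤ 1/(j+1) := by
    intro j k l hjk hjl qk hqk ql hql hqknorm hqlnorm
    refine H j (f₀ j) (hf₀1 j) qk ql ?_ ?_ (hslab k j hjk qk hqk) (hslab l j hjl ql hql)
    · exact le_of_lt (lt_of_lt_of_le hqknorm (by linarith [hεmle j k hjk]))
    · exact le_of_lt (lt_of_lt_of_le hqlnorm (by linarith [hεmle j l hjl]))
  have hcauchy : CauchySeq p := by
    refine cauchySeq_of_le_tendsto_0 (fun N => 1/(N+1)) (fun n m N hNn hNm => ?_) ?_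
    · rw [dist_eq_norm]
      exact hclose N n m hNn hNm (p n) (hp1 n) (p m) (hp1 m) (hp2 n) (hp2 m)
    · exact tendsto_one_div_add_atTop_nhds_zero_nat
  obtain ⟨g, hg⟩ := cauchySeq_tendsto_of_complete hcauchy
  have hgmem : g ∈ closure (convexHull ℝ (Set.range x)) := by
    refine mem_closure_of_tendsto hg (Filter.Eventually.of_forall fun k => ?_)
    exact convexHull_mono (Set.image_subset_range x (A k)) (hp1 k)
  refine ⟨g, hgmem, fun f => ?_⟩
  -- it remains to show f g = Λ f
  have heq : f g = Λ f := by
    have hcl : ∀ ε' : ℝ, 0 < ε' → |f g - Λ f| ≤ ε' := by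
      intro ε' hε'
      set B : Set ℕ := {n | |f (x n) - Λ f| ≤ ε'} with hBdef
      have hBU : B ∈ U := by
        have := (hΛ f).eventually (eventually_abs_sub_lt (Λ f) hε')
        refine Filter.mem_of_superset this (fun n hn => ?_)
        simp only [hBdef, Set.mem_setOf_eq]
        exact le_of_lt hn
      have hq : ∀ k : ℕ, ∃ q ∈ convexHull ℝ (x '' (A k ∩ B)), ‖q‖ < r + εm k :=
        fun k => hne (A k ∩ B) (Filter.inter_mem (hAU k) hBU) (εm k) (hεmpos k)
      choose q hq1 hq2 using hq
      have hq1' : ∀ k, q k ∈ convexHull ℝ (x '' A k) :=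
        fun k => convexHull_mono (Set.image_mono (Set.inter_subset_left)) (hq1 k)
      have hqp : ∀ k, ‖q k - p k‖ ≤ 1/(k+1) :=
        fun k => hclose k k k le_rfl le_rfl (q k) (hq1' k) (p k) (hp1 k) (hq2 k) (hp2 k)
      have hqtend : Tendsto q atTop (nhds g) := by
        refine Filter.Tendsto.congr_dist (f₁ := p) hg ?_
        refine squeeze_zero (fun k => dist_nonneg) (fun k => ?_) tendsto_one_div_add_atTop_nhds_zero_nat
        rw [dist_comm, dist_eq_norm]
        exact hqp k
      have hfq : ∀ k, f (q k) ∈ Icc (Λ f - ε') (Λ f + ε') := by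
        intro k
        refine stmt7_hullIcc f ?_ (q k) (hq1 k)
        rintro y ⟨n, hn, rfl⟩
        have := hn.2
        simp only [hBdef, Set.mem_setOf_eq] at this
        rw [abs_le] at this
        exact ⟨by linarith [this.1], by linarith [this.2]⟩
      have hftend : Tendsto (fun k => f (q k)) atTop (nhds (f g)) :=
        (f.continuous.tendsto g).comp hqtend
      have h1 : Λ f - ε' ≤ f g :=
        ge_of_tendsto hftend (Filter.Eventually.of_forall fun k => (hfq k).1)
      have h2 : f g ≤ Λ f + ε' :=
        le_of_tendsto hftend (Filter.Eventually.of_forall fun k => (hfq k).2)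
      rw [abs_le]
      exact ⟨by linarith, by linarith⟩
    by_contra hne'
    have habs : 0 < |f g - Λ f| := abs_pos.2 (sub_ne_zero.2 hne')
    have := hcl (|f g - Λ f|/2) (by linarith)
    linarith
  rw [heq]
  exact hΛ f

lemma stmt7_sepFamily {D : Set G} (hD : IsSeparable D) (hDne : D.Nonempty) :
    ∃ F : ℕ → (G →L[ℝ] ℝ), ∀ u ∈ D, ∀ v ∈ D, (∀ i, F i u = F i v) → u = v := by
  obtain ⟨t, htc, htsub⟩ := hD
  have htne : t.Nonempty := by
    rcases hDne with ⟨u, hu⟩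
    rcases Set.eq_empty_or_nonempty t with rfl | h
    · rw [closure_empty] at htsub
      exact absurd (htsub hu) (Set.notMem_empty u)
    · exact h
  obtain ⟨d, hd⟩ := htc.exists_eq_range htne
  rw [hd] at htsub
  classical
  set F : ℕ → (G →L[ℝ] ℝ) := fun i =>
    if h : d (Nat.unpair i).1 - d (Nat.unpair i).2 = 0 then 0
    else Classical.choose (exists_dual_vector ℝ _ (norm_ne_zero_iff.2 h)) with hFdef
  refine ⟨F, fun u hu v hv hFeq => ?_⟩
  by_contra hneq
  have hd0 : 0 < ‖u - v‖ := norm_pos_iff.2 (sub_ne_zero.2 hneq)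
  obtain ⟨bu, hbu1, hbu2⟩ := Metric.mem_closure_iff.1 (htsub hu) (‖u - v‖/4) (by linarith)
  obtain ⟨bv, hbv1, hbv2⟩ := Metric.mem_closure_iff.1 (htsub hv) (‖u - v‖/4) (by linarith)
  obtain ⟨j, rfl⟩ := hbu1
  obtain ⟨k, rfl⟩ := hbv1
  rw [dist_eq_norm] at hbu2 hbv2
  have hjk : 0 < ‖d j - d k‖ := by
    have h1 : ‖u - v‖ ≤ ‖u - d j‖ + ‖d j - d k‖ + ‖d k - v‖ := by
      calc ‖u - v‖ = ‖(u - d j) + (d j - d k) + (d k - v)‖ := by abel_nf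
      _ ≤ ‖(u - d j) + (d j - d k)‖ + ‖d k - v‖ := norm_add_le _ _
      _ ≤ ‖u - d j‖ + ‖d j - d k‖ + ‖d k - v‖ := by
            gcongr
            exact norm_add_le _ _
    have h2 : ‖d k - v‖ < ‖u - v‖/4 := by rw [norm_sub_rev]; exact hbv2
    linarith
  have hjkne : d j - d k ≠ 0 := by
    intro h0
    rw [h0] at hjk
    simp at hjk
  set i := Nat.pair j k with hidef
  have hui : (Nat.unpair i).1 = j := by rw [hidef, Nat.unpair_pair]
  have hvi : (Nat.unpair i).2 = k := by rw [hidef, Nat.unpair_pair]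
  have hFi : F i = Classical.choose (exists_dual_vector ℝ (d j - d k) (norm_ne_zero_iff.2 hjkne)) := by
    rw [hFdef]
    simp only [hui, hvi]
    rw [dif_neg hjkne]
  obtain ⟨hn1, hn2⟩ := Classical.choose_spec (exists_dual_vector ℝ (d j - d k) (norm_ne_zero_iff.2 hjkne))
  set f := Classical.choose (exists_dual_vector ℝ (d j - d k) (norm_ne_zero_iff.2 hjkne)) with hfdef
  have heval : f u - f v = f (u - d j) + f (d j - d k) + f (d k - v) := by
    simp only [map_sub]
    ring
  have hzero : f u - f v = 0 := by
    have h := hFeq i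
    rw [hFi] at h
    rw [h]
    ring
  have hb1 : |f (u - d j)| ≤ ‖u - d j‖ := by
    calc |f (u - d j)| ≤ ‖f‖ * ‖u - d j‖ := f.le_opNorm _
    _ = ‖u - d j‖ := by rw [hn1, one_mul]
  have hb2 : |f (d k - v)| ≤ ‖d k - v‖ := by
    calc |f (d k - v)| ≤ ‖f‖ * ‖d k - v‖ := f.le_opNorm _
    _ = ‖d k - v‖ := by rw [hn1, one_mul]
  have hfd : f (d j - d k) = ‖d j - d k‖ := hn2
  have hlow : ‖u - v‖/2 < ‖d j - d k‖ := by
    have h1 : ‖d j - d k‖ ≥ ‖u - v‖ - ‖u - d j‖ - ‖d k - v‖ := by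
      have : ‖u - v‖ ≤ ‖u - d j‖ + ‖d j - d k‖ + ‖d k - v‖ := by
        calc ‖u - v‖ = ‖(u - d j) + (d j - d k) + (d k - v)‖ := by abel_nf
        _ ≤ ‖(u - d j) + (d j - d k)‖ + ‖d k - v‖ := norm_add_le _ _
        _ ≤ ‖u - d j‖ + ‖d j - d k‖ + ‖d k - v‖ := by
              gcongr
              exact norm_add_le _ _
      linarith
    have h2 : ‖d k - v‖ < ‖u - v‖/4 := by rw [norm_sub_rev]; exact hbv2
    linarith
  have h2 : ‖d k - v‖ < ‖u - v‖/4 := by rw [norm_sub_rev]; exact hbv2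
  have habs1 : f (u - d j) ≥ -(‖u - v‖/4) := by
    have := (abs_le.1 hb1).1
    linarith
  have habs2 : f (d k - v) ≥ -(‖u - v‖/4) := by
    have := (abs_le.1 hb2).1
    linarith
  rw [heval, hfd] at hzero
  linarith

lemma stmt7_weaklyConvSubseq [UniformConvexSpace G] [CompleteSpace G]
    (x : ℕ → G) {M : ℝ} (hM : ∀ n, ‖x n‖ ≤ M)
    (F : ℕ → (G →L[ℝ] ℝ))
    (hsep : ∀ u ∈ closure (convexHull ℝ (Set.range x)),
        ∀ v ∈ closure (convexHull ℝ (Set.range x)), (∀ i, F i u = F i v) → u = v)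
    (U : Ultrafilter ℕ) (hU : (U : Filter ℕ) ≤ atTop)
    {g : G} (hg : g ∈ closure (convexHull ℝ (Set.range x)))
    (hgU : ∀ f : G →L[ℝ] ℝ, Tendsto (fun n => f (x n)) (U : Filter ℕ) (nhds (f g))) :
    ∃ φ : ℕ → ℕ, StrictMono φ ∧
      ∀ f : G →L[ℝ] ℝ, Tendsto (fun k => f (x (φ k))) atTop (nhds (f g)) := by
  set P : ℕ → ℕ → Prop := fun k n => ∀ i ≤ k, |F i (x n) - F i g| < 1/(k+1) with hPdef
  have hPU : ∀ k, {n | P k n} ∈ U := by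
    intro k
    have h1 : ∀ i, {n | |F i (x n) - F i g| < 1/(k+1)} ∈ U :=
      fun i => (hgU (F i)).eventually (eventually_abs_sub_lt _ (by positivity))
    have h2 : ∀ᶠ n in (U : Filter ℕ), ∀ i ∈ Finset.range (k+1), |F i (x n) - F i g| < 1/(k+1) :=
      (Filter.eventually_all_finset _).2 (fun i _ => h1 i)
    refine Filter.mem_of_superset h2 (fun n hn i hi => hn i ?_)
    exact Finset.mem_range.2 (Nat.lt_succ_of_le hi)
  have hfreq : ∀ k, ∃ᶠ n in atTop, P k n := by
    intro k
    rw [Filter.frequently_atTop]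
    intro N
    have hmem : {n | P k n} ∩ {n | N ≤ n} ∈ U :=
      Filter.inter_mem (hPU k) (hU (Filter.mem_atTop N))
    obtain ⟨n, hn1, hn2⟩ := U.nonempty_of_mem hmem
    exact ⟨n, hn2, hn1⟩
  obtain ⟨φ, hφmono, hφP⟩ := Filter.extraction_forall_of_frequently hfreq
  have hFi : ∀ i, Tendsto (fun k => F i (x (φ k))) atTop (nhds (F i g)) := by
    intro i
    rw [tendsto_iff_dist_tendsto_zero]
    refine squeeze_zero' (Filter.Eventually.of_forall fun k => dist_nonneg) ?_
      tendsto_one_div_add_atTop_nhds_zero_nat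
    filter_upwards [Filter.eventually_ge_atTop i] with k hk
    rw [Real.dist_eq]
    exact le_of_lt (hφP k i hk)
  refine ⟨φ, hφmono, fun f => ?_⟩
  rw [Filter.tendsto_iff_ultrafilter]
  intro W hW
  obtain ⟨h, hhmem, hhW⟩ := stmt7_weakUltraLimit W (fun k => x (φ k)) (fun k => hM (φ k))
  have hhmem' : h ∈ closure (convexHull ℝ (Set.range x)) := by
    refine closure_mono (convexHull_mono ?_) hhmem
    rintro y ⟨k, rfl⟩
    exact ⟨φ k, rfl⟩
  have hFeq : ∀ i, F i h = F i g :=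
    fun i => tendsto_nhds_unique (hhW (F i)) ((hFi i).mono_left hW)
  have : h = g := hsep h hhmem' g hg hFeq
  rw [← this]
  exact hhW f

end Aux

/-- in a uniformly convex Banach space satisfying Opial's condition,
the iteration (1.2) converges weakly to a fixed point of the nonexpansive map `S`. -/
theorem stmt_7 {G : Type*} [NormedAddCommGroup G] [NormedSpace ℝ G] [CompleteSpace G]
    [UniformConvexSpace G]
    (hOpial : ∀ (x : ℕ → G) (p : G),
      (∀ f : G →L[ℝ] ℝ, Tendsto (fun n => f (x n)) atTop (nhds (f p))) →
        ∀ y : G, y ≠ p →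
          limsup (fun n => ‖x n - p‖) atTop < limsup (fun n => ‖x n - y‖) atTop)
    (J : Set G) (hJne : J.Nonempty) (hJcl : IsClosed J) (hJconv : Convex ℝ J)
    (S : G → G) (hSJ : ∀ x ∈ J, S x ∈ J)
    (hS : ∀ u ∈ J, ∀ v ∈ J, ‖S u - S v‖ ≤ ‖u - v‖)
    (hFne : ∃ q ∈ J, S q = q)
    (δ : ℕ → ℝ) (w v : ℝ) (hw : 0 < w) (hv : v < 1)
    (hδ : ∀ n, w ≤ δ n ∧ δ n ≤ v)
    (a b c : ℕ → G) (hc1 : c 1 ∈ J)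
    (ha : ∀ n, 1 ≤ n → a n = S (c n))
    (hb : ∀ n, 1 ≤ n → b n = (1 - δ n) • a n + δ n • S (a n))
    (hc : ∀ n, 1 ≤ n → c (n + 1) = S (b n)) :
    ∃ q, q ∈ J ∧ S q = q ∧
      ∀ f : G →L[ℝ] ℝ, Tendsto (fun n => f (c n)) atTop (nhds (f q)) := by
  classical
  obtain ⟨q₀, hq₀J, hq₀S⟩ := hFne
  -- shifted sequences defined for all n
  set c' : ℕ → G := fun n => c (n+1) with hc'def
  set a' : ℕ → G := fun n => a (n+1) with ha'def
  set b' : ℕ → G := fun n => b (n+1) with hb'def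
  have ha' : ∀ n, a' n = S (c' n) := fun n => ha (n+1) (Nat.le_add_left 1 n)
  have hb'' : ∀ n, b' n = (1 - δ (n+1)) • a' n + δ (n+1) • S (a' n) :=
    fun n => hb (n+1) (Nat.le_add_left 1 n)
  have hc'' : ∀ n, c' (n+1) = S (b' n) := fun n => hc (n+1) (Nat.le_add_left 1 n)
  have hδ0 : ∀ n, 0 < δ n := fun n => lt_of_lt_of_le hw (hδ n).1
  have hδ1 : ∀ n, δ n < 1 := fun n => lt_of_le_of_lt (hδ n).2 hv
  -- memberships
  have hmem : ∀ n, c' n ∈ J ∧ a' n ∈ J ∧ S (a' n) ∈ J ∧ b' n ∈ J := by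
    intro n
    induction n with
    | zero =>
      have h1 : c' 0 ∈ J := hc1
      have h2 : a' 0 ∈ J := by rw [ha' 0]; exact hSJ _ h1
      have h3 : S (a' 0) ∈ J := hSJ _ h2
      have h4 : b' 0 ∈ J := by
        rw [hb'' 0]
        exact hJconv h2 h3 (by linarith [hδ1 1]) (le_of_lt (hδ0 1)) (by ring)
      exact ⟨h1, h2, h3, h4⟩
    | succ n ih =>
      have h1 : c' (n+1) ∈ J := by rw [hc'' n]; exact hSJ _ ih.2.2.2
      have h2 : a' (n+1) ∈ J := by rw [ha' (n+1)]; exact hSJ _ h1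
      have h3 : S (a' (n+1)) ∈ J := hSJ _ h2
      have h4 : b' (n+1) ∈ J := by
        rw [hb'' (n+1)]
        exact hJconv h2 h3 (by linarith [hδ1 (n+2)]) (le_of_lt (hδ0 (n+2))) (by ring)
      exact ⟨h1, h2, h3, h4⟩
  have hcJ : ∀ n, c' n ∈ J := fun n => (hmem n).1
  have haJ : ∀ n, a' n ∈ J := fun n => (hmem n).2.1
  have hSaJ : ∀ n, S (a' n) ∈ J := fun n => (hmem n).2.2.1
  have hbJ : ∀ n, b' n ∈ J := fun n => (hmem n).2.2.2
  -- Fejér chain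
  have hfejer : ∀ q, q ∈ J → S q = q → ∀ n,
      ‖c' (n+1) - q‖ ≤ ‖b' n - q‖ ∧ ‖b' n - q‖ ≤ ‖a' n - q‖ ∧
      ‖a' n - q‖ ≤ ‖c' n - q‖ ∧ ‖S (a' n) - q‖ ≤ ‖a' n - q‖ := by
    intro q hq hSq n
    have h1 : ‖a' n - q‖ ≤ ‖c' n - q‖ := by
      rw [ha' n]
      calc ‖S (c' n) - q‖ = ‖S (c' n) - S q‖ := by rw [hSq]
      _ ≤ ‖c' n - q‖ := hS _ (hcJ n) _ hq
    have h2 : ‖S (a' n) - q‖ ≤ ‖a' n - q‖ := by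
      calc ‖S (a' n) - q‖ = ‖S (a' n) - S q‖ := by rw [hSq]
      _ ≤ ‖a' n - q‖ := hS _ (haJ n) _ hq
    have h3 : b' n - q = (1 - δ (n+1)) • (a' n - q) + δ (n+1) • (S (a' n) - q) := by
      rw [hb'' n]
      module
    have h4 : ‖b' n - q‖ ≤ ‖a' n - q‖ := by
      rw [h3]
      calc ‖(1 - δ (n+1)) • (a' n - q) + δ (n+1) • (S (a' n) - q)‖
          ≤ ‖(1 - δ (n+1)) • (a' n - q)‖ + ‖δ (n+1) • (S (a' n) - q)‖ := norm_add_le _ _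
      _ = (1 - δ (n+1)) * ‖a' n - q‖ + δ (n+1) * ‖S (a' n) - q‖ := by
            rw [norm_smul, norm_smul, Real.norm_eq_abs, Real.norm_eq_abs,
              abs_of_nonneg (by linarith [hδ1 (n+1)]), abs_of_nonneg (le_of_lt (hδ0 (n+1)))]
      _ ≤ (1 - δ (n+1)) * ‖a' n - q‖ + δ (n+1) * ‖a' n - q‖ := by
            have := hδ0 (n+1)
            nlinarith [h2]
      _ = ‖a' n - q‖ := by ring
    have h5 : ‖c' (n+1) - q‖ ≤ ‖b' n - q‖ := by
      rw [hc'' n]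
      calc ‖S (b' n) - q‖ = ‖S (b' n) - S q‖ := by rw [hSq]
      _ ≤ ‖b' n - q‖ := hS _ (hbJ n) _ hq
    exact ⟨h5, h4, h1, h2⟩
  have hanti : ∀ q, q ∈ J → S q = q → Antitone (fun n => ‖c' n - q‖) := by
    intro q hq hSq
    apply antitone_nat_of_succ_le
    intro n
    obtain ⟨k1, k2, k3, _⟩ := hfejer q hq hSq n
    linarith
  -- distance limits to fixed points
  have hdistlim : ∀ q, q ∈ J → S q = q →
      Tendsto (fun n => ‖c' n - q‖) atTop (nhds (⨅ n, ‖c' n - q‖)) := by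
    intro q hq hSq
    apply tendsto_atTop_ciInf (hanti q hq hSq)
    refine ⟨0, fun t ht => ?_⟩
    obtain ⟨n, rfl⟩ := ht
    exact norm_nonneg _
  -- boundedness
  set D : ℕ → ℝ := fun n => ‖c' n - q₀‖ with hDdef
  set L : ℝ := ⨅ n, D n with hLdef
  have hDtend : Tendsto D atTop (nhds L) := hdistlim q₀ hq₀J hq₀S
  have hDanti : Antitone D := hanti q₀ hq₀J hq₀S
  have hDbddB : BddBelow (Set.range D) := by
    refine ⟨0, fun t ht => ?_⟩
    obtain ⟨n, rfl⟩ := ht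
    exact norm_nonneg _
  have hL0 : 0 ≤ L := le_ciInf fun n => norm_nonneg _
  have hLleD : ∀ n, L ≤ D n := fun n => ciInf_le hDbddB n
  have hDD0 : ∀ n, D n ≤ D 0 := fun n => hDanti (Nat.zero_le n)
  set M : ℝ := ‖q₀‖ + D 0 with hMdef
  have hMx : ∀ n, ‖c' n‖ ≤ M := by
    intro n
    calc ‖c' n‖ = ‖(c' n - q₀) + q₀‖ := by rw [sub_add_cancel]
    _ ≤ ‖c' n - q₀‖ + ‖q₀‖ := norm_add_le _ _
    _ ≤ D 0 + ‖q₀‖ := by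
          have := hDD0 n
          simp only [hDdef] at this ⊢
          linarith
    _ = M := by rw [hMdef]; ring
  -- squeeze: intermediate quantities tend to L
  have hDtail : Tendsto (fun n => D (n+1)) atTop (nhds L) :=
    (Filter.tendsto_add_atTop_iff_nat 1).2 hDtend
  have hbq₀ : Tendsto (fun n => ‖b' n - q₀‖) atTop (nhds L) := by
    refine tendsto_of_tendsto_of_tendsto_of_le_of_le hDtail hDtend
      (fun n => (hfejer q₀ hq₀J hq₀S n).1) (fun n => ?_)
    obtain ⟨_, k2, k3, _⟩ := hfejer q₀ hq₀J hq₀S n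
    exact le_trans k2 k3
  have haq₀ : Tendsto (fun n => ‖a' n - q₀‖) atTop (nhds L) := by
    refine tendsto_of_tendsto_of_tendsto_of_le_of_le hDtail hDtend (fun n => ?_)
      (fun n => (hfejer q₀ hq₀J hq₀S n).2.2.1)
    obtain ⟨k1, k2, _, _⟩ := hfejer q₀ hq₀J hq₀S n
    exact le_trans k1 k2
  -- asymptotic regularity for a'
  have hareg : Tendsto (fun n => ‖a' n - S (a' n)‖) atTop (nhds 0) := by
    by_contra hcon
    rw [Metric.tendsto_atTop] at hcon
    push_neg at hcon
    obtain ⟨ε₁, hε₁, hfr⟩ := hcon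
    have hfr' : ∀ N, ∃ n ≥ N, ε₁ ≤ ‖a' n - S (a' n)‖ := by
      intro N
      obtain ⟨n, hn1, hn2⟩ := hfr N
      refine ⟨n, hn1, ?_⟩
      rw [Real.dist_0_eq_abs, abs_of_nonneg (norm_nonneg _)] at hn2
      exact hn2
    rcases eq_or_lt_of_le hL0 with hL | hL
    · -- L = 0 : strong convergence, contradiction with ε₁
      have htend0 : Tendsto (fun n => ‖a' n - S (a' n)‖) atTop (nhds 0) := by
        have hb2 : ∀ n, ‖a' n - S (a' n)‖ ≤ 2 * D n := by
          intro n
          obtain ⟨_, _, k3, k4⟩ := hfejer q₀ hq₀J hq₀S n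
          calc ‖a' n - S (a' n)‖ = ‖(a' n - q₀) - (S (a' n) - q₀)‖ := by abel_nf
          _ ≤ ‖a' n - q₀‖ + ‖S (a' n) - q₀‖ := norm_sub_le _ _
          _ ≤ D n + D n := by
                have h5 : ‖a' n - q₀‖ ≤ D n := k3
                have h6 : ‖S (a' n) - q₀‖ ≤ D n := le_trans k4 k3
                linarith
          _ = 2 * D n := by ring
        have h2D : Tendsto (fun n => 2 * D n) atTop (nhds 0) := by
          have := hDtend.const_mul 2
          rw [← hL] at this
          simpa using this
        exact squeeze_zero (fun n => norm_nonneg _) hb2 h2D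
      rw [Metric.tendsto_atTop] at htend0
      obtain ⟨N, hN⟩ := htend0 ε₁ hε₁
      obtain ⟨n, hn1, hn2⟩ := hfr' N
      have := hN n hn1
      rw [Real.dist_0_eq_abs, abs_of_nonneg (norm_nonneg _)] at this
      linarith
    · -- L > 0 : use uniform convexity
      have hD0pos : 0 < D 0 := lt_of_lt_of_le hL (hLleD 0)
      have hε₂ : (0:ℝ) < ε₁ / (D 0 + 1) := by positivity
      obtain ⟨δ₂, hδ₂, Huc⟩ := exists_forall_closed_ball_dist_add_le_two_sub G hε₂
      set m₀ : ℝ := min w (1 - v) with hm₀def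
      have hm₀ : 0 < m₀ := lt_min hw (by linarith)
      obtain ⟨φ, hφ, hφP⟩ := Filter.extraction_of_frequently_atTop
        ((Filter.frequently_atTop).2 hfr')
      have hkey : ∀ k, D (φ k + 1) ≤ (1 - m₀ * δ₂) * D (φ k) := by
        intro k
        set n := φ k with hndef
        have hDn : 0 < D n := lt_of_lt_of_le hL (hLleD n)
        set X := a' n - q₀ with hXdef
        set Y := S (a' n) - q₀ with hYdef
        obtain ⟨k1, k2, k3, k4⟩ := hfejer q₀ hq₀J hq₀S n
        have hXn : ‖X‖ ≤ D n := k3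
        have hYn : ‖Y‖ ≤ D n := le_trans k4 k3
        have hXY : ε₁ ≤ ‖X - Y‖ := by
          have : X - Y = a' n - S (a' n) := by rw [hXdef, hYdef]; abel
          rw [this]
          exact hφP k
        have hXh : ‖(D n)⁻¹ • X‖ ≤ 1 := by
          rw [norm_smul, Real.norm_eq_abs, abs_of_pos (inv_pos.2 hDn), inv_mul_eq_div]
          exact (div_le_one hDn).2 hXn
        have hYh : ‖(D n)⁻¹ • Y‖ ≤ 1 := by
          rw [norm_smul, Real.norm_eq_abs, abs_of_pos (inv_pos.2 hDn), inv_mul_eq_div]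
          exact (div_le_one hDn).2 hYn
        have hXYh : ε₁ / (D 0 + 1) ≤ ‖(D n)⁻¹ • X - (D n)⁻¹ • Y‖ := by
          rw [← smul_sub, norm_smul, Real.norm_eq_abs, abs_of_pos (inv_pos.2 hDn),
            inv_mul_eq_div]
          rw [le_div_iff₀ hDn]
          calc ε₁ / (D 0 + 1) * D n ≤ ε₁ / (D 0 + 1) * (D 0 + 1) := by
                have := hDD0 n
                gcongr
                linarith
          _ = ε₁ := div_mul_cancel₀ _ (by positivity)
          _ ≤ ‖X - Y‖ := hXY
        have hsum := Huc hXh hYh hXYh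
        have hsum' : ‖X + Y‖ ≤ (2 - δ₂) * D n := by
          have h0 : ‖(D n)⁻¹ • X + (D n)⁻¹ • Y‖ = ‖X + Y‖ / D n := by
            rw [← smul_add, norm_smul, Real.norm_eq_abs, abs_of_pos (inv_pos.2 hDn),
              inv_mul_eq_div]
          rw [h0, div_le_iff₀ hDn] at hsum
          linarith [hsum]
        set t := δ (n+1) with htdef
        have htw : w ≤ t := (hδ (n+1)).1
        have htv : t ≤ v := (hδ (n+1)).2
        have htb : ‖b' n - q₀‖ = ‖(1 - t) • X + t • Y‖ := by
          have h3 : b' n - q₀ = (1 - t) • X + t • Y := by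
            rw [hb'' n, hXdef, hYdef]
            module
          rw [h3]
        have hcomb : ‖(1 - t) • X + t • Y‖ ≤ (1 - m₀ * δ₂) * D n := by
          rcases le_or_gt t (1/2) with hhalf | hhalf
          · have hid : (1 - t) • X + t • Y = (1 - 2*t) • X + t • (X + Y) := by module
            rw [hid]
            calc ‖(1 - 2*t) • X + t • (X + Y)‖
                ≤ ‖(1 - 2*t) • X‖ + ‖t • (X + Y)‖ := norm_add_le _ _
            _ = (1 - 2*t) * ‖X‖ + t * ‖X + Y‖ := by
                  rw [norm_smul, norm_smul, Real.norm_eq_abs, Real.norm_eq_abs,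
                    abs_of_nonneg (by linarith), abs_of_nonneg (by linarith [hw])]
            _ ≤ (1 - 2*t) * D n + t * ((2 - δ₂) * D n) := by
                  have hw' : 0 < t := lt_of_lt_of_le hw htw
                  have := mul_le_mul_of_nonneg_left hsum' (le_of_lt hw')
                  nlinarith [hXn]
            _ = (1 - t * δ₂) * D n := by ring
            _ ≤ (1 - m₀ * δ₂) * D n := by
                  have hm₀t : m₀ ≤ t := le_trans (min_le_left _ _) htw
                  nlinarith [mul_nonneg (mul_nonneg (sub_nonneg.2 hm₀t) hδ₂.le) hDn.le]
          · have hid : (1 - t) • X + t • Y = (2*t - 1) • Y + (1 - t) • (X + Y) := by module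
            rw [hid]
            calc ‖(2*t - 1) • Y + (1 - t) • (X + Y)‖
                ≤ ‖(2*t - 1) • Y‖ + ‖(1 - t) • (X + Y)‖ := norm_add_le _ _
            _ = (2*t - 1) * ‖Y‖ + (1 - t) * ‖X + Y‖ := by
                  rw [norm_smul, norm_smul, Real.norm_eq_abs, Real.norm_eq_abs,
                    abs_of_nonneg (by linarith), abs_of_nonneg (by linarith [hv])]
            _ ≤ (2*t - 1) * D n + (1 - t) * ((2 - δ₂) * D n) := by
                  have hv' : t < 1 := lt_of_le_of_lt htv hv
                  have := mul_le_mul_of_nonneg_left hsum' (by linarith : (0:ℝ) ≤ 1 - t)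
                  nlinarith [hYn]
            _ = (1 - (1 - t) * δ₂) * D n := by ring
            _ ≤ (1 - m₀ * δ₂) * D n := by
                  have hm₀t : m₀ ≤ 1 - t := le_trans (min_le_right _ _) (by linarith)
                  nlinarith [mul_nonneg (mul_nonneg (sub_nonneg.2 hm₀t) hδ₂.le) hDn.le]
        calc D (φ k + 1) ≤ ‖b' n - q₀‖ := k1
        _ ≤ (1 - m₀ * δ₂) * D n := by rw [htb]; exact hcomb
      have hlim1 : Tendsto (fun k => D (φ k + 1)) atTop (nhds L) :=
        hDtail.comp hφ.tendsto_atTop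
      have hlim2 : Tendsto (fun k => (1 - m₀ * δ₂) * D (φ k)) atTop
          (nhds ((1 - m₀ * δ₂) * L)) :=
        (hDtend.comp hφ.tendsto_atTop).const_mul _
      have hLle : L ≤ (1 - m₀ * δ₂) * L := le_of_tendsto_of_tendsto' hlim1 hlim2 hkey
      nlinarith [mul_pos (mul_pos hm₀ hδ₂) hL]
  -- asymptotic regularity for c'
  have hcreg : Tendsto (fun n => ‖c' n - S (c' n)‖) atTop (nhds 0) := by
    rw [← Filter.tendsto_add_atTop_iff_nat 1]
    have hbd : ∀ n, ‖c' (n+1) - S (c' (n+1))‖ ≤ 5 * ‖a' n - S (a' n)‖ := by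
      intro n
      set e := ‖a' n - S (a' n)‖ with hedef
      have he0 : 0 ≤ e := norm_nonneg _
      have h1 : ‖b' n - a' n‖ ≤ e := by
        have hid : b' n - a' n = δ (n+1) • (S (a' n) - a' n) := by
          rw [hb'' n]; module
        rw [hid, norm_smul, Real.norm_eq_abs, abs_of_nonneg (le_of_lt (hδ0 (n+1)))]
        calc δ (n+1) * ‖S (a' n) - a' n‖ ≤ 1 * ‖S (a' n) - a' n‖ := by
              have := hδ1 (n+1)
              have := norm_nonneg (S (a' n) - a' n)
              nlinarith
        _ = e := by rw [one_mul, norm_sub_rev]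
      have h2 : ‖c' (n+1) - a' n‖ ≤ 2 * e := by
        calc ‖c' (n+1) - a' n‖ = ‖(S (b' n) - S (a' n)) + (S (a' n) - a' n)‖ := by
              rw [hc'' n]; abel_nf
        _ ≤ ‖S (b' n) - S (a' n)‖ + ‖S (a' n) - a' n‖ := norm_add_le _ _
        _ ≤ ‖b' n - a' n‖ + e := by
              have := hS _ (hbJ n) _ (haJ n)
              rw [norm_sub_rev (S (a' n)) (a' n)]
              linarith
        _ ≤ 2 * e := by linarith
      calc ‖c' (n+1) - S (c' (n+1))‖
          = ‖(c' (n+1) - a' n) + (a' n - S (a' n)) + (S (a' n) - S (c' (n+1)))‖ := by abel_nf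
      _ ≤ ‖(c' (n+1) - a' n) + (a' n - S (a' n))‖ + ‖S (a' n) - S (c' (n+1))‖ :=
            norm_add_le _ _
      _ ≤ ‖c' (n+1) - a' n‖ + ‖a' n - S (a' n)‖ + ‖S (a' n) - S (c' (n+1))‖ := by
            have := norm_add_le (c' (n+1) - a' n) (a' n - S (a' n))
            linarith
      _ ≤ 2 * e + e + ‖a' n - c' (n+1)‖ := by
            have := hS _ (haJ n) _ (hcJ (n+1))
            linarith [h2]
      _ ≤ 2 * e + e + 2 * e := by
            rw [norm_sub_rev]
            linarith [h2]
      _ = 5 * e := by ring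
    have h5e : Tendsto (fun n => 5 * ‖a' n - S (a' n)‖) atTop (nhds 0) := by
      have := hareg.const_mul 5
      simpa using this
    exact squeeze_zero (fun n => norm_nonneg _) hbd h5e
  -- the separable closed convex hull
  set K : Set G := closure (convexHull ℝ (Set.range c')) with hKdef
  have hKJ : K ⊆ J := by
    rw [hKdef]
    refine closure_minimal (convexHull_min ?_ hJconv) hJcl
    rintro y ⟨n, rfl⟩
    exact hcJ n
  have hKsep : IsSeparable K := by
    have h1 : IsSeparable (closure (Submodule.span ℝ (Set.range c') : Set G)) :=
      ((Set.countable_range c').isSeparable.span).closure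
    refine h1.mono ?_
    rw [hKdef]
    exact closure_mono (convexHull_min Submodule.subset_span (Submodule.span ℝ _).convex)
  have hKne : K.Nonempty :=
    ⟨c' 0, subset_closure (subset_convexHull ℝ _ (Set.mem_range_self 0))⟩
  obtain ⟨F, hsepF⟩ := stmt7_sepFamily hKsep hKne
  -- demiclosedness: weak subsequential limits in K are fixed points
  have hfixed : ∀ g, g ∈ K →
      (∃ φ : ℕ → ℕ, StrictMono φ ∧
        ∀ f : G →L[ℝ] ℝ, Tendsto (fun k => f (c' (φ k))) atTop (nhds (f g))) → S g = g := by
    intro g hgK ⟨φ, hφ, hweak⟩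
    by_contra hSg
    have hgJ : g ∈ J := hKJ hgK
    set M₃ : ℝ := M + ‖g‖ + ‖S g‖ with hM₃def
    have hbound1 : ∀ k, ‖c' (φ k) - g‖ ∈ Set.Icc 0 M₃ := by
      intro k
      refine ⟨norm_nonneg _, ?_⟩
      calc ‖c' (φ k) - g‖ ≤ ‖c' (φ k)‖ + ‖g‖ := norm_sub_le _ _
      _ ≤ M + ‖g‖ := by linarith [hMx (φ k)]
      _ ≤ M₃ := by rw [hM₃def]; linarith [norm_nonneg (S g)]
    obtain ⟨α, _, ψ₁, hψ₁, hα⟩ := tendsto_subseq_of_bounded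
      (Metric.isBounded_Icc 0 M₃) hbound1
    have hbound2 : ∀ k, ‖c' (φ (ψ₁ k)) - S g‖ ∈ Set.Icc 0 M₃ := by
      intro k
      refine ⟨norm_nonneg _, ?_⟩
      calc ‖c' (φ (ψ₁ k)) - S g‖ ≤ ‖c' (φ (ψ₁ k))‖ + ‖S g‖ := norm_sub_le _ _
      _ ≤ M + ‖S g‖ := by linarith [hMx (φ (ψ₁ k))]
      _ ≤ M₃ := by rw [hM₃def]; linarith [norm_nonneg g]
    obtain ⟨β, _, ψ₂, hψ₂, hβ⟩ := tendsto_subseq_of_bounded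
      (Metric.isBounded_Icc 0 M₃) hbound2
    set θ : ℕ → ℕ := fun k => φ (ψ₁ (ψ₂ k)) with hθdef
    have hθmono : StrictMono θ := hφ.comp (hψ₁.comp hψ₂)
    set y : ℕ → G := fun k => c' (θ k) with hydef
    have hyweak : ∀ f : G →L[ℝ] ℝ, Tendsto (fun k => f (y k)) atTop (nhds (f g)) :=
      fun f => (hweak f).comp ((hψ₁.comp hψ₂).tendsto_atTop)
    have hαy : Tendsto (fun k => ‖y k - g‖) atTop (nhds α) := by
      have := hα.comp hψ₂.tendsto_atTop
      exact this
    have hβy : Tendsto (fun k => ‖y k - S g‖) atTop (nhds β) := hβ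
    have hop := hOpial y g hyweak (S g) hSg
    rw [hαy.limsup_eq, hβy.limsup_eq] at hop
    have hble : β ≤ α := by
      have hptwise : ∀ k, ‖y k - S g‖ ≤ ‖y k - S (y k)‖ + ‖y k - g‖ := by
        intro k
        calc ‖y k - S g‖ = ‖(y k - S (y k)) + (S (y k) - S g)‖ := by abel_nf
        _ ≤ ‖y k - S (y k)‖ + ‖S (y k) - S g‖ := norm_add_le _ _
        _ ≤ ‖y k - S (y k)‖ + ‖y k - g‖ := by
              have := hS _ (hcJ (θ k)) _ hgJ
              linarith
      have hrhs : Tendsto (fun k => ‖y k - S (y k)‖ + ‖y k - g‖) atTop (nhds (0 + α)) :=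
        (hcreg.comp hθmono.tendsto_atTop).add hαy
      rw [zero_add] at hrhs
      exact le_of_tendsto_of_tendsto' hβy hrhs hptwise
    linarith
  -- ultrafilter limits: existence of fixed weak limits along any ultrafilter
  have hultra : ∀ U : Ultrafilter ℕ, (U : Filter ℕ) ≤ atTop →
      ∃ g, g ∈ K ∧ S g = g ∧
        (∀ f : G →L[ℝ] ℝ, Tendsto (fun n => f (c' n)) (U : Filter ℕ) (nhds (f g))) ∧
        (∃ φ : ℕ → ℕ, StrictMono φ ∧
          ∀ f : G →L[ℝ] ℝ, Tendsto (fun k => f (c' (φ k))) atTop (nhds (f g))) := by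
    intro U hU
    obtain ⟨g, hgK, hgU⟩ := stmt7_weakUltraLimit U c' hMx
    obtain ⟨φ, hφ, hweak⟩ := stmt7_weaklyConvSubseq c' hMx F hsepF U hU hgK hgU
    exact ⟨g, hgK, hfixed g hgK ⟨φ, hφ, hweak⟩, hgU, φ, hφ, hweak⟩
  -- uniqueness of the weak subsequential fixed limit
  have huniq : ∀ g, g ∈ J → S g = g →
      (∃ φ : ℕ → ℕ, StrictMono φ ∧
        ∀ f : G →L[ℝ] ℝ, Tendsto (fun k => f (c' (φ k))) atTop (nhds (f g))) →
      ∀ g', g' ∈ J → S g' = g' →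
      (∃ φ : ℕ → ℕ, StrictMono φ ∧
        ∀ f : G →L[ℝ] ℝ, Tendsto (fun k => f (c' (φ k))) atTop (nhds (f g'))) →
      g = g' := by
    intro g hgJ hgS ⟨φ, hφ, hweak⟩ g' hg'J hg'S ⟨φ', hφ', hweak'⟩
    by_contra hne
    set Lg := ⨅ n, ‖c' n - g‖ with hLgdef
    set Lg' := ⨅ n, ‖c' n - g'‖ with hLg'def
    have hLgt : Tendsto (fun n => ‖c' n - g‖) atTop (nhds Lg) := hdistlim g hgJ hgS
    have hLg't : Tendsto (fun n => ‖c' n - g'‖) atTop (nhds Lg') := hdistlim g' hg'J hg'S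
    have hO1 : Lg < Lg' := by
      have hop := hOpial (fun k => c' (φ k)) g hweak g' (Ne.symm hne)
      have e1 : Tendsto (fun k => ‖c' (φ k) - g‖) atTop (nhds Lg) :=
        hLgt.comp hφ.tendsto_atTop
      have e2 : Tendsto (fun k => ‖c' (φ k) - g'‖) atTop (nhds Lg') :=
        hLg't.comp hφ.tendsto_atTop
      rwa [e1.limsup_eq, e2.limsup_eq] at hop
    have hO2 : Lg' < Lg := by
      have hop := hOpial (fun k => c' (φ' k)) g' hweak' g hne
      have e1 : Tendsto (fun k => ‖c' (φ' k) - g'‖) atTop (nhds Lg') :=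
        hLg't.comp hφ'.tendsto_atTop
      have e2 : Tendsto (fun k => ‖c' (φ' k) - g‖) atTop (nhds Lg) :=
        hLgt.comp hφ'.tendsto_atTop
      rwa [e1.limsup_eq, e2.limsup_eq] at hop
    linarith
  -- conclusion
  obtain ⟨z, hzK, hzS, _, hzsub⟩ := hultra (Ultrafilter.of atTop) (Ultrafilter.of_le _)
  refine ⟨z, hKJ hzK, hzS, fun f => ?_⟩
  have hc'tend : Tendsto (fun n => f (c' n)) atTop (nhds (f z)) := by
    rw [Filter.tendsto_iff_ultrafilter]
    intro W hW
    obtain ⟨g, hgK, hgS, hgW, hgsub⟩ := hultra W hW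
    have : g = z := huniq g (hKJ hgK) hgS hgsub z (hKJ hzK) hzS hzsub
    rw [← this]
    exact hgW f
  have : (fun n => f (c (n+1))) = (fun n => f (c' n)) := rfl
  exact (Filter.tendsto_add_atTop_iff_nat 1).1 (by rw [this]; exact hc'tend)
end

section
/- Let J be a nonempty closed convex subset of a uniformly convex Banach space G and S : J → J a nonexpansive mapping whose fixed point set F(S) is nonempty. Let {δₙ} satisfy 0 < w ≤ δₙ ≤ v < 1 for some constants w, v, and let {cₙ} be generated by the iteration (1.2). Then {cₙ} converges strongly to a point of F(S) if and only if liminf_{n→∞} d(cₙ, F(S)) = 0, where d(x, F(S)) = inf{‖x − q‖ : q ∈ F(S)}. -/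
open Filter

/-- the iteration (1.2) converges strongly to a fixed point of `S`
iff `liminf d(cₙ, F(S)) = 0`. -/
theorem stmt_8 {G : Type*} [NormedAddCommGroup G] [NormedSpace ℝ G] [CompleteSpace G]
    [UniformConvexSpace G]
    (J : Set G) (hJne : J.Nonempty) (hJcl : IsClosed J) (hJconv : Convex ℝ J)
    (S : G → G) (hSJ : ∀ x ∈ J, S x ∈ J)
    (hS : ∀ u ∈ J, ∀ v ∈ J, ‖S u - S v‖ ≤ ‖u - v‖)
    (hFne : ∃ q ∈ J, S q = q)
    (δ : ℕ → ℝ) (w v : ℝ) (hw : 0 < w) (hv : v < 1)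
    (hδ : ∀ n, w ≤ δ n ∧ δ n ≤ v)
    (a b c : ℕ → G) (hc1 : c 1 ∈ J)
    (ha : ∀ n, 1 ≤ n → a n = S (c n))
    (hb : ∀ n, 1 ≤ n → b n = (1 - δ n) • a n + δ n • S (a n))
    (hc : ∀ n, 1 ≤ n → c (n + 1) = S (b n)) :
    (∃ q, (q ∈ J ∧ S q = q) ∧ Tendsto c atTop (nhds q)) ↔
      liminf (fun n => Metric.infDist (c n) {q | q ∈ J ∧ S q = q}) atTop = 0 := by
  set F : Set G := {q | q ∈ J ∧ S q = q} with hFdef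
  obtain ⟨q0, hq0J, hq0S⟩ := hFne
  have hq0F : q0 ∈ F := ⟨hq0J, hq0S⟩
  have hFne' : F.Nonempty := ⟨q0, hq0F⟩
  set D : ℕ → ℝ := fun n => Metric.infDist (c n) F with hDdef
  -- membership of the iterates in J
  have hcJ : ∀ n, 1 ≤ n → c n ∈ J := by
    intro n hn
    induction n with
    | zero => omega
    | succ k ih =>
      rcases Nat.lt_or_ge k 1 with h | hk
      · have : k + 1 = 1 := by omega
        rw [this]; exact hc1
      · have hck := ih hk
        have haJ : a k ∈ J := by rw [ha k hk]; exact hSJ _ hck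
        have hbJ : b k ∈ J := by
          rw [hb k hk]
          exact hJconv haJ (hSJ _ haJ)
            (by linarith [(hδ k).2]) (by linarith [(hδ k).1]) (by ring)
        rw [hc k hk]; exact hSJ _ hbJ
  have haJ : ∀ n, 1 ≤ n → a n ∈ J := by
    intro n hn; rw [ha n hn]; exact hSJ _ (hcJ n hn)
  have hbJ : ∀ n, 1 ≤ n → b n ∈ J := by
    intro n hn
    rw [hb n hn]
    exact hJconv (haJ n hn) (hSJ _ (haJ n hn))
      (by linarith [(hδ n).2]) (by linarith [(hδ n).1]) (by ring)
  -- one-step contraction towards fixed points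
  have step : ∀ q ∈ F, ∀ n, 1 ≤ n → ‖c (n + 1) - q‖ ≤ ‖c n - q‖ := by
    rintro q ⟨hqJ, hqS⟩ n hn
    have h1 : ‖a n - q‖ ≤ ‖c n - q‖ := by
      rw [ha n hn]
      calc ‖S (c n) - q‖ = ‖S (c n) - S q‖ := by rw [hqS]
        _ ≤ ‖c n - q‖ := hS _ (hcJ n hn) _ hqJ
    have h2 : ‖S (a n) - q‖ ≤ ‖a n - q‖ := by
      calc ‖S (a n) - q‖ = ‖S (a n) - S q‖ := by rw [hqS]
        _ ≤ ‖a n - q‖ := hS _ (haJ n hn) _ hqJ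
    have h3 : ‖b n - q‖ ≤ ‖a n - q‖ := by
      rw [hb n hn]
      have hsplit : (1 - δ n) • a n + δ n • S (a n) - q
          = (1 - δ n) • (a n - q) + δ n • (S (a n) - q) := by
        module
      rw [hsplit]
      have hδ1 : (0:ℝ) ≤ 1 - δ n := by linarith [(hδ n).2]
      have hδ2 : (0:ℝ) ≤ δ n := by linarith [(hδ n).1]
      calc ‖(1 - δ n) • (a n - q) + δ n • (S (a n) - q)‖
          ≤ ‖(1 - δ n) • (a n - q)‖ + ‖δ n • (S (a n) - q)‖ := norm_add_le _ _
        _ = (1 - δ n) * ‖a n - q‖ + δ n * ‖S (a n) - q‖ := by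
            rw [norm_smul, norm_smul, Real.norm_eq_abs, Real.norm_eq_abs,
              abs_of_nonneg hδ1, abs_of_nonneg hδ2]
        _ ≤ (1 - δ n) * ‖a n - q‖ + δ n * ‖a n - q‖ := by nlinarith
        _ = ‖a n - q‖ := by ring
    have h4 : ‖c (n + 1) - q‖ ≤ ‖b n - q‖ := by
      rw [hc n hn]
      calc ‖S (b n) - q‖ = ‖S (b n) - S q‖ := by rw [hqS]
        _ ≤ ‖b n - q‖ := hS _ (hbJ n hn) _ hqJ
    linarith
  -- monotonicity for all later indices
  have mono : ∀ q ∈ F, ∀ n, 1 ≤ n → ∀ m, n ≤ m → ‖c m - q‖ ≤ ‖c n - q‖ := by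
    intro q hq n hn m hm
    induction m with
    | zero => omega
    | succ k ih =>
      rcases Nat.lt_or_ge k n with h | h
      · have : k + 1 = n := by omega
        rw [this]
      · have hk1 : 1 ≤ k := by omega
        exact le_trans (step q hq k hk1) (ih h)
  -- D is antitone (for n ≥ 1)
  have Dstep : ∀ n, 1 ≤ n → D (n + 1) ≤ D n := by
    intro n hn
    by_contra hlt
    push_neg at hlt
    obtain ⟨q, hqF, hq⟩ := (Metric.infDist_lt_iff hFne').1 hlt
    have : D (n + 1) ≤ dist (c n) q :=
      calc D (n + 1) ≤ dist (c (n + 1)) q := Metric.infDist_le_dist_of_mem hqF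
        _ = ‖c (n + 1) - q‖ := dist_eq_norm _ _
        _ ≤ ‖c n - q‖ := step q hqF n hn
        _ = dist (c n) q := (dist_eq_norm _ _).symm
    linarith
  have Dmono : ∀ n, 1 ≤ n → ∀ m, n ≤ m → D m ≤ D n := by
    intro n hn m hm
    induction m with
    | zero => omega
    | succ k ih =>
      rcases Nat.lt_or_ge k n with h | h
      · have : k + 1 = n := by omega
        rw [this]
      · exact le_trans (Dstep k (by omega)) (ih h)
  -- F is closed
  have hFcl : IsClosed F := by
    refine IsSeqClosed.isClosed fun u x hu hux => ?_
    have hxJ : x ∈ J := hJcl.isSeqClosed (fun n => (hu n).1) hux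
    have hnorm : Tendsto (fun n => ‖u n - x‖) atTop (nhds 0) :=
      tendsto_iff_norm_sub_tendsto_zero.1 hux
    have h1 : ∀ n, ‖S x - u n‖ ≤ ‖u n - x‖ := fun n => by
      have h := hS x hxJ (u n) (hu n).1
      rw [(hu n).2] at h
      rwa [norm_sub_rev x (u n)] at h
    have h2 : Tendsto (fun n => ‖u n - S x‖) atTop (nhds 0) := by
      have := squeeze_zero (fun n => norm_nonneg (S x - u n)) h1 hnorm
      exact this.congr fun n => norm_sub_rev _ _
    have hux' : Tendsto u atTop (nhds (S x)) :=
      tendsto_iff_norm_sub_tendsto_zero.2 h2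
    exact ⟨hxJ, tendsto_nhds_unique hux' hux⟩
  constructor
  · -- forward direction
    rintro ⟨q, hqF, hq⟩
    have h0 : Tendsto D atTop (nhds 0) := by
      have h1 : Tendsto (fun n => dist (c n) q) atTop (nhds 0) :=
        tendsto_iff_dist_tendsto_zero.1 hq
      exact squeeze_zero (fun n => Metric.infDist_nonneg)
        (fun n => Metric.infDist_le_dist_of_mem hqF) h1
    exact h0.liminf_eq
  · -- backward direction
    intro hlim
    -- extract small values of D
    have hfreq : ∀ ε : ℝ, 0 < ε → ∃ N, 1 ≤ N ∧ D N < ε := by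
      intro ε hε
      by_contra h
      push_neg at h
      have hbdd : IsBoundedUnder (· ≤ ·) atTop D := by
        refine ⟨D 1, eventually_atTop.2 ⟨1, fun n hn => Dmono 1 le_rfl n hn⟩⟩
      have hcob : IsCoboundedUnder (· ≥ ·) atTop D := hbdd.isCoboundedUnder_ge
      have : ε ≤ liminf D atTop :=
        le_liminf_of_le hcob (eventually_atTop.2 ⟨1, fun n hn => h n hn⟩)
      rw [hlim] at this
      linarith
    -- Cauchy
    have hcauchy : CauchySeq c := by
      rw [Metric.cauchySeq_iff]
      intro ε hε
      obtain ⟨N, hN1, hDN⟩ := hfreq (ε / 4) (by linarith)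
      have hDN2 : D N < ε / 2 := by linarith
      obtain ⟨q, hqF, hq⟩ := (Metric.infDist_lt_iff hFne').1 hDN2
      have hkey : ∀ n, N ≤ n → dist (c n) q < ε / 2 := by
        intro n hn
        calc dist (c n) q = ‖c n - q‖ := dist_eq_norm _ _
          _ ≤ ‖c N - q‖ := mono q hqF N hN1 n hn
          _ = dist (c N) q := (dist_eq_norm _ _).symm
          _ < ε / 2 := hq
      refine ⟨N, fun m hm n hn => ?_⟩
      calc dist (c m) (c n) ≤ dist (c m) q + dist q (c n) := dist_triangle _ _ _
        _ = dist (c m) q + dist (c n) q := by rw [dist_comm q]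
        _ < ε / 2 + ε / 2 := add_lt_add (hkey m hm) (hkey n hn)
        _ = ε := by ring
    obtain ⟨x, hx⟩ := cauchySeq_tendsto_of_complete hcauchy
    -- D tends to 0
    have hD0 : Tendsto D atTop (nhds 0) := by
      rw [Metric.tendsto_atTop]
      intro ε hε
      obtain ⟨N, hN1, hDN⟩ := hfreq ε hε
      refine ⟨N, fun n hn => ?_⟩
      rw [Real.dist_eq, sub_zero, abs_of_nonneg Metric.infDist_nonneg]
      exact lt_of_le_of_lt (Dmono N hN1 n hn) hDN
    have hDx : Tendsto D atTop (nhds (Metric.infDist x F)) :=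
      ((Metric.continuous_infDist_pt F).continuousAt.tendsto).comp hx
    have hx0 : Metric.infDist x F = 0 := tendsto_nhds_unique hDx hD0
    have hxF : x ∈ F := (hFcl.mem_iff_infDist_zero hFne').2 hx0
    exact ⟨x, hxF, hx⟩
end

section
/- Let J be a nonempty closed convex subset of a Banach space G and S : J → J a nonexpansive mapping whose fixed point set F(S) is nonempty. Let {cₙ} be generated by the iteration (1.2). If liminf_{n→∞} d(cₙ, F(S)) = 0, where d(x, F(S)) = inf{‖x − q‖ : q ∈ F(S)}, then {cₙ} is a Cauchy sequence. -/
open Filter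

/-- if `liminf d(cₙ, F(S)) = 0`, then the iteration (1.2) is Cauchy. -/
theorem stmt_9 {G : Type*} [NormedAddCommGroup G] [NormedSpace ℝ G] [CompleteSpace G]
    (J : Set G) (hJne : J.Nonempty) (hJcl : IsClosed J) (hJconv : Convex ℝ J)
    (S : G → G) (hSJ : ∀ x ∈ J, S x ∈ J)
    (hS : ∀ u ∈ J, ∀ v ∈ J, ‖S u - S v‖ ≤ ‖u - v‖)
    (hFne : ∃ q ∈ J, S q = q)
    (δ : ℕ → ℝ) (hδ : ∀ n, δ n ∈ Set.Ioo (0 : ℝ) 1)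
    (a b c : ℕ → G) (hc1 : c 1 ∈ J)
    (ha : ∀ n, 1 ≤ n → a n = S (c n))
    (hb : ∀ n, 1 ≤ n → b n = (1 - δ n) • a n + δ n • S (a n))
    (hc : ∀ n, 1 ≤ n → c (n + 1) = S (b n))
    (hliminf : liminf (fun n => Metric.infDist (c n) {q | q ∈ J ∧ S q = q}) atTop = 0) :
    CauchySeq c := by
  set F : Set G := {q | q ∈ J ∧ S q = q} with hF
  obtain ⟨q₀, hq₀J, hq₀S⟩ := hFne
  have hFne' : F.Nonempty := ⟨q₀, hq₀J, hq₀S⟩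
  -- membership
  have hcJ : ∀ n, 1 ≤ n → c n ∈ J := by
    intro n hn
    induction n with
    | zero => omega
    | succ m ih =>
      rcases Nat.eq_or_lt_of_le hn with h1 | h1
      · simpa [← h1] using hc1
      · have hm : 1 ≤ m := by omega
        have hcm : c m ∈ J := ih hm
        have haJ : a m ∈ J := by rw [ha m hm]; exact hSJ _ hcm
        have hbJ : b m ∈ J := by
          rw [hb m hm]
          exact hJconv haJ (hSJ _ haJ) (by linarith [(hδ m).2]) (le_of_lt (hδ m).1)
            (by ring)
        rw [hc m hm]; exact hSJ _ hbJ
  have haJ : ∀ n, 1 ≤ n → a n ∈ J := fun n hn => by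
    rw [ha n hn]; exact hSJ _ (hcJ n hn)
  have hbJ : ∀ n, 1 ≤ n → b n ∈ J := fun n hn => by
    rw [hb n hn]
    exact hJconv (haJ n hn) (hSJ _ (haJ n hn)) (by linarith [(hδ n).2])
      (le_of_lt (hδ n).1) (by ring)
  -- one-step monotonicity
  have step : ∀ q ∈ F, ∀ n, 1 ≤ n → dist (c (n + 1)) q ≤ dist (c n) q := by
    intro q hq n hn
    obtain ⟨hqJ, hqS⟩ := hq
    have h1 : dist (a n) q ≤ dist (c n) q := by
      rw [ha n hn, dist_eq_norm, dist_eq_norm]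
      calc ‖S (c n) - q‖ = ‖S (c n) - S q‖ := by rw [hqS]
        _ ≤ ‖c n - q‖ := hS _ (hcJ n hn) _ hqJ
    have h2 : dist (S (a n)) q ≤ dist (a n) q := by
      rw [dist_eq_norm, dist_eq_norm]
      calc ‖S (a n) - q‖ = ‖S (a n) - S q‖ := by rw [hqS]
        _ ≤ ‖a n - q‖ := hS _ (haJ n hn) _ hqJ
    have h3 : dist (b n) q ≤ dist (a n) q := by
      rw [dist_eq_norm, dist_eq_norm, hb n hn]
      have : (1 - δ n) • a n + δ n • S (a n) - q
          = (1 - δ n) • (a n - q) + δ n • (S (a n) - q) := by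
        have : ((1 - δ n) + δ n) • q = q := by
          rw [show (1 - δ n) + δ n = 1 by ring, one_smul]
        module
      rw [this]
      calc ‖(1 - δ n) • (a n - q) + δ n • (S (a n) - q)‖
          ≤ ‖(1 - δ n) • (a n - q)‖ + ‖δ n • (S (a n) - q)‖ := norm_add_le _ _
        _ = (1 - δ n) * ‖a n - q‖ + δ n * ‖S (a n) - q‖ := by
            rw [norm_smul, norm_smul, Real.norm_of_nonneg (by linarith [(hδ n).2]),
              Real.norm_of_nonneg (le_of_lt (hδ n).1)]
        _ ≤ (1 - δ n) * ‖a n - q‖ + δ n * ‖a n - q‖ := by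
            have := h2
            rw [dist_eq_norm, dist_eq_norm] at this
            nlinarith [(hδ n).1]
        _ = ‖a n - q‖ := by ring
    have h4 : dist (c (n + 1)) q ≤ dist (b n) q := by
      rw [hc n hn, dist_eq_norm, dist_eq_norm]
      calc ‖S (b n) - q‖ = ‖S (b n) - S q‖ := by rw [hqS]
        _ ≤ ‖b n - q‖ := hS _ (hbJ n hn) _ hqJ
    linarith
  -- monotone dist to any fixed point, from any index N ≥ 1
  have mono : ∀ q ∈ F, ∀ N, 1 ≤ N → ∀ n, N ≤ n → dist (c n) q ≤ dist (c N) q := by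
    intro q hq N hN n hn
    induction n with
    | zero => omega
    | succ m ih =>
      rcases Nat.eq_or_lt_of_le hn with h1 | h1
      · rw [h1]
      · have hm : N ≤ m := by omega
        exact (step q hq m (by omega)).trans (ih hm)
  -- from liminf = 0: for every ε > 0, there is N ≥ 1 with infDist (c N) F < ε
  have key : ∀ ε : ℝ, 0 < ε → ∃ N, 1 ≤ N ∧ Metric.infDist (c N) F < ε := by
    intro ε hε
    by_contra h
    push_neg at h
    have hev : ∀ᶠ n in atTop, ε ≤ Metric.infDist (c n) F := by
      filter_upwards [eventually_ge_atTop 1] with n hn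
      rcases lt_or_ge (Metric.infDist (c n) F) ε with hlt | hle
      · exact absurd hlt (not_lt.mpr (h n hn))
      · exact hle
    have hcob : IsCoboundedUnder (· ≤ ·) atTop
        (fun n => Metric.infDist (c n) F) := by
      apply Filter.IsBoundedUnder.isCoboundedUnder_le
      exact ⟨0, Filter.eventually_map.mpr
        (Eventually.of_forall fun n => Metric.infDist_nonneg)⟩
    have hcob2 : IsCoboundedUnder (· ≥ ·) atTop
        (fun n => Metric.infDist (c n) F) := by
      apply Filter.IsBoundedUnder.isCoboundedUnder_ge
      refine ⟨dist (c 1) q₀, ?_⟩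
      rw [Filter.eventually_map]
      filter_upwards [eventually_ge_atTop 1] with n hn
      have hq₀F : q₀ ∈ F := ⟨hq₀J, hq₀S⟩
      exact (Metric.infDist_le_dist_of_mem hq₀F).trans
        (mono q₀ hq₀F 1 le_rfl n hn)
    have := le_liminf_of_le hcob2 hev
    rw [hliminf] at this
    linarith
  -- Cauchy
  rw [Metric.cauchySeq_iff']
  intro ε hε
  obtain ⟨N, hN1, hNd⟩ := key (ε / 3) (by linarith)
  obtain ⟨q, hqF, hqd⟩ := (Metric.infDist_lt_iff hFne').mp hNd
  refine ⟨N, fun n hn => ?_⟩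
  have h1 : dist (c n) q ≤ dist (c N) q := mono q hqF N hN1 n hn
  calc dist (c n) (c N) ≤ dist (c n) q + dist q (c N) := dist_triangle _ _ _
    _ < ε := by rw [dist_comm q (c N)]; linarith
end

section
/- Let D = [g₁,h₁] × ⋯ × [gₘ,hₘ] ⊂ ℝᵐ with gᵢ < hᵢ, let j ∈ D, and let K, H : D × D × ℝ → ℝ and F : D × ℝ³ → ℝ be continuous. Assume there exist nonnegative constants α, β, γ such that |F(t,u₁,v₁,w₁) − F(t,u₂,v₂,w₂)| ≤ α|u₁−u₂| + β|v₁−v₂| + γ|w₁−w₂| for all t ∈ D and all uᵢ,vᵢ,wᵢ ∈ ℝ; there exist nonnegative constants L_K, L_H with |K(t,s,u) − K(t,s,v)| ≤ L_K|u−v| and |H(t,s,u) − H(t,s,v)| ≤ L_H|u−v| for all t,s ∈ D, u,v ∈ ℝ; and α + (β L_K + γ L_H)∏ᵢ(hᵢ−gᵢ) < 1. Then the equation x(t) = F(t, x(t), ∫_{[g,j]} K(t,s,x(s)) ds, ∫_{[g,h]} H(t,s,x(s)) ds) has a unique solution p in the space C(D) of continuous real-valued functions on D. -/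
open MeasureTheory

private lemma aux_contOn_integrand {m : ℕ} {g h : Fin m → ℝ}
    {G : (Fin m → ℝ) → (Fin m → ℝ) → ℝ → ℝ}
    (hGcont : ContinuousOn (fun p : (Fin m → ℝ) × (Fin m → ℝ) × ℝ => G p.1 p.2.1 p.2.2)
      (Set.Icc g h ×ˢ Set.Icc g h ×ˢ Set.univ))
    {x : (Fin m → ℝ) → ℝ} (hx : ContinuousOn x (Set.Icc g h))
    {t : Fin m → ℝ} (ht : t ∈ Set.Icc g h) :
    ContinuousOn (fun s => G t s (x s)) (Set.Icc g h) := by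
  exact hGcont.comp (continuousOn_const.prodMk (continuousOn_id.prodMk hx))
    (fun s hs => ⟨ht, hs, trivial⟩)

private lemma aux_integrableOn {m : ℕ} {g h : Fin m → ℝ}
    {G : (Fin m → ℝ) → (Fin m → ℝ) → ℝ → ℝ}
    (hGcont : ContinuousOn (fun p : (Fin m → ℝ) × (Fin m → ℝ) × ℝ => G p.1 p.2.1 p.2.2)
      (Set.Icc g h ×ˢ Set.Icc g h ×ˢ Set.univ))
    {S : Set (Fin m → ℝ)} (hS : S ⊆ Set.Icc g h) (hScmp : IsCompact S)
    {x : (Fin m → ℝ) → ℝ} (hx : ContinuousOn x (Set.Icc g h))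
    {t : Fin m → ℝ} (ht : t ∈ Set.Icc g h) :
    IntegrableOn (fun s => G t s (x s)) S :=
  ((aux_contOn_integrand hGcont hx ht).mono hS).integrableOn_compact hScmp

private lemma aux_contOn_integral {m : ℕ} {g h : Fin m → ℝ}
    {G : (Fin m → ℝ) → (Fin m → ℝ) → ℝ → ℝ}
    (hGcont : ContinuousOn (fun p : (Fin m → ℝ) × (Fin m → ℝ) × ℝ => G p.1 p.2.1 p.2.2)
      (Set.Icc g h ×ˢ Set.Icc g h ×ˢ Set.univ))
    {S : Set (Fin m → ℝ)} (hS : S ⊆ Set.Icc g h) (hSm : MeasurableSet S)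
    (hScmp : IsCompact S)
    {x : (Fin m → ℝ) → ℝ} (hx : ContinuousOn x (Set.Icc g h)) :
    ContinuousOn (fun t => ∫ s in S, G t s (x s)) (Set.Icc g h) := by
  obtain ⟨M, hM⟩ : ∃ M, ∀ p ∈ (Set.Icc g h ×ˢ Set.Icc g h ×ˢ (x '' Set.Icc g h) :
      Set ((Fin m → ℝ) × (Fin m → ℝ) × ℝ)), ‖G p.1 p.2.1 p.2.2‖ ≤ M := by
    have hcmp : IsCompact (Set.Icc g h ×ˢ Set.Icc g h ×ˢ (x '' Set.Icc g h) :
        Set ((Fin m → ℝ) × (Fin m → ℝ) × ℝ)) :=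
      isCompact_Icc.prod (isCompact_Icc.prod (isCompact_Icc.image_of_continuousOn hx))
    exact hcmp.exists_bound_of_continuousOn
      (hGcont.mono (fun p hp => ⟨hp.1, hp.2.1, trivial⟩))
  haveI : IsFiniteMeasure (volume.restrict S) :=
    ⟨by rw [Measure.restrict_apply_univ]; exact hScmp.measure_lt_top⟩
  apply continuousOn_of_dominated (bound := fun _ => M)
  · intro t ht
    exact (((aux_contOn_integrand hGcont hx ht).mono hS).aestronglyMeasurable hSm)
  · intro t ht
    filter_upwards [ae_restrict_mem hSm] with s hs
    exact hM (t, s, x s) ⟨ht, hS hs, ⟨s, hS hs, rfl⟩⟩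
  · exact integrable_const M
  · filter_upwards [ae_restrict_mem hSm] with s hs
    exact hGcont.comp (continuousOn_id.prodMk (continuousOn_const.prodMk continuousOn_const))
      (fun t ht => ⟨ht, hS hs, trivial⟩)

private lemma aux_diff {m : ℕ} {g h : Fin m → ℝ}
    {G : (Fin m → ℝ) → (Fin m → ℝ) → ℝ → ℝ}
    (hGcont : ContinuousOn (fun p : (Fin m → ℝ) × (Fin m → ℝ) × ℝ => G p.1 p.2.1 p.2.2)
      (Set.Icc g h ×ˢ Set.Icc g h ×ˢ Set.univ))
    {L : ℝ} (hL : 0 ≤ L)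
    (hG : ∀ t ∈ Set.Icc g h, ∀ s ∈ Set.Icc g h, ∀ u v : ℝ,
      |G t s u - G t s v| ≤ L * |u - v|)
    {S : Set (Fin m → ℝ)} (hS : S ⊆ Set.Icc g h) (hSm : MeasurableSet S)
    (hScmp : IsCompact S)
    {x y : (Fin m → ℝ) → ℝ} (hx : ContinuousOn x (Set.Icc g h))
    (hy : ContinuousOn y (Set.Icc g h))
    {t : Fin m → ℝ} (ht : t ∈ Set.Icc g h)
    {d : ℝ} (hd : ∀ s ∈ Set.Icc g h, |x s - y s| ≤ d) :
    |(∫ s in S, G t s (x s)) - ∫ s in S, G t s (y s)| ≤ L * d * (volume S).toReal := by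
  rw [← integral_sub (aux_integrableOn hGcont hS hScmp hx ht)
    (aux_integrableOn hGcont hS hScmp hy ht)]
  have := norm_setIntegral_le_of_norm_le_const (C := L * d) (μ := volume)
    hScmp.measure_lt_top (f := fun s => G t s (x s) - G t s (y s)) ?_
  · simpa [Real.norm_eq_abs, Measure.real] using this
  · intro s hs
    rw [Real.norm_eq_abs]
    exact le_trans (hG t ht s (hS hs) (x s) (y s))
      (mul_le_mul_of_nonneg_left (hd s (hS hs)) hL)
open scoped Classical in
private noncomputable def extFun {m : ℕ} (g h : Fin m → ℝ)
    (φ : C((Set.Icc g h : Set (Fin m → ℝ)), ℝ)) : (Fin m → ℝ) → ℝ :=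
  fun s => if hs : s ∈ Set.Icc g h then φ ⟨s, hs⟩ else 0

private lemma extFun_eq {m : ℕ} {g h : Fin m → ℝ}
    (φ : C((Set.Icc g h : Set (Fin m → ℝ)), ℝ)) {s : Fin m → ℝ} (hs : s ∈ Set.Icc g h) :
    extFun g h φ s = φ ⟨s, hs⟩ := by
  unfold extFun
  rw [dif_pos hs]

private lemma extFun_contOn {m : ℕ} {g h : Fin m → ℝ}
    (φ : C((Set.Icc g h : Set (Fin m → ℝ)), ℝ)) :
    ContinuousOn (extFun g h φ) (Set.Icc g h) := by
  rw [continuousOn_iff_continuous_restrict]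
  convert φ.continuous using 1
  ext s
  simp [Set.restrict, extFun_eq φ s.2]

private lemma extFun_dist {m : ℕ} {g h : Fin m → ℝ}
    (φ ψ : C((Set.Icc g h : Set (Fin m → ℝ)), ℝ)) (s : Fin m → ℝ) :
    |extFun g h φ s - extFun g h ψ s| ≤ dist φ ψ := by
  unfold extFun
  by_cases hs : s ∈ Set.Icc g h
  · rw [dif_pos hs, dif_pos hs, ← Real.dist_eq]
    exact ContinuousMap.dist_apply_le_dist _
  · simp [dif_neg hs, dist_nonneg]

private noncomputable def TOp {m : ℕ} (g h j : Fin m → ℝ)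
    (K H : (Fin m → ℝ) → (Fin m → ℝ) → ℝ → ℝ)
    (F : (Fin m → ℝ) → ℝ → ℝ → ℝ → ℝ)
    (φ : C((Set.Icc g h : Set (Fin m → ℝ)), ℝ)) : (Fin m → ℝ) → ℝ :=
  fun t => F t (extFun g h φ t) (∫ s in Set.Icc g j, K t s (extFun g h φ s))
    (∫ s in Set.Icc g h, H t s (extFun g h φ s))
/-- existence and uniqueness of a continuous solution of the mixed type
Volterra–Fredholm functional nonlinear integral equation (5.1) on the box
`D = [g₁,h₁] × ⋯ × [gₘ,hₘ]`. -/
theorem stmt_11 {m : ℕ} (g h j : Fin m → ℝ)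
    (hgh : ∀ i, g i < h i) (hj : j ∈ Set.Icc g h)
    (K H : (Fin m → ℝ) → (Fin m → ℝ) → ℝ → ℝ)
    (F : (Fin m → ℝ) → ℝ → ℝ → ℝ → ℝ)
    (hKcont : ContinuousOn (fun p : (Fin m → ℝ) × (Fin m → ℝ) × ℝ => K p.1 p.2.1 p.2.2)
      (Set.Icc g h ×ˢ Set.Icc g h ×ˢ Set.univ))
    (hHcont : ContinuousOn (fun p : (Fin m → ℝ) × (Fin m → ℝ) × ℝ => H p.1 p.2.1 p.2.2)
      (Set.Icc g h ×ˢ Set.Icc g h ×ˢ Set.univ))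
    (hFcont : ContinuousOn (fun p : (Fin m → ℝ) × ℝ × ℝ × ℝ => F p.1 p.2.1 p.2.2.1 p.2.2.2)
      (Set.Icc g h ×ˢ Set.univ))
    (α β γ : ℝ) (hα : 0 ≤ α) (hβ : 0 ≤ β) (hγ : 0 ≤ γ)
    (hF : ∀ t ∈ Set.Icc g h, ∀ u₁ v₁ w₁ u₂ v₂ w₂ : ℝ,
      |F t u₁ v₁ w₁ - F t u₂ v₂ w₂| ≤ α * |u₁ - u₂| + β * |v₁ - v₂| + γ * |w₁ - w₂|)
    (L_K L_H : ℝ) (hLK : 0 ≤ L_K) (hLH : 0 ≤ L_H)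
    (hK : ∀ t ∈ Set.Icc g h, ∀ s ∈ Set.Icc g h, ∀ u v : ℝ,
      |K t s u - K t s v| ≤ L_K * |u - v|)
    (hH : ∀ t ∈ Set.Icc g h, ∀ s ∈ Set.Icc g h, ∀ u v : ℝ,
      |H t s u - H t s v| ≤ L_H * |u - v|)
    (hcontr : α + (β * L_K + γ * L_H) * ∏ i, (h i - g i) < 1) :
    ∃ p : (Fin m → ℝ) → ℝ, ContinuousOn p (Set.Icc g h) ∧
      (∀ t ∈ Set.Icc g h,
        p t = F t (p t) (∫ s in Set.Icc g j, K t s (p s)) (∫ s in Set.Icc g h, H t s (p s))) ∧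
      ∀ x : (Fin m → ℝ) → ℝ, ContinuousOn x (Set.Icc g h) →
        (∀ t ∈ Set.Icc g h,
          x t = F t (x t) (∫ s in Set.Icc g j, K t s (x s)) (∫ s in Set.Icc g h, H t s (x s))) →
        Set.EqOn x p (Set.Icc g h) := by
  classical
  have hgh' : g ≤ h := fun i => (hgh i).le
  have hJsub : Set.Icc g j ⊆ Set.Icc g h := Set.Icc_subset_Icc le_rfl hj.2
  have hDm : MeasurableSet (Set.Icc g h : Set (Fin m → ℝ)) := measurableSet_Icc
  have hJm : MeasurableSet (Set.Icc g j : Set (Fin m → ℝ)) := measurableSet_Icc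
  have hDcmp : IsCompact (Set.Icc g h : Set (Fin m → ℝ)) := isCompact_Icc
  have hJcmp : IsCompact (Set.Icc g j : Set (Fin m → ℝ)) := isCompact_Icc
  haveI : CompactSpace (Set.Icc g h : Set (Fin m → ℝ)) := isCompact_iff_compactSpace.mp hDcmp
  set V := ∏ i, (h i - g i) with hVdef
  have hV0 : 0 ≤ V := Finset.prod_nonneg fun i _ => sub_nonneg.2 (hgh' i)
  have hvolD : (volume (Set.Icc g h : Set (Fin m → ℝ))).toReal = V :=
    Real.volume_Icc_pi_toReal hgh'
  have hvolJ : (volume (Set.Icc g j : Set (Fin m → ℝ))).toReal ≤ V := by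
    rw [← hvolD]
    exact ENNReal.toReal_mono hDcmp.measure_lt_top.ne (measure_mono hJsub)
  set c := α + (β * L_K + γ * L_H) * V with hcdef
  have hc0 : 0 ≤ c := by positivity
  have hTc : ∀ φ : C((Set.Icc g h : Set (Fin m → ℝ)), ℝ),
      ContinuousOn (TOp g h j K H F φ) (Set.Icc g h) := by
    intro φ
    have hI₁ := aux_contOn_integral hKcont hJsub hJm hJcmp (extFun_contOn φ)
    have hI₂ := aux_contOn_integral hHcont (le_refl _) hDm hDcmp (extFun_contOn φ)
    exact hFcont.comp (continuousOn_id.prodMk ((extFun_contOn φ).prodMk (hI₁.prodMk hI₂)))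
      (fun t ht => ⟨ht, trivial⟩)
  set T : C((Set.Icc g h : Set (Fin m → ℝ)), ℝ) → C((Set.Icc g h : Set (Fin m → ℝ)), ℝ) :=
    fun φ => ⟨(Set.Icc g h).restrict (TOp g h j K H F φ),
      continuousOn_iff_continuous_restrict.mp (hTc φ)⟩ with hTdef
  have hkey : ∀ φ ψ : C((Set.Icc g h : Set (Fin m → ℝ)), ℝ),
      ∀ t : (Set.Icc g h : Set (Fin m → ℝ)),
      |TOp g h j K H F φ t.1 - TOp g h j K H F ψ t.1| ≤ c * dist φ ψ := by
    intro φ ψ t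
    set d := dist φ ψ with hddef
    have hd0 : 0 ≤ d := dist_nonneg
    have hdb : ∀ s ∈ Set.Icc g h, |extFun g h φ s - extFun g h ψ s| ≤ d :=
      fun s _ => extFun_dist φ ψ s
    have h1 : |extFun g h φ t.1 - extFun g h ψ t.1| ≤ d := extFun_dist φ ψ t.1
    have h2 := aux_diff hKcont hLK hK hJsub hJm hJcmp (extFun_contOn φ)
      (extFun_contOn ψ) t.2 hdb
    have h3 := aux_diff hHcont hLH hH (le_refl _) hDm hDcmp (extFun_contOn φ)
      (extFun_contOn ψ) t.2 hdb
    have h4 : |TOp g h j K H F φ t.1 - TOp g h j K H F ψ t.1| ≤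
        α * |extFun g h φ t.1 - extFun g h ψ t.1|
        + β * |(∫ s in Set.Icc g j, K t.1 s (extFun g h φ s))
            - ∫ s in Set.Icc g j, K t.1 s (extFun g h ψ s)|
        + γ * |(∫ s in Set.Icc g h, H t.1 s (extFun g h φ s))
            - ∫ s in Set.Icc g h, H t.1 s (extFun g h ψ s)| :=
      hF t.1 t.2 _ _ _ _ _ _
    have e1 : α * |extFun g h φ t.1 - extFun g h ψ t.1| ≤ α * d :=
      mul_le_mul_of_nonneg_left h1 hα
    have e2 : β * |(∫ s in Set.Icc g j, K t.1 s (extFun g h φ s))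
        - ∫ s in Set.Icc g j, K t.1 s (extFun g h ψ s)| ≤ β * (L_K * d * V) := by
      refine le_trans (mul_le_mul_of_nonneg_left h2 hβ)
        (mul_le_mul_of_nonneg_left ?_ hβ)
      exact mul_le_mul_of_nonneg_left hvolJ (mul_nonneg hLK hd0)
    have e3 : γ * |(∫ s in Set.Icc g h, H t.1 s (extFun g h φ s))
        - ∫ s in Set.Icc g h, H t.1 s (extFun g h ψ s)| ≤ γ * (L_H * d * V) := by
      refine le_trans (mul_le_mul_of_nonneg_left h3 hγ) (le_of_eq ?_)
      rw [hvolD]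
    have hcd : c * d = α * d + β * (L_K * d * V) + γ * (L_H * d * V) := by
      rw [hcdef]; ring
    linarith [h4, e1, e2, e3]
  have hlip : ∀ φ ψ : C((Set.Icc g h : Set (Fin m → ℝ)), ℝ),
      dist (T φ) (T ψ) ≤ c * dist φ ψ := by
    intro φ ψ
    rw [ContinuousMap.dist_le (mul_nonneg hc0 dist_nonneg)]
    intro t
    rw [hTdef]
    simp only [ContinuousMap.coe_mk]
    rw [Real.dist_eq]
    exact hkey φ ψ t
  have hcontracting : ContractingWith ⟨c, hc0⟩ T := by
    constructor
    · exact hcontr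
    · exact LipschitzWith.of_dist_le_mul hlip
  haveI : Nonempty C((Set.Icc g h : Set (Fin m → ℝ)), ℝ) := ⟨0⟩
  set φ₀ := ContractingWith.fixedPoint T hcontracting with hφ₀
  have hfix : T φ₀ = φ₀ := hcontracting.fixedPoint_isFixedPt
  refine ⟨extFun g h φ₀, extFun_contOn φ₀, ?_, ?_⟩
  · intro t ht
    have h1 : extFun g h φ₀ t = (T φ₀) ⟨t, ht⟩ := by
      rw [hfix]; exact extFun_eq φ₀ ht
    conv_lhs => rw [h1]
    rfl
  · intro x hx heq t ht
    set x' : C((Set.Icc g h : Set (Fin m → ℝ)), ℝ) :=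
      ⟨(Set.Icc g h).restrict x, continuousOn_iff_continuous_restrict.mp hx⟩ with hx'def
    have hext : ∀ s ∈ Set.Icc g h, extFun g h x' s = x s := by
      intro s hs
      rw [extFun_eq x' hs]
      rfl
    have hfx : Function.IsFixedPt T x' := by
      ext t'
      show TOp g h j K H F x' t'.1 = x t'.1
      unfold TOp
      have e1 : (∫ s in Set.Icc g j, K t'.1 s (extFun g h x' s))
          = ∫ s in Set.Icc g j, K t'.1 s (x s) :=
        setIntegral_congr_fun hJm (fun s hs => by rw [hext s (hJsub hs)])
      have e2 : (∫ s in Set.Icc g h, H t'.1 s (extFun g h x' s))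
          = ∫ s in Set.Icc g h, H t'.1 s (x s) :=
        setIntegral_congr_fun hDm (fun s hs => by rw [hext s hs])
      rw [e1, e2, hext t'.1 t'.2]
      exact (heq t'.1 t'.2).symm
    have hux : x' = φ₀ := hcontracting.fixedPoint_unique hfx
    calc x t = x' ⟨t, ht⟩ := rfl
      _ = φ₀ ⟨t, ht⟩ := by rw [hux]
      _ = extFun g h φ₀ t := (extFun_eq φ₀ ht).symm
end

section
/- Let D = [g₁,h₁] × ⋯ × [gₘ,hₘ] ⊂ ℝᵐ with gᵢ < hᵢ, let j ∈ D, and let K, H : D × D × ℝ → ℝ and F : D × ℝ³ → ℝ be continuous functions satisfying: |F(t,u₁,v₁,w₁) − F(t,u₂,v₂,w₂)| ≤ α|u₁−u₂| + β|v₁−v₂| + γ|w₁−w₂| for nonnegative constants α, β, γ; |K(t,s,u) − K(t,s,v)| ≤ L_K|u−v| and |H(t,s,u) − H(t,s,v)| ≤ L_H|u−v| for nonnegative constants L_K, L_H. Define the operator A on C(D) by (Ax)(t) = F(t, x(t), ∫_{[g,j]} K(t,s,x(s)) ds, ∫_{[g,h]} H(t,s,x(s)) ds). Then for all x, y ∈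 C(D), ‖Ax − Ay‖ ≤ (α + (β L_K + γ L_H)∏ᵢ(hᵢ−gᵢ)) ‖x − y‖, where ‖·‖ is the supremum norm; i.e. A is Lipschitz with constant α + (β L_K + γ L_H)∏ᵢ(hᵢ−gᵢ). -/
open MeasureTheory

private lemma stmt_12_aux {m : ℕ} (g h b : Fin m → ℝ) (hb : b ∈ Set.Icc g h)
    (K : (Fin m → ℝ) → (Fin m → ℝ) → ℝ → ℝ)
    (hKcont : ContinuousOn (fun p : (Fin m → ℝ) × (Fin m → ℝ) × ℝ => K p.1 p.2.1 p.2.2)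
      (Set.Icc g h ×ˢ Set.Icc g h ×ˢ Set.univ))
    (L : ℝ) (hL : 0 ≤ L)
    (hK : ∀ t ∈ Set.Icc g h, ∀ s ∈ Set.Icc g h, ∀ u v : ℝ,
      |K t s u - K t s v| ≤ L * |u - v|)
    (x y : (Fin m → ℝ) → ℝ)
    (hx : ContinuousOn x (Set.Icc g h)) (hy : ContinuousOn y (Set.Icc g h))
    (M : ℝ) (hM : ∀ s ∈ Set.Icc g h, |x s - y s| ≤ M)
    (t : Fin m → ℝ) (ht : t ∈ Set.Icc g h) :
    |(∫ s in Set.Icc g b, K t s (x s)) - ∫ s in Set.Icc g b, K t s (y s)| ≤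
      L * M * (volume (Set.Icc g b)).toReal := by
  have hsub : Set.Icc g b ⊆ Set.Icc g h := Set.Icc_subset_Icc le_rfl hb.2
  have hcont : ∀ z : (Fin m → ℝ) → ℝ, ContinuousOn z (Set.Icc g h) →
      ContinuousOn (fun s => K t s (z s)) (Set.Icc g h) := by
    intro z hz
    have : ContinuousOn (fun s : Fin m → ℝ => ((t, s, z s) : (Fin m → ℝ) × (Fin m → ℝ) × ℝ))
        (Set.Icc g h) := continuousOn_const.prodMk (continuousOn_id.prodMk hz)
    exact hKcont.comp this (fun s hs => ⟨ht, hs, Set.mem_univ _⟩)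
  have hintx : IntegrableOn (fun s => K t s (x s)) (Set.Icc g b) volume :=
    ((hcont x hx).mono hsub).integrableOn_compact isCompact_Icc
  have hinty : IntegrableOn (fun s => K t s (y s)) (Set.Icc g b) volume :=
    ((hcont y hy).mono hsub).integrableOn_compact isCompact_Icc
  rw [← integral_sub hintx hinty]
  have := norm_setIntegral_le_of_norm_le_const (C := L * M) (μ := volume)
    (f := fun s => K t s (x s) - K t s (y s))
    (isCompact_Icc.measure_lt_top) (fun s hs => by
      rw [Real.norm_eq_abs]
      calc |K t s (x s) - K t s (y s)| ≤ L * |x s - y s| := hK t ht s (hsub hs) _ _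
        _ ≤ L * M := mul_le_mul_of_nonneg_left (hM s (hsub hs)) hL)
  simpa [measureReal_def] using this

/-- the integral operator `A` of equation (5.2) is Lipschitz on `C(D)`
(with the supremum norm on the box `D = [g₁,h₁] × ⋯ × [gₘ,hₘ]`) with constant
`α + (β L_K + γ L_H) ∏ᵢ (hᵢ - gᵢ)`. -/
theorem stmt_12 {m : ℕ} (g h j : Fin m → ℝ)
    (hgh : ∀ i, g i < h i) (hj : j ∈ Set.Icc g h)
    (K H : (Fin m → ℝ) → (Fin m → ℝ) → ℝ → ℝ)
    (F : (Fin m → ℝ) → ℝ → ℝ → ℝ → ℝ)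
    (hKcont : ContinuousOn (fun p : (Fin m → ℝ) × (Fin m → ℝ) × ℝ => K p.1 p.2.1 p.2.2)
      (Set.Icc g h ×ˢ Set.Icc g h ×ˢ Set.univ))
    (hHcont : ContinuousOn (fun p : (Fin m → ℝ) × (Fin m → ℝ) × ℝ => H p.1 p.2.1 p.2.2)
      (Set.Icc g h ×ˢ Set.Icc g h ×ˢ Set.univ))
    (hFcont : ContinuousOn (fun p : (Fin m → ℝ) × ℝ × ℝ × ℝ => F p.1 p.2.1 p.2.2.1 p.2.2.2)
      (Set.Icc g h ×ˢ Set.univ))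
    (α β γ : ℝ) (hα : 0 ≤ α) (hβ : 0 ≤ β) (hγ : 0 ≤ γ)
    (hF : ∀ t ∈ Set.Icc g h, ∀ u₁ v₁ w₁ u₂ v₂ w₂ : ℝ,
      |F t u₁ v₁ w₁ - F t u₂ v₂ w₂| ≤ α * |u₁ - u₂| + β * |v₁ - v₂| + γ * |w₁ - w₂|)
    (L_K L_H : ℝ) (hLK : 0 ≤ L_K) (hLH : 0 ≤ L_H)
    (hK : ∀ t ∈ Set.Icc g h, ∀ s ∈ Set.Icc g h, ∀ u v : ℝ,
      |K t s u - K t s v| ≤ L_K * |u - v|)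
    (hH : ∀ t ∈ Set.Icc g h, ∀ s ∈ Set.Icc g h, ∀ u v : ℝ,
      |H t s u - H t s v| ≤ L_H * |u - v|)
    (A : ((Fin m → ℝ) → ℝ) → ((Fin m → ℝ) → ℝ))
    (hA : ∀ (x : (Fin m → ℝ) → ℝ) (t : Fin m → ℝ),
      A x t = F t (x t) (∫ s in Set.Icc g j, K t s (x s)) (∫ s in Set.Icc g h, H t s (x s)))
    (x y : (Fin m → ℝ) → ℝ)
    (hx : ContinuousOn x (Set.Icc g h)) (hy : ContinuousOn y (Set.Icc g h)) :
    (⨆ t : (Set.Icc g h : Set (Fin m → ℝ)), |A x t - A y t|) ≤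
      (α + (β * L_K + γ * L_H) * ∏ i, (h i - g i)) *
        ⨆ s : (Set.Icc g h : Set (Fin m → ℝ)), |x s - y s| := by
  have hgh' : g ≤ h := fun i => (hgh i).le
  have hgmem : g ∈ Set.Icc g h := ⟨le_rfl, hgh'⟩
  haveI : Nonempty (Set.Icc g h : Set (Fin m → ℝ)) := ⟨⟨g, hgmem⟩⟩
  set M : ℝ := ⨆ s : (Set.Icc g h : Set (Fin m → ℝ)), |x s - y s| with hMdef
  have hbdd : BddAbove (Set.range fun s : (Set.Icc g h : Set (Fin m → ℝ)) => |x s - y s|) := by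
    have := (isCompact_Icc.image_of_continuousOn ((hx.sub hy).abs)).bddAbove
    rwa [Set.image_eq_range] at this
  have hMle : ∀ s ∈ Set.Icc g h, |x s - y s| ≤ M := fun s hs =>
    le_ciSup hbdd (⟨s, hs⟩ : (Set.Icc g h : Set (Fin m → ℝ)))
  have hM0 : 0 ≤ M := le_trans (abs_nonneg _) (hMle g hgmem)
  set P : ℝ := ∏ i, (h i - g i) with hPdef
  have hP0 : 0 ≤ P := Finset.prod_nonneg fun i _ => sub_nonneg.2 (hgh' i)
  have hvolh : (volume (Set.Icc g h)).toReal = P := Real.volume_Icc_pi_toReal hgh'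
  have hvolj : (volume (Set.Icc g j)).toReal ≤ P := by
    rw [← hvolh]
    exact ENNReal.toReal_mono (isCompact_Icc.measure_lt_top).ne
      (measure_mono (Set.Icc_subset_Icc le_rfl hj.2))
  apply ciSup_le
  rintro ⟨t, ht⟩
  simp only [hA]
  calc |F t (x t) (∫ s in Set.Icc g j, K t s (x s)) (∫ s in Set.Icc g h, H t s (x s)) -
        F t (y t) (∫ s in Set.Icc g j, K t s (y s)) (∫ s in Set.Icc g h, H t s (y s))|
      ≤ α * |x t - y t| +
        β * |(∫ s in Set.Icc g j, K t s (x s)) - ∫ s in Set.Icc g j, K t s (y s)| +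
        γ * |(∫ s in Set.Icc g h, H t s (x s)) - ∫ s in Set.Icc g h, H t s (y s)| :=
      hF t ht _ _ _ _ _ _
    _ ≤ α * M + β * (L_K * M * P) + γ * (L_H * M * P) := by
      have h1 : α * |x t - y t| ≤ α * M := mul_le_mul_of_nonneg_left (hMle t ht) hα
      have h2 := stmt_12_aux g h j hj K hKcont L_K hLK hK x y hx hy M hMle t ht
      have h3 := stmt_12_aux g h h ⟨hgh', le_rfl⟩ H hHcont L_H hLH hH x y hx hy M hMle t ht
      have h2' : β * |(∫ s in Set.Icc g j, K t s (x s)) - ∫ s in Set.Icc g j, K t s (y s)| ≤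
          β * (L_K * M * P) := by
        refine mul_le_mul_of_nonneg_left (h2.trans ?_) hβ
        exact mul_le_mul_of_nonneg_left hvolj (mul_nonneg hLK hM0)
      have h3' : γ * |(∫ s in Set.Icc g h, H t s (x s)) - ∫ s in Set.Icc g h, H t s (y s)| ≤
          γ * (L_H * M * P) := by
        refine mul_le_mul_of_nonneg_left (h3.trans ?_) hγ
        rw [hvolh]
      linarith
    _ = (α + (β * L_K + γ * L_H) * P) * M := by ring
end

section
/- Let G be a Banach space, A : G → G a map, p ∈ G a fixed point of A, and suppose there is a constant L ∈ [0,1) such that ‖Ax − Ap‖ ≤ L‖x − p‖ for all x ∈ G. Let {δₙ} ⊂ [0,1] and let {cₙ} be generated from c₀ ∈ G by aₙ = A cₙ, bₙ = (1−δₙ)aₙ + δₙ A aₙ, c_{n+1} = A bₙ. Then for all n, ‖c_{n+1} − p‖ ≤ ‖c₀ − p‖ · ∏_{k=0}^{n} (1 − δₖ(1 − L)). -/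
/-- product estimate along the iteration (1.2) for a quasi-contraction. -/
theorem stmt_13 {G : Type*} [NormedAddCommGroup G] [NormedSpace ℝ G] [CompleteSpace G]
    (A : G → G) (p : G) (hp : A p = p)
    (L : ℝ) (hL : L ∈ Set.Ico (0 : ℝ) 1)
    (hA : ∀ x : G, ‖A x - A p‖ ≤ L * ‖x - p‖)
    (δ : ℕ → ℝ) (hδ : ∀ n, δ n ∈ Set.Icc (0 : ℝ) 1)
    (a b c : ℕ → G)
    (ha : ∀ n, a n = A (c n))
    (hb : ∀ n, b n = (1 - δ n) • a n + δ n • A (a n))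
    (hc : ∀ n, c (n + 1) = A (b n)) :
    ∀ n, ‖c (n + 1) - p‖ ≤ ‖c 0 - p‖ * ∏ k ∈ Finset.range (n + 1), (1 - δ k * (1 - L)) := by
  obtain ⟨hL0, hL1⟩ := hL
  have hAp : ∀ x : G, ‖A x - p‖ ≤ L * ‖x - p‖ := by
    intro x; have := hA x; rwa [hp] at this
  have key : ∀ n, ‖c (n + 1) - p‖ ≤ (1 - δ n * (1 - L)) * ‖c n - p‖ := by
    intro n
    obtain ⟨hd0, hd1⟩ := hδ n
    have hfac0 : (0 : ℝ) ≤ 1 - δ n * (1 - L) := by nlinarith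
    have hfac1 : 1 - δ n * (1 - L) ≤ 1 := by nlinarith
    have h1 : ‖a n - p‖ ≤ L * ‖c n - p‖ := by rw [ha]; exact hAp _
    have h2 : ‖b n - p‖ ≤ (1 - δ n * (1 - L)) * ‖a n - p‖ := by
      have heq : b n - p = (1 - δ n) • (a n - p) + δ n • (A (a n) - p) := by
        rw [hb]; module
      calc ‖b n - p‖ ≤ ‖(1 - δ n) • (a n - p)‖ + ‖δ n • (A (a n) - p)‖ := by
            rw [heq]; exact norm_add_le _ _
        _ = (1 - δ n) * ‖a n - p‖ + δ n * ‖A (a n) - p‖ := by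
            rw [norm_smul, norm_smul, Real.norm_eq_abs, Real.norm_eq_abs,
              abs_of_nonneg (by linarith), abs_of_nonneg hd0]
        _ ≤ (1 - δ n) * ‖a n - p‖ + δ n * (L * ‖a n - p‖) := by
            have := hAp (a n); nlinarith
        _ = (1 - δ n * (1 - L)) * ‖a n - p‖ := by ring
    have h3 : ‖c (n + 1) - p‖ ≤ L * ‖b n - p‖ := by rw [hc]; exact hAp _
    have hna : (0 : ℝ) ≤ ‖a n - p‖ := norm_nonneg _
    have hnc : (0 : ℝ) ≤ ‖c n - p‖ := norm_nonneg _
    calc ‖c (n + 1) - p‖ ≤ L * ‖b n - p‖ := h3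
      _ ≤ L * ((1 - δ n * (1 - L)) * ‖a n - p‖) := by
          exact mul_le_mul_of_nonneg_left h2 hL0
      _ ≤ L * ((1 - δ n * (1 - L)) * (L * ‖c n - p‖)) := by gcongr
      _ ≤ (1 - δ n * (1 - L)) * ‖c n - p‖ := by
          have hLL : (0:ℝ) ≤ 1 - L * L := by nlinarith
          nlinarith [mul_nonneg (mul_nonneg hfac0 hnc) hLL]
  intro n
  induction n with
  | zero =>
      simpa [mul_comm] using key 0
  | succ n ih =>
      have hfac0 : (0 : ℝ) ≤ 1 - δ (n + 1) * (1 - L) := by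
        obtain ⟨hd0, hd1⟩ := hδ (n + 1); nlinarith
      calc ‖c (n + 2) - p‖ ≤ (1 - δ (n + 1) * (1 - L)) * ‖c (n + 1) - p‖ := key (n + 1)
        _ ≤ (1 - δ (n + 1) * (1 - L)) *
            (‖c 0 - p‖ * ∏ k ∈ Finset.range (n + 1), (1 - δ k * (1 - L))) := by
            exact mul_le_mul_of_nonneg_left ih hfac0
        _ = ‖c 0 - p‖ * ∏ k ∈ Finset.range (n + 2), (1 - δ k * (1 - L)) := by
            conv_rhs => rw [Finset.prod_range_succ]
            ring
end

section
/- Let D = [g₁,h₁] × ⋯ × [gₘ,hₘ] ⊂ ℝᵐ with gᵢ < hᵢ, let j ∈ D, and let K, H : D × D × ℝ → ℝ and F : D × ℝ³ → ℝ be continuous functions satisfying: |F(t,u₁,v₁,w₁) − F(t,u₂,v₂,w₂)| ≤ α|u₁−u₂| + β|v₁−v₂| + γ|w₁−w₂| for nonnegative constants α, β, γ; |K(t,s,u) − K(t,s,v)| ≤ L_K|u−v| and |H(t,s,u) − H(t,s,v)| ≤ L_H|u−v| for nonnegative constants L_K, L_H; and α + (β L_K + γ L_H)∏ᵢ(hᵢ−gᵢ)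 < 1. Let {δₙ} ⊂ [0,1] satisfy ∑_{n} δₙ = ∞, define A on C(D) by (Ax)(t) = F(t, x(t), ∫_{[g,j]} K(t,s,x(s)) ds, ∫_{[g,h]} H(t,s,x(s)) ds), and let {cₙ} be generated from c₀ ∈ C(D) by aₙ = A cₙ, bₙ = (1−δₙ)aₙ + δₙ A aₙ, c_{n+1} = A bₙ. Then the integral equation x(t) = F(t, x(t), ∫_{[g,j]} K(t,s,x(s)) ds, ∫_{[g,h]} H(t,s,x(s)) ds) has a unique solution p ∈ C(D) and ‖cₙ − p‖ → 0 in the supremum norm as n → ∞. -/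
open MeasureTheory Filter

namespace Stmt15Aux

variable {m : ℕ}

noncomputable def proj (g h : Fin m → ℝ) (t : Fin m → ℝ) : Fin m → ℝ :=
  fun i => max (g i) (min (t i) (h i))

lemma proj_mem {g h : Fin m → ℝ} (hgh : g ≤ h) (t : Fin m → ℝ) :
    proj g h t ∈ Set.Icc g h := by
  constructor <;> intro i
  · exact le_max_left _ _
  · exact max_le (hgh i) (min_le_right _ _)

lemma proj_eq_self {g h t : Fin m → ℝ} (ht : t ∈ Set.Icc g h) : proj g h t = t := by
  funext i
  simp [proj, min_eq_left (ht.2 i), max_eq_right (ht.1 i)]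

lemma continuous_proj (g h : Fin m → ℝ) : Continuous (proj g h) := by
  refine continuous_pi fun i => ?_
  exact continuous_const.max ((continuous_apply i).min continuous_const)

end Stmt15Aux
/-- the integral equation (5.1) has a unique continuous solution `p` on the
box `D = [g₁,h₁] × ⋯ × [gₘ,hₘ]`, and the iteration (1.2) applied to the operator `A` of
(5.2) converges to `p` in the supremum norm, provided `∑ δₙ = ∞`. -/
theorem stmt_15 {m : ℕ} (g h j : Fin m → ℝ)
    (hgh : ∀ i, g i < h i) (hj : j ∈ Set.Icc g h)
    (K H : (Fin m → ℝ) → (Fin m → ℝ) → ℝ → ℝ)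
    (F : (Fin m → ℝ) → ℝ → ℝ → ℝ → ℝ)
    (hKcont : ContinuousOn (fun p : (Fin m → ℝ) × (Fin m → ℝ) × ℝ => K p.1 p.2.1 p.2.2)
      (Set.Icc g h ×ˢ Set.Icc g h ×ˢ Set.univ))
    (hHcont : ContinuousOn (fun p : (Fin m → ℝ) × (Fin m → ℝ) × ℝ => H p.1 p.2.1 p.2.2)
      (Set.Icc g h ×ˢ Set.Icc g h ×ˢ Set.univ))
    (hFcont : ContinuousOn (fun p : (Fin m → ℝ) × ℝ × ℝ × ℝ => F p.1 p.2.1 p.2.2.1 p.2.2.2)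
      (Set.Icc g h ×ˢ Set.univ))
    (α β γ : ℝ) (hα : 0 ≤ α) (hβ : 0 ≤ β) (hγ : 0 ≤ γ)
    (hF : ∀ t ∈ Set.Icc g h, ∀ u₁ v₁ w₁ u₂ v₂ w₂ : ℝ,
      |F t u₁ v₁ w₁ - F t u₂ v₂ w₂| ≤ α * |u₁ - u₂| + β * |v₁ - v₂| + γ * |w₁ - w₂|)
    (L_K L_H : ℝ) (hLK : 0 ≤ L_K) (hLH : 0 ≤ L_H)
    (hK : ∀ t ∈ Set.Icc g h, ∀ s ∈ Set.Icc g h, ∀ u v : ℝ,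
      |K t s u - K t s v| ≤ L_K * |u - v|)
    (hH : ∀ t ∈ Set.Icc g h, ∀ s ∈ Set.Icc g h, ∀ u v : ℝ,
      |H t s u - H t s v| ≤ L_H * |u - v|)
    (hcontr : α + (β * L_K + γ * L_H) * ∏ i, (h i - g i) < 1)
    (δ : ℕ → ℝ) (hδ : ∀ n, δ n ∈ Set.Icc (0 : ℝ) 1)
    (hsum : Tendsto (fun n : ℕ => ∑ k ∈ Finset.range (n + 1), δ k) atTop atTop)
    (A : ((Fin m → ℝ) → ℝ) → ((Fin m → ℝ) → ℝ))
    (hA : ∀ (x : (Fin m → ℝ) → ℝ) (t : Fin m → ℝ),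
      A x t = F t (x t) (∫ s in Set.Icc g j, K t s (x s)) (∫ s in Set.Icc g h, H t s (x s)))
    (a b c : ℕ → ((Fin m → ℝ) → ℝ)) (hc0 : ContinuousOn (c 0) (Set.Icc g h))
    (ha : ∀ n, a n = A (c n))
    (hb : ∀ n, b n = fun t => (1 - δ n) * a n t + δ n * A (a n) t)
    (hc : ∀ n, c (n + 1) = A (b n)) :
    ∃ p : (Fin m → ℝ) → ℝ, ContinuousOn p (Set.Icc g h) ∧
      (∀ t ∈ Set.Icc g h,
        p t = F t (p t) (∫ s in Set.Icc g j, K t s (p s)) (∫ s in Set.Icc g h, H t s (p s))) ∧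
      (∀ x : (Fin m → ℝ) → ℝ, ContinuousOn x (Set.Icc g h) →
        (∀ t ∈ Set.Icc g h,
          x t = F t (x t) (∫ s in Set.Icc g j, K t s (x s)) (∫ s in Set.Icc g h, H t s (x s))) →
        Set.EqOn x p (Set.Icc g h)) ∧
      Tendsto (fun n => ⨆ t : (Set.Icc g h : Set (Fin m → ℝ)), |c n t - p t|) atTop
        (nhds 0) := by

  classical
  have hgh' : g ≤ h := fun i => (hgh i).le
  set D : Set (Fin m → ℝ) := Set.Icc g h with hDdef
  have hDc : IsCompact D := isCompact_Icc
  haveI : CompactSpace ↥D := isCompact_iff_compactSpace.mp hDc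
  haveI : Nonempty ↥D := ⟨⟨g, le_refl g, hgh'⟩⟩
  have hjh : Set.Icc g j ⊆ D := Set.Icc_subset_Icc le_rfl hj.2
  have hhh : Set.Icc g h ⊆ D := le_refl _
  set V : ℝ := ∏ i, (h i - g i) with hVdef
  have hV0 : 0 ≤ V := Finset.prod_nonneg fun i _ => sub_nonneg.mpr (hgh' i)
  have hVD : (volume D).toReal = V := Real.volume_Icc_pi_toReal hgh'
  have hDfin : volume D < ⊤ := hDc.measure_lt_top
  have hVJ : (volume (Set.Icc g j)).toReal ≤ V := by
    rw [← hVD]; exact ENNReal.toReal_mono hDfin.ne (measure_mono hjh)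
  have hVJ0 : 0 ≤ (volume (Set.Icc g j)).toReal := ENNReal.toReal_nonneg
  set q : ℝ := α + (β * L_K + γ * L_H) * V with hqdef
  have hq0 : 0 ≤ q :=
    add_nonneg hα (mul_nonneg (add_nonneg (mul_nonneg hβ hLK) (mul_nonneg hγ hLH)) hV0)
  have hq1 : q < 1 := hcontr
  -- the clamping retraction onto D
  set emb : (Fin m → ℝ) → ↥D := fun t => ⟨Stmt15Aux.proj g h t, Stmt15Aux.proj_mem hgh' t⟩
    with hembdef
  have hemb_cont : Continuous emb := (Stmt15Aux.continuous_proj g h).subtype_mk _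
  have hemb_eq : ∀ (t : Fin m → ℝ) (ht : t ∈ D), emb t = ⟨t, ht⟩ := fun t ht =>
    Subtype.ext (Stmt15Aux.proj_eq_self ht)
  -- continuity of parametric integrals
  have int_cont : ∀ (Kf : (Fin m → ℝ) → (Fin m → ℝ) → ℝ → ℝ),
      ContinuousOn (fun p : (Fin m → ℝ) × (Fin m → ℝ) × ℝ => Kf p.1 p.2.1 p.2.2)
        (D ×ˢ D ×ˢ Set.univ) →
      ∀ (j' : Fin m → ℝ), Set.Icc g j' ⊆ D →
      ∀ (y : (Fin m → ℝ) → ℝ), ContinuousOn y D →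
      ContinuousOn (fun t => ∫ s in Set.Icc g j', Kf t s (y s)) D := by
    intro Kf hKf j' hj' y hy
    have hΨ : ContinuousOn (fun z : (Fin m → ℝ) × (Fin m → ℝ) => Kf z.1 z.2 (y z.2))
        (D ×ˢ D) := by
      have hΨ' : ContinuousOn ((fun p : (Fin m → ℝ) × (Fin m → ℝ) × ℝ => Kf p.1 p.2.1 p.2.2) ∘
          fun z : (Fin m → ℝ) × (Fin m → ℝ) => (z.1, z.2, y z.2)) (D ×ˢ D) :=
        hKf.comp (continuousOn_fst.prodMk (continuousOn_snd.prodMk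
          (hy.comp continuousOn_snd fun z hz => hz.2))) fun z hz => ⟨hz.1, hz.2, trivial⟩
      exact hΨ'
    obtain ⟨C, hC⟩ := (hDc.prod hDc).exists_bound_of_continuousOn hΨ
    refine continuousOn_of_dominated (bound := fun _ => C) ?_ ?_ ?_ ?_
    · intro t ht
      refine ContinuousOn.aestronglyMeasurable ?_ measurableSet_Icc
      exact hΨ.comp (continuousOn_const.prodMk continuousOn_id) fun s hs => ⟨ht, hj' hs⟩
    · intro t ht
      filter_upwards [ae_restrict_mem measurableSet_Icc] with s hs
      exact hC (t, s) ⟨ht, hj' hs⟩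
    · have : IntegrableOn (fun _ : Fin m → ℝ => C) (Set.Icc g j') volume :=
        integrableOn_const isCompact_Icc.measure_lt_top.ne
      exact this
    · filter_upwards [ae_restrict_mem measurableSet_Icc] with s hs
      exact hΨ.comp (continuousOn_id.prodMk continuousOn_const) fun t ht => ⟨ht, hj' hs⟩
  -- A maps continuous functions to continuous functions
  have A_cont : ∀ y, ContinuousOn y D → ContinuousOn (A y) D := by
    intro y hy
    have h1 := int_cont K hKcont j hjh y hy
    have h2 := int_cont H hHcont h hhh y hy
    have h3 : ContinuousOn ((fun p : (Fin m → ℝ) × ℝ × ℝ × ℝ => F p.1 p.2.1 p.2.2.1 p.2.2.2) ∘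
        fun t => (t, y t, (∫ s in Set.Icc g j, K t s (y s)), ∫ s in Set.Icc g h, H t s (y s))) D :=
      hFcont.comp (continuousOn_id.prodMk (hy.prodMk (h1.prodMk h2))) fun t ht => ⟨ht, trivial⟩
    exact h3.congr fun t ht => hA y t
  -- the operator on C(D, ℝ)
  have Tc : ∀ x : C(↥D, ℝ), ContinuousOn (A fun u => x (emb u)) D := fun x =>
    A_cont _ (x.continuous.comp hemb_cont).continuousOn
  let T : C(↥D, ℝ) → C(↥D, ℝ) := fun x => ⟨_, (Tc x).restrict⟩
  have hTapp : ∀ (x : C(↥D, ℝ)) (y : (Fin m → ℝ) → ℝ),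
      (∀ (s : Fin m → ℝ) (hs : s ∈ D), x ⟨s, hs⟩ = y s) → ∀ t : ↥D, T x t = A y ↑t := by
    intro x y hxy t
    show A (fun u => x (emb u)) ↑t = A y ↑t
    rw [hA, hA]
    have e0 : x (emb ↑t) = y ↑t := by rw [hemb_eq ↑t t.2]; exact hxy _ _
    have e1 : (∫ s in Set.Icc g j, K ↑t s (x (emb s))) = ∫ s in Set.Icc g j, K ↑t s (y s) := by
      refine setIntegral_congr_fun measurableSet_Icc fun s hs => ?_
      rw [hemb_eq s (hjh hs), hxy s (hjh hs)]
    have e2 : (∫ s in Set.Icc g h, H ↑t s (x (emb s))) = ∫ s in Set.Icc g h, H ↑t s (y s) := by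
      refine setIntegral_congr_fun measurableSet_Icc fun s hs => ?_
      rw [hemb_eq s (hhh hs), hxy s (hhh hs)]
    rw [e0, e1, e2]
  -- the basic integral difference estimate
  have int_est : ∀ (Kf : (Fin m → ℝ) → (Fin m → ℝ) → ℝ → ℝ) (L : ℝ), 0 ≤ L →
      ContinuousOn (fun p : (Fin m → ℝ) × (Fin m → ℝ) × ℝ => Kf p.1 p.2.1 p.2.2)
        (D ×ˢ D ×ˢ Set.univ) →
      (∀ t ∈ D, ∀ s ∈ D, ∀ u v : ℝ, |Kf t s u - Kf t s v| ≤ L * |u - v|) →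
      ∀ (j' : Fin m → ℝ), Set.Icc g j' ⊆ D →
      ∀ (x y : C(↥D, ℝ)) (t : Fin m → ℝ), t ∈ D →
      |(∫ s in Set.Icc g j', Kf t s (x (emb s))) - ∫ s in Set.Icc g j', Kf t s (y (emb s))| ≤
        L * dist x y * (volume (Set.Icc g j')).toReal := by
    intro Kf L hL0 hKfc hKfL j' hj' x y t ht
    have hint : ∀ z : C(↥D, ℝ), IntegrableOn (fun s => Kf t s (z (emb s))) (Set.Icc g j') := by
      intro z
      refine ContinuousOn.integrableOn_compact isCompact_Icc ?_
      exact hKfc.comp (continuousOn_const.prodMk (continuousOn_id.prodMk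
        ((z.continuous.comp hemb_cont).continuousOn))) fun s hs => ⟨ht, hj' hs, trivial⟩
    rw [← integral_sub (hint x) (hint y), ← Real.norm_eq_abs]
    refine norm_setIntegral_le_of_norm_le_const isCompact_Icc.measure_lt_top
      fun s hs => ?_
    rw [Real.norm_eq_abs]
    calc |Kf t s (x (emb s)) - Kf t s (y (emb s))| ≤ L * |x (emb s) - y (emb s)| :=
          hKfL t ht s (hj' hs) _ _
      _ ≤ L * dist x y := by
          refine mul_le_mul_of_nonneg_left ?_ hL0
          rw [← Real.dist_eq]
          exact ContinuousMap.dist_apply_le_dist _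
  -- T is a q-Lipschitz map
  have hTdist : ∀ x y : C(↥D, ℝ), dist (T x) (T y) ≤ q * dist x y := by
    intro x y
    rw [ContinuousMap.dist_le (mul_nonneg hq0 dist_nonneg)]
    intro t
    have ht : (t : Fin m → ℝ) ∈ D := t.2
    show dist (A (fun u => x (emb u)) ↑t) (A (fun u => y (emb u)) ↑t) ≤ q * dist x y
    rw [Real.dist_eq, hA, hA]
    have h1 := hF ↑t ht (x (emb ↑t)) (∫ s in Set.Icc g j, K ↑t s (x (emb s)))
      (∫ s in Set.Icc g h, H ↑t s (x (emb s))) (y (emb ↑t))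
      (∫ s in Set.Icc g j, K ↑t s (y (emb s))) (∫ s in Set.Icc g h, H ↑t s (y (emb s)))
    have e1 := int_est K L_K hLK hKcont hK j hjh x y ↑t ht
    have e2 := int_est H L_H hLH hHcont hH h hhh x y ↑t ht
    have e3 : |x (emb ↑t) - y (emb ↑t)| ≤ dist x y := by
      rw [← Real.dist_eq]; exact ContinuousMap.dist_apply_le_dist _
    have e4 : (volume (Set.Icc g h)).toReal = V := hVD
    have hd0 : (0:ℝ) ≤ dist x y := dist_nonneg
    have habs1 : (0:ℝ) ≤ |(∫ s in Set.Icc g j, K ↑t s (x (emb s))) -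
        ∫ s in Set.Icc g j, K ↑t s (y (emb s))| := abs_nonneg _
    rw [e4] at e2
    nlinarith [mul_le_mul_of_nonneg_left e1 hβ, mul_le_mul_of_nonneg_left e2 hγ,
      mul_le_mul_of_nonneg_left e3 hα,
      mul_nonneg (mul_nonneg hβ hLK) (mul_nonneg hd0 (sub_nonneg.mpr hVJ))]
  have hcontracting : ContractingWith ⟨q, hq0⟩ T := by
    constructor
    · exact_mod_cast hq1
    · exact LipschitzWith.of_dist_le_mul fun x y => hTdist x y
  set pX : C(↥D, ℝ) := ContractingWith.fixedPoint T hcontracting with hpXdef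
  have hfix : T pX = pX := hcontracting.fixedPoint_isFixedPt
  set p : (Fin m → ℝ) → ℝ := fun t => pX (emb t) with hpdef
  have hp_cont : Continuous p := pX.continuous.comp hemb_cont
  have hp_eq : ∀ (t : Fin m → ℝ) (ht : t ∈ D), p t = pX ⟨t, ht⟩ := fun t ht => by
    rw [hpdef]; simp only; rw [hemb_eq t ht]
  have hfix_pt : ∀ t ∈ D, p t = F t (p t) (∫ s in Set.Icc g j, K t s (p s))
      (∫ s in Set.Icc g h, H t s (p s)) := by
    intro t ht
    have h1 : p t = T pX ⟨t, ht⟩ := by rw [hfix]; exact hp_eq t ht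
    have h2 : T pX ⟨t, ht⟩ = A p t := hTapp pX p (fun s hs => (hp_eq s hs).symm) ⟨t, ht⟩
    exact (h1.trans h2).trans (hA p t)
  refine ⟨p, hp_cont.continuousOn, hfix_pt, ?_, ?_⟩
  · -- uniqueness
    intro x hx hsol t ht
    set xR : C(↥D, ℝ) := ⟨D.restrict x, hx.restrict⟩ with hxRdef
    have hxfix : Function.IsFixedPt T xR := by
      refine ContinuousMap.ext fun s => ?_
      have := hTapp xR x (fun u hu => rfl) s
      rw [this, hA, ← hsol ↑s s.2]
      rfl
    have : xR = pX := hcontracting.fixedPoint_unique hxfix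
    have hx1 : x t = xR ⟨t, ht⟩ := rfl
    rw [hx1, this, ← hp_eq t ht]
  · -- convergence
    have hccont : ∀ n, ContinuousOn (c n) D := by
      intro n
      induction n with
      | zero => exact hc0
      | succ n ih =>
        rw [hc n]
        refine A_cont _ ?_
        rw [hb n]
        have hacn : ContinuousOn (a n) D := by rw [ha n]; exact A_cont _ ih
        exact (continuousOn_const.mul hacn).add (continuousOn_const.mul (A_cont _ hacn))
    have hacont : ∀ n, ContinuousOn (a n) D := fun n => by
      rw [ha n]; exact A_cont _ (hccont n)
    have hbcont : ∀ n, ContinuousOn (b n) D := by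
      intro n
      rw [hb n]
      exact (continuousOn_const.mul (hacont n)).add (continuousOn_const.mul (A_cont _ (hacont n)))
    set cR : ∀ n, C(↥D, ℝ) := fun n => ⟨D.restrict (c n), (hccont n).restrict⟩ with hcRdef
    set aR : ∀ n, C(↥D, ℝ) := fun n => ⟨D.restrict (a n), (hacont n).restrict⟩ with haRdef
    set bR : ∀ n, C(↥D, ℝ) := fun n => ⟨D.restrict (b n), (hbcont n).restrict⟩ with hbRdef
    set dseq : ℕ → ℝ := fun n => dist (cR n) pX with hdseqdef
    have hd0 : ∀ n, 0 ≤ dseq n := fun n => dist_nonneg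
    have haT : ∀ n, aR n = T (cR n) := by
      intro n
      refine ContinuousMap.ext fun t => ?_
      show a n ↑t = T (cR n) t
      rw [ha n, hTapp (cR n) (c n) (fun s hs => rfl) t]
    have hcT : ∀ n, cR (n + 1) = T (bR n) := by
      intro n
      refine ContinuousMap.ext fun t => ?_
      show c (n + 1) ↑t = T (bR n) t
      rw [hc n, hTapp (bR n) (b n) (fun s hs => rfl) t]
    have hkey : ∀ n, dseq (n + 1) ≤ (1 - δ n * (1 - q)) * dseq n := by
      intro n
      have hδn := hδ n
      have hbdist : dist (bR n) pX ≤ (1 - δ n) * dist (aR n) pX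
          + δ n * dist (T (aR n)) pX := by
        have hrhs : (0:ℝ) ≤ (1 - δ n) * dist (aR n) pX + δ n * dist (T (aR n)) pX :=
          add_nonneg (mul_nonneg (by linarith [hδn.2]) dist_nonneg)
            (mul_nonneg hδn.1 dist_nonneg)
        rw [ContinuousMap.dist_le hrhs]
        intro t
        have hbt : bR n t = (1 - δ n) * a n ↑t + δ n * A (a n) ↑t := by
          show b n ↑t = _
          rw [hb n]
        have hTat : T (aR n) t = A (a n) ↑t := hTapp (aR n) (a n) (fun s hs => rfl) t
        have e1 : dist (a n ↑t) (pX t) ≤ dist (aR n) pX :=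
          ContinuousMap.dist_apply_le_dist (f := aR n) (g := pX) t
        have e2 : dist (A (a n) ↑t) (pX t) ≤ dist (T (aR n)) pX := by
          rw [← hTat]; exact ContinuousMap.dist_apply_le_dist (f := T (aR n)) (g := pX) t
        rw [Real.dist_eq] at e1 e2 ⊢
        rw [hbt]
        have : (1 - δ n) * a n ↑t + δ n * A (a n) ↑t - pX t
            = (1 - δ n) * (a n ↑t - pX t) + δ n * (A (a n) ↑t - pX t) := by ring
        rw [this]
        calc |(1 - δ n) * (a n ↑t - pX t) + δ n * (A (a n) ↑t - pX t)|
            ≤ |(1 - δ n) * (a n ↑t - pX t)| + |δ n * (A (a n) ↑t - pX t)| := abs_add_le _ _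
          _ = (1 - δ n) * |a n ↑t - pX t| + δ n * |A (a n) ↑t - pX t| := by
              rw [abs_mul, abs_mul, abs_of_nonneg (by linarith [hδn.2] : (0:ℝ) ≤ 1 - δ n),
                abs_of_nonneg hδn.1]
          _ ≤ (1 - δ n) * dist (aR n) pX + δ n * dist (T (aR n)) pX := by
              refine add_le_add ?_ ?_
              · exact mul_le_mul_of_nonneg_left e1 (by linarith [hδn.2])
              · exact mul_le_mul_of_nonneg_left e2 hδn.1
      have hadist : dist (aR n) pX ≤ q * dseq n := by
        rw [haT n]
        calc dist (T (cR n)) pX = dist (T (cR n)) (T pX) := by rw [hfix]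
          _ ≤ q * dist (cR n) pX := hTdist _ _
      have hTadist : dist (T (aR n)) pX ≤ q * (q * dseq n) := by
        calc dist (T (aR n)) pX = dist (T (aR n)) (T pX) := by rw [hfix]
          _ ≤ q * dist (aR n) pX := hTdist _ _
          _ ≤ q * (q * dseq n) := mul_le_mul_of_nonneg_left hadist hq0
      have hstep : dseq (n + 1) ≤ q * dist (bR n) pX := by
        show dist (cR (n + 1)) pX ≤ _
        rw [hcT n]
        calc dist (T (bR n)) pX = dist (T (bR n)) (T pX) := by rw [hfix]
          _ ≤ q * dist (bR n) pX := hTdist _ _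
      have hdn := hd0 n
      have h1δ : (0:ℝ) ≤ 1 - δ n * (1 - q) := by nlinarith [hδn.1, hδn.2]
      have hchain : dseq (n + 1) ≤ q * ((1 - δ n) * (q * dseq n) + δ n * (q * (q * dseq n))) := by
        calc dseq (n + 1) ≤ q * dist (bR n) pX := hstep
          _ ≤ q * ((1 - δ n) * dist (aR n) pX + δ n * dist (T (aR n)) pX) :=
              mul_le_mul_of_nonneg_left hbdist hq0
          _ ≤ q * ((1 - δ n) * (q * dseq n) + δ n * (q * (q * dseq n))) := by
              refine mul_le_mul_of_nonneg_left (add_le_add ?_ ?_) hq0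
              · exact mul_le_mul_of_nonneg_left hadist (by linarith [hδn.2])
              · exact mul_le_mul_of_nonneg_left hTadist hδn.1
      have hq2 : q * q ≤ 1 := mul_le_one₀ hq1.le hq0 hq1.le
      have hfinal : q * ((1 - δ n) * (q * dseq n) + δ n * (q * (q * dseq n)))
          ≤ (1 - δ n * (1 - q)) * dseq n := by
        have expand : (1 - δ n * (1 - q)) * dseq n
            - q * ((1 - δ n) * (q * dseq n) + δ n * (q * (q * dseq n)))
            = (1 - q * q) * ((1 - δ n * (1 - q)) * dseq n) := by ring
        have h5 : (0:ℝ) ≤ (1 - q * q) * ((1 - δ n * (1 - q)) * dseq n) :=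
          mul_nonneg (sub_nonneg.mpr hq2) (mul_nonneg h1δ hdn)
        linarith [expand, h5]
      exact hchain.trans hfinal
    set ε : ℝ := 1 - q with hεdef
    have hε0 : 0 < ε := by rw [hεdef]; linarith
    have hexp : ∀ n, dseq n ≤ dseq 0 * Real.exp (-(ε * ∑ k ∈ Finset.range n, δ k)) := by
      intro n
      induction n with
      | zero => simp
      | succ n ih =>
        have h1 : 1 - δ n * ε ≤ Real.exp (-(ε * δ n)) := by
          have := Real.add_one_le_exp (-(ε * δ n)); linarith
        calc dseq (n + 1) ≤ (1 - δ n * ε) * dseq n := hkey n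
          _ ≤ Real.exp (-(ε * δ n)) * dseq n := mul_le_mul_of_nonneg_right h1 (hd0 n)
          _ ≤ Real.exp (-(ε * δ n)) * (dseq 0 * Real.exp (-(ε * ∑ k ∈ Finset.range n, δ k))) :=
              mul_le_mul_of_nonneg_left ih (Real.exp_nonneg _)
          _ = dseq 0 * Real.exp (-(ε * ∑ k ∈ Finset.range (n + 1), δ k)) := by
              rw [Finset.sum_range_succ, mul_add, neg_add, Real.exp_add]; ring
    have hS : Tendsto (fun n => ∑ k ∈ Finset.range n, δ k) atTop atTop :=
      (tendsto_add_atTop_iff_nat 1).mp hsum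
    have hexp0 : Tendsto (fun n => dseq 0 * Real.exp (-(ε * ∑ k ∈ Finset.range n, δ k)))
        atTop (nhds 0) := by
      rw [show (0:ℝ) = dseq 0 * 0 by ring]
      refine Tendsto.const_mul _ ?_
      refine Real.tendsto_exp_atBot.comp ?_
      exact tendsto_neg_atTop_atBot.comp (Tendsto.const_mul_atTop hε0 hS)
    have hdist0 : Tendsto dseq atTop (nhds 0) := squeeze_zero hd0 hexp hexp0
    refine squeeze_zero (fun n => Real.iSup_nonneg fun t => abs_nonneg _) (fun n => ?_) hdist0
    refine ciSup_le fun t => ?_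
    have h1 : p ↑t = pX t := by
      rw [hp_eq ↑t t.2]
    rw [h1]
    have : |c n ↑t - pX t| = dist (cR n t) (pX t) := by rw [Real.dist_eq]; rfl
    rw [this]
    exact ContinuousMap.dist_apply_le_dist t
end
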